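/- arXiv:2403.15302 — 13 statements merged into one kernel-verified Lean document; each statement's English description precedes it below -/
import Mathlib

section
/- Fix t ∈ (0, τ]. For every π ∈ (0, 1), the map π ↦ Var(t, π) is differentiable at π with derivative equal to −n·S(t)²·∫₀^t f(r)·ψ(r)/Y(r, π)² dr. -/
open MeasureTheory intervalIntegral Set

/-- Fix t ∈ (0, τ]. For every π ∈ (0, 1), the map π ↦ Var(t, π) is
differentiable at π with derivative equal to −n·S(t)²·∫₀ᵗ f(r)·ψ(r)/Y(r, π)² dr. -/
theorem km_variance_hasDerivAt
    (τ θ n c : ℝ) (hτ : 0 < τ) (hθ : 0 < θ) (hn : 0 < n) (hc : 0 < c)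
    (f S qP qI : ℝ → ℝ)
    (hf_cont : ContinuousOn f (Set.Icc 0 τ)) (hS_cont : ContinuousOn S (Set.Icc 0 τ))
    (hqP_cont : ContinuousOn qP (Set.Icc 0 τ)) (hqI_cont : ContinuousOn qI (Set.Icc 0 τ))
    (hf_pos : ∀ r ∈ Set.Icc (0:ℝ) τ, 0 < f r) (hS_pos : ∀ r ∈ Set.Icc (0:ℝ) τ, 0 < S r)
    (hqP_pos : ∀ r ∈ Set.Icc (0:ℝ) τ, 0 < qP r) (hqI_pos : ∀ r ∈ Set.Icc (0:ℝ) τ, 0 < qI r)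
    (ψ : ℝ → ℝ) (hψ : ∀ r, ψ r = qI r - qP r)
    (Y : ℝ → ℝ → ℝ) (hY : ∀ r p, Y r p = n * S r * ((1 - p) * qP r + p * qI r))
    (hY_pos : ∀ p ∈ Set.Icc (0:ℝ) 1, ∀ r ∈ Set.Icc (0:ℝ) τ, 0 < Y r p)
    (Var : ℝ → ℝ → ℝ)
    (hVar : ∀ t p, Var t p = S t ^ 2 * ∫ r in (0:ℝ)..t, f r / (Y r p * S r))
    (t : ℝ) (ht : t ∈ Set.Ioc 0 τ)
    (p : ℝ) (hp : p ∈ Set.Ioo (0:ℝ) 1) :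
    HasDerivAt (fun q => Var t q)
      (-(n * S t ^ 2 * ∫ r in (0:ℝ)..t, f r * ψ r / (Y r p) ^ 2)) p := by
  obtain ⟨hp0, hp1⟩ := hp
  set ε : ℝ := min p (1 - p) with hε
  have hε1 : ε ≤ p := min_le_left _ _
  have hε2 : ε ≤ 1 - p := min_le_right _ _
  have hεpos : 0 < ε := lt_min hp0 (by linarith)
  have hball : Metric.ball p ε ⊆ Set.Icc (0:ℝ) 1 := by
    intro x hx
    rw [Metric.mem_ball, Real.dist_eq, abs_lt] at hx
    constructor <;> linarith [hx.1, hx.2]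
  have hIccsub : Set.uIcc (0:ℝ) t ⊆ Set.Icc 0 τ := by
    rw [Set.uIcc_of_le ht.1.le]
    exact Set.Icc_subset_Icc le_rfl ht.2
  have hIocsub : Set.uIoc (0:ℝ) t ⊆ Set.Icc 0 τ := by
    rw [Set.uIoc_of_le ht.1.le]
    exact fun r hr => ⟨hr.1.le, hr.2.trans ht.2⟩
  -- continuity facts
  have hψc : ContinuousOn ψ (Set.Icc 0 τ) := by
    have : ψ = fun r => qI r - qP r := funext hψ
    rw [this]; exact hqI_cont.sub hqP_cont
  have hYc : ∀ x, ContinuousOn (fun r => Y r x) (Set.Icc 0 τ) := by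
    intro x
    simp only [hY]
    exact (continuousOn_const.mul hS_cont).mul
      ((continuousOn_const.mul hqP_cont).add (continuousOn_const.mul hqI_cont))
  -- lower bound on Y
  set m : ℝ → ℝ := fun r => n * S r * min (qP r) (qI r) with hm
  have hm_pos : ∀ r ∈ Set.Icc (0:ℝ) τ, 0 < m r := fun r hr =>
    mul_pos (mul_pos hn (hS_pos r hr)) (lt_min (hqP_pos r hr) (hqI_pos r hr))
  have hm_le : ∀ x ∈ Set.Icc (0:ℝ) 1, ∀ r ∈ Set.Icc (0:ℝ) τ, m r ≤ Y r x := by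
    intro x hx r hr
    simp only [hY, hm]
    have h1 : min (qP r) (qI r) ≤ qP r := min_le_left _ _
    have h2 : min (qP r) (qI r) ≤ qI r := min_le_right _ _
    have hS := hS_pos r hr
    have h3 : 0 ≤ (1 - x) * (qP r - min (qP r) (qI r)) :=
      mul_nonneg (by linarith [hx.2]) (by linarith)
    have h4 : 0 ≤ x * (qI r - min (qP r) (qI r)) :=
      mul_nonneg hx.1 (by linarith)
    nlinarith [mul_pos hn hS]
  -- the parametric family
  set F : ℝ → ℝ → ℝ := fun x r => f r / (Y r x * S r) with hF
  set F' : ℝ → ℝ → ℝ := fun x r => -(n * f r * ψ r / (Y r x) ^ 2) with hF'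
  have hden_ne : ∀ x ∈ Set.Icc (0:ℝ) 1, ∀ r ∈ Set.Icc (0:ℝ) τ, Y r x * S r ≠ 0 := by
    intro x hx r hr
    exact (mul_pos (hY_pos x hx r hr) (hS_pos r hr)).ne'
  -- derivative at each point
  have h_deriv : ∀ r ∈ Set.Icc (0:ℝ) τ, ∀ x ∈ Metric.ball p ε,
      HasDerivAt (fun y => F y r) (F' x r) x := by
    intro r hr x hx
    have hxI := hball hx
    have hg : HasDerivAt (fun y : ℝ => Y r y * S r) (n * S r * ψ r * S r) x := by
      have heq : (fun y : ℝ => Y r y * S r)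
          = fun y => n * S r * qP r * S r + y * (n * S r * ψ r * S r) := by
        funext y; rw [hY, hψ]; ring
      rw [heq]
      simpa using (hasDerivAt_mul_const (n * S r * ψ r * S r)).const_add
        (n * S r * qP r * S r)
    have hne := hden_ne x hxI r hr
    have := (hasDerivAt_const x (f r)).div hg hne
    refine this.congr_deriv ?_
    symm
    show -(n * f r * ψ r / (Y r x) ^ 2) = _
    have hYne : Y r x ≠ 0 := (hY_pos x hxI r hr).ne'
    have hSne : S r ≠ 0 := (hS_pos r hr).ne'
    rw [zero_mul, zero_sub, mul_pow, neg_div, neg_inj,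
      div_eq_div_iff (pow_ne_zero 2 hYne)
        (mul_ne_zero (pow_ne_zero 2 hYne) (pow_ne_zero 2 hSne))]
    ring
  -- bound
  set bound : ℝ → ℝ := fun r => n * f r * |ψ r| / (m r) ^ 2 with hbnd
  have h_bound : ∀ r ∈ Set.uIoc (0:ℝ) t, ∀ x ∈ Metric.ball p ε, ‖F' x r‖ ≤ bound r := by
    intro r hr x hx
    have hrI := hIocsub hr
    have hxI := hball hx
    have hmp := hm_pos r hrI
    have hle := hm_le x hxI r hrI
    have hfp := hf_pos r hrI
    rw [hF', Real.norm_eq_abs, abs_neg, abs_div, abs_mul, abs_mul,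
      abs_of_pos hn, abs_of_pos hfp, abs_of_nonneg (sq_nonneg (Y r x))]
    exact div_le_div_of_nonneg_left (by positivity) (pow_pos hmp 2)
      (pow_le_pow_left₀ hmp.le hle 2)
  have hbound_cont : ContinuousOn bound (Set.Icc 0 τ) := by
    apply ContinuousOn.div
    · exact (continuousOn_const.mul hf_cont).mul hψc.abs
    · exact ((continuousOn_const.mul hS_cont).mul (hqP_cont.inf hqI_cont)).pow 2
    · intro r hr; exact pow_ne_zero 2 (hm_pos r hr).ne'
  have hbound_int : IntervalIntegrable bound volume 0 t :=
    (hbound_cont.mono hIccsub).intervalIntegrable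
  -- measurability
  have hF_meas : ∀ᶠ x in nhds p, AEStronglyMeasurable (F x) (volume.restrict (Set.uIoc 0 t)) := by
    filter_upwards [Metric.ball_mem_nhds p hεpos] with x hx
    have hxI := hball hx
    have : ContinuousOn (F x) (Set.Icc 0 τ) :=
      hf_cont.div ((hYc x).mul hS_cont) (fun r hr => hden_ne x hxI r hr)
    exact (this.mono hIocsub).aestronglyMeasurable measurableSet_uIoc
  have hF_int : IntervalIntegrable (F p) volume 0 t := by
    have hpI : p ∈ Set.Icc (0:ℝ) 1 := ⟨hp0.le, hp1.le⟩
    have : ContinuousOn (F p) (Set.Icc 0 τ) :=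
      hf_cont.div ((hYc p).mul hS_cont) (fun r hr => hden_ne p hpI r hr)
    exact (this.mono hIccsub).intervalIntegrable
  have hF'_meas : AEStronglyMeasurable (F' p) (volume.restrict (Set.uIoc 0 t)) := by
    have hpI : p ∈ Set.Icc (0:ℝ) 1 := ⟨hp0.le, hp1.le⟩
    have : ContinuousOn (F' p) (Set.Icc 0 τ) := by
      apply ContinuousOn.neg
      apply ContinuousOn.div
      · exact (continuousOn_const.mul hf_cont).mul hψc
      · exact (hYc p).pow 2
      · intro r hr; exact pow_ne_zero 2 (hY_pos p hpI r hr).ne'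
    exact (this.mono hIocsub).aestronglyMeasurable measurableSet_uIoc
  have key := (intervalIntegral.hasDerivAt_integral_of_dominated_loc_of_deriv_le (Metric.ball_mem_nhds p hεpos)
    hF_meas hF_int hF'_meas
    (MeasureTheory.ae_of_all _ (fun r hr x hx => h_bound r hr x hx))
    hbound_int
    (MeasureTheory.ae_of_all _ (fun r hr x hx => h_deriv r (hIocsub hr) x hx))).2
  have key2 := key.const_mul (S t ^ 2)
  have hfun : (fun q => Var t q) = fun x => S t ^ 2 * ∫ r in (0:ℝ)..t, F x r := by
    funext q; rw [hVar]
  rw [hfun]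
  refine key2.congr_deriv ?_
  have : (∫ r in (0:ℝ)..t, F' p r)
      = (-n) * ∫ r in (0:ℝ)..t, f r * ψ r / (Y r p) ^ 2 := by
    rw [← intervalIntegral.integral_const_mul]
    congr 1; funext r; rw [hF']; ring
  rw [this]; ring
end

section
/- Fix t ∈ (0, τ]. For every π ∈ (0, 1), the map π ↦ Var(t, π) is twice differentiable at π with second derivative equal to 2·n²·S(t)²·∫₀^t f(r)·S(r)·ψ(r)²/Y(r, π)³ dr; in particular this second derivative is nonnegative. -/
open MeasureTheory intervalIntegral Set Metric

private lemma L1' (A B C q : ℝ) (h : A + q * B ≠ 0) :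
    HasDerivAt (fun x => C / (A + x * B)) (-(C * B) / (A + q * B) ^ 2) q := by
  have hl : HasDerivAt (fun x : ℝ => A + x * B) B q := by
    simpa using ((hasDerivAt_id q).mul_const B).const_add A
  have h2 := (hasDerivAt_const q C).div hl h
  refine h2.congr_deriv ?_
  ring

private lemma L2' (A B C q : ℝ) (h : A + q * B ≠ 0) :
    HasDerivAt (fun x => C / (A + x * B) ^ 2) (-(2 * C * B) / (A + q * B) ^ 3) q := by
  have hl : HasDerivAt (fun x : ℝ => (A + x * B) ^ 2) (2 * (A + q * B) * B) q := by
    have := (((hasDerivAt_id q).mul_const B).const_add A).fun_pow 2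
    simpa [mul_comm, mul_assoc, mul_left_comm] using this
  have h2 := (hasDerivAt_const q C).div hl (pow_ne_zero 2 h)
  refine h2.congr_deriv ?_
  rw [div_eq_div_iff (pow_ne_zero 2 (pow_ne_zero 2 h)) (pow_ne_zero 3 h)]
  ring

/-- Fix t ∈ (0, τ]. For every π ∈ (0, 1), the map π ↦ Var(t, π) is twice
differentiable at π with second derivative equal to
2·n²·S(t)²·∫₀ᵗ f(r)·S(r)·ψ(r)²/Y(r, π)³ dr; in particular this second derivative is
nonnegative. -/
theorem km_variance_second_deriv
    (τ θ n c : ℝ) (hτ : 0 < τ) (hθ : 0 < θ) (hn : 0 < n) (hc : 0 < c)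
    (f S qP qI : ℝ → ℝ)
    (hf_cont : ContinuousOn f (Set.Icc 0 τ)) (hS_cont : ContinuousOn S (Set.Icc 0 τ))
    (hqP_cont : ContinuousOn qP (Set.Icc 0 τ)) (hqI_cont : ContinuousOn qI (Set.Icc 0 τ))
    (hf_pos : ∀ r ∈ Set.Icc (0:ℝ) τ, 0 < f r) (hS_pos : ∀ r ∈ Set.Icc (0:ℝ) τ, 0 < S r)
    (hqP_pos : ∀ r ∈ Set.Icc (0:ℝ) τ, 0 < qP r) (hqI_pos : ∀ r ∈ Set.Icc (0:ℝ) τ, 0 < qI r)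
    (ψ : ℝ → ℝ) (hψ : ∀ r, ψ r = qI r - qP r)
    (Y : ℝ → ℝ → ℝ) (hY : ∀ r p, Y r p = n * S r * ((1 - p) * qP r + p * qI r))
    (hY_pos : ∀ p ∈ Set.Icc (0:ℝ) 1, ∀ r ∈ Set.Icc (0:ℝ) τ, 0 < Y r p)
    (Var : ℝ → ℝ → ℝ)
    (hVar : ∀ t p, Var t p = S t ^ 2 * ∫ r in (0:ℝ)..t, f r / (Y r p * S r))
    (t : ℝ) (ht : t ∈ Set.Ioc 0 τ)
    (p : ℝ) (hp : p ∈ Set.Ioo (0:ℝ) 1) :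
    DifferentiableAt ℝ (fun q => Var t q) p ∧
    HasDerivAt (deriv (fun q => Var t q))
      (2 * n ^ 2 * S t ^ 2 * ∫ r in (0:ℝ)..t, f r * S r * ψ r ^ 2 / (Y r p) ^ 3) p ∧
    0 ≤ 2 * n ^ 2 * S t ^ 2 * ∫ r in (0:ℝ)..t, f r * S r * ψ r ^ 2 / (Y r p) ^ 3 := by
  obtain ⟨ht0, htτ⟩ := ht
  have hsub : Set.Icc (0:ℝ) t ⊆ Set.Icc 0 τ := Set.Icc_subset_Icc le_rfl htτ
  have hsub' : Set.uIoc (0:ℝ) t ⊆ Set.Icc 0 t := by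
    rw [Set.uIoc_of_le ht0.le]; exact Set.Ioc_subset_Icc_self
  -- continuity on [0,t]
  have hf' : ContinuousOn f (Set.Icc 0 t) := hf_cont.mono hsub
  have hS' : ContinuousOn S (Set.Icc 0 t) := hS_cont.mono hsub
  have hqP' : ContinuousOn qP (Set.Icc 0 t) := hqP_cont.mono hsub
  have hqI' : ContinuousOn qI (Set.Icc 0 t) := hqI_cont.mono hsub
  have hψ' : ContinuousOn ψ (Set.Icc 0 t) :=
    (hqI'.sub hqP').congr fun r _ => hψ r
  have hYcont : ∀ q : ℝ, ContinuousOn (fun r => Y r q) (Set.Icc 0 t) := by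
    intro q
    have : ContinuousOn (fun r => n * S r * ((1 - q) * qP r + q * qI r)) (Set.Icc 0 t) :=
      (continuousOn_const.mul hS').mul
        ((continuousOn_const.mul hqP').add (continuousOn_const.mul hqI'))
    exact this.congr fun r _ => hY r q
  have hYpos' : ∀ q ∈ Set.Icc (0:ℝ) 1, ∀ r ∈ Set.Icc (0:ℝ) t, 0 < Y r q := fun q hq r hr =>
    hY_pos q hq r (hsub hr)
  -- uniform lower bound m for Y on [0,t] × [0,1]
  have hhcont : ContinuousOn (fun r => n * S r * min (qP r) (qI r)) (Set.Icc 0 t) :=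
    (continuousOn_const.mul hS').mul (hqP'.inf hqI')
  obtain ⟨r₀, hr₀, hmin⟩ := isCompact_Icc.exists_isMinOn
    ⟨0, Set.left_mem_Icc.mpr ht0.le⟩ hhcont
  set m : ℝ := n * S r₀ * min (qP r₀) (qI r₀) with hmdef
  have hm : 0 < m := by
    have h1 := hS_pos r₀ (hsub hr₀)
    have h2 := hqP_pos r₀ (hsub hr₀)
    have h3 := hqI_pos r₀ (hsub hr₀)
    have : 0 < min (qP r₀) (qI r₀) := lt_min h2 h3
    positivity
  have hYm : ∀ q ∈ Set.Icc (0:ℝ) 1, ∀ r ∈ Set.Icc (0:ℝ) t, m ≤ Y r q := by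
    intro q hq r hr
    have h1 : m ≤ n * S r * min (qP r) (qI r) := hmin hr
    have h2 : min (qP r) (qI r) ≤ qP r := min_le_left _ _
    have h3 : min (qP r) (qI r) ≤ qI r := min_le_right _ _
    have hSr := hS_pos r (hsub hr)
    have hq0 := hq.1; have hq1 := hq.2
    rw [hY]
    have h4 : min (qP r) (qI r) ≤ (1 - q) * qP r + q * qI r := by
      nlinarith [mul_nonneg (by linarith : (0:ℝ) ≤ 1 - q) (by linarith : 0 ≤ qP r - min (qP r) (qI r)),
        mul_nonneg hq0 (by linarith : 0 ≤ qI r - min (qP r) (qI r))]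
    calc m ≤ n * S r * min (qP r) (qI r) := h1
      _ ≤ n * S r * ((1 - q) * qP r + q * qI r) :=
        mul_le_mul_of_nonneg_left h4 (by positivity)
  -- bounds for f, S, ψ on [0,t]
  obtain ⟨Cf₀, hCf₀⟩ := isCompact_Icc.exists_bound_of_continuousOn hf'
  obtain ⟨CS₀, hCS₀⟩ := isCompact_Icc.exists_bound_of_continuousOn hS'
  obtain ⟨Cψ₀, hCψ₀⟩ := isCompact_Icc.exists_bound_of_continuousOn hψ'
  have hCf : ∀ r ∈ Set.Icc (0:ℝ) t, |f r| ≤ |Cf₀| := fun r hr =>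
    (hCf₀ r hr).trans (le_abs_self _)
  have hCS : ∀ r ∈ Set.Icc (0:ℝ) t, |S r| ≤ |CS₀| := fun r hr =>
    (hCS₀ r hr).trans (le_abs_self _)
  have hCψ : ∀ r ∈ Set.Icc (0:ℝ) t, |ψ r| ≤ |Cψ₀| := fun r hr =>
    (hCψ₀ r hr).trans (le_abs_self _)
  -- linearization of Y in the parameter
  have hlin : ∀ r q : ℝ, Y r q = n * S r * qP r + q * (n * S r * ψ r) := by
    intro r q; rw [hY, hψ]; ring
  -- continuity (hence measurability/integrability) of the integrands
  have hFcont : ∀ q ∈ Set.Icc (0:ℝ) 1,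
      ContinuousOn (fun r => f r / (Y r q * S r)) (Set.Icc 0 t) := by
    intro q hq
    exact hf'.div ((hYcont q).mul hS') fun r hr =>
      (mul_pos (hYpos' q hq r hr) (hS_pos r (hsub hr))).ne'
  have hF1cont : ∀ q ∈ Set.Icc (0:ℝ) 1,
      ContinuousOn (fun r => -(f r * n * ψ r) / (Y r q) ^ 2) (Set.Icc 0 t) := by
    intro q hq
    exact ((hf'.mul continuousOn_const).mul hψ').neg.div ((hYcont q).pow 2)
      fun r hr => (pow_pos (hYpos' q hq r hr) 2).ne'
  have hF2cont : ∀ q ∈ Set.Icc (0:ℝ) 1,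
      ContinuousOn (fun r => 2 * n ^ 2 * (f r * S r * ψ r ^ 2 / (Y r q) ^ 3))
        (Set.Icc 0 t) := by
    intro q hq
    exact continuousOn_const.mul (((hf'.mul hS').mul (hψ'.pow 2)).div ((hYcont q).pow 3)
      fun r hr => (pow_pos (hYpos' q hq r hr) 3).ne')
  have huIcc : Set.uIcc (0:ℝ) t = Set.Icc 0 t := Set.uIcc_of_le ht0.le
  -- FIRST derivative: at every q₀ ∈ (0,1)
  have key1 : ∀ q₀ ∈ Set.Ioo (0:ℝ) 1,
      HasDerivAt (fun q => ∫ r in (0:ℝ)..t, f r / (Y r q * S r))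
        (∫ r in (0:ℝ)..t, -(f r * n * ψ r) / (Y r q₀) ^ 2) q₀ := by
    intro q₀ hq₀
    have hε : (0:ℝ) < min q₀ (1 - q₀) := lt_min hq₀.1 (by linarith [hq₀.2])
    have hball : ∀ q ∈ ball q₀ (min q₀ (1 - q₀)), q ∈ Set.Icc (0:ℝ) 1 := by
      intro q hq
      rw [mem_ball, Real.dist_eq] at hq
      have h1 := abs_lt.mp hq
      have h2 := min_le_left q₀ (1 - q₀)
      have h3 := min_le_right q₀ (1 - q₀)
      constructor <;> [linarith [h1.1]; linarith [h1.2]]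
    refine (intervalIntegral.hasDerivAt_integral_of_dominated_loc_of_deriv_le (ball_mem_nhds _ hε)
      (F := fun q r => f r / (Y r q * S r))
      (F' := fun q r => -(f r * n * ψ r) / (Y r q) ^ 2)
      (bound := fun _ => |Cf₀| * n * |Cψ₀| / m ^ 2)
      ?_ ?_ ?_ ?_ ?_ ?_).2
    · filter_upwards [isOpen_Ioo.mem_nhds hq₀] with q hq
      exact ((hFcont q (Set.Ioo_subset_Icc_self hq)).mono hsub').aestronglyMeasurable
        measurableSet_uIoc
    · exact ContinuousOn.intervalIntegrable
        (by rw [huIcc]; exact hFcont q₀ (Set.Ioo_subset_Icc_self hq₀))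
    · exact ((hF1cont q₀ (Set.Ioo_subset_Icc_self hq₀)).mono hsub').aestronglyMeasurable
        measurableSet_uIoc
    · apply Filter.Eventually.of_forall
      intro r hr q hq
      have hr' := hsub' hr
      have hq' := hball q hq
      have hYp := hYpos' q hq' r hr'
      have hYmq := hYm q hq' r hr'
      rw [Real.norm_eq_abs, abs_div, abs_neg, abs_mul, abs_mul, abs_of_pos hn,
        abs_of_pos (pow_pos hYp 2)]
      refine div_le_div₀ (by positivity)
        (mul_le_mul (mul_le_mul_of_nonneg_right (hCf r hr') hn.le) (hCψ r hr')
          (abs_nonneg _) (by positivity)) (by positivity)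
        (pow_le_pow_left₀ hm.le hYmq 2)
    · exact intervalIntegrable_const
    · apply Filter.Eventually.of_forall
      intro r hr q hq
      have hr' := hsub' hr
      have hq' := hball q hq
      have hSne : S r ≠ 0 := (hS_pos r (hsub hr')).ne'
      have hYq := hYpos' q hq' r hr'
      have hne : n * S r * qP r + q * (n * S r * ψ r) ≠ 0 := by
        rw [← hlin]; exact hYq.ne'
      have h1 := L1' (n * S r * qP r) (n * S r * ψ r) (f r / S r) q hne
      have h2 : (fun x => f r / (Y r x * S r))
          = fun x => (f r / S r) / (n * S r * qP r + x * (n * S r * ψ r)) :=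
        funext fun x => by rw [hlin r x, div_div, mul_comm (S r) _]
      rw [h2]
      refine h1.congr_deriv ?_
      simp only [hlin]
      field_simp
  -- SECOND derivative at p
  have key2 : HasDerivAt (fun q => ∫ r in (0:ℝ)..t, -(f r * n * ψ r) / (Y r q) ^ 2)
      (∫ r in (0:ℝ)..t, 2 * n ^ 2 * (f r * S r * ψ r ^ 2 / (Y r p) ^ 3)) p := by
    have hε : (0:ℝ) < min p (1 - p) := lt_min hp.1 (by linarith [hp.2])
    have hball : ∀ q ∈ ball p (min p (1 - p)), q ∈ Set.Icc (0:ℝ) 1 := by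
      intro q hq
      rw [mem_ball, Real.dist_eq] at hq
      have h1 := abs_lt.mp hq
      have h2 := min_le_left p (1 - p)
      have h3 := min_le_right p (1 - p)
      constructor <;> [linarith [h1.1]; linarith [h1.2]]
    refine (intervalIntegral.hasDerivAt_integral_of_dominated_loc_of_deriv_le (ball_mem_nhds _ hε)
      (F := fun q r => -(f r * n * ψ r) / (Y r q) ^ 2)
      (F' := fun q r => 2 * n ^ 2 * (f r * S r * ψ r ^ 2 / (Y r q) ^ 3))
      (bound := fun _ => 2 * n ^ 2 * (|Cf₀| * |CS₀| * |Cψ₀| ^ 2 / m ^ 3))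
      ?_ ?_ ?_ ?_ ?_ ?_).2
    · filter_upwards [isOpen_Ioo.mem_nhds hp] with q hq
      exact ((hF1cont q (Set.Ioo_subset_Icc_self hq)).mono hsub').aestronglyMeasurable
        measurableSet_uIoc
    · exact ContinuousOn.intervalIntegrable
        (by rw [huIcc]; exact hF1cont p (Set.Ioo_subset_Icc_self hp))
    · exact ((hF2cont p (Set.Ioo_subset_Icc_self hp)).mono hsub').aestronglyMeasurable
        measurableSet_uIoc
    · apply Filter.Eventually.of_forall
      intro r hr q hq
      have hr' := hsub' hr
      have hq' := hball q hq
      have hYp := hYpos' q hq' r hr'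
      have hYmq := hYm q hq' r hr'
      have hfr := hf_pos r (hsub hr')
      have hSr := hS_pos r (hsub hr')
      rw [Real.norm_eq_abs, abs_mul, abs_of_pos (by positivity : (0:ℝ) < 2 * n ^ 2),
        abs_div, abs_of_pos (pow_pos hYp 3), abs_mul, abs_mul]
      refine mul_le_mul_of_nonneg_left ?_ (by positivity)
      refine div_le_div₀ (by positivity)
        (mul_le_mul (mul_le_mul (hCf r hr') (hCS r hr') (abs_nonneg _) (abs_nonneg _))
          (by rw [abs_pow]; exact pow_le_pow_left₀ (abs_nonneg _) (hCψ r hr') 2)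
          (abs_nonneg _) (by positivity)) (by positivity)
        (pow_le_pow_left₀ hm.le hYmq 3)
    · exact intervalIntegrable_const
    · apply Filter.Eventually.of_forall
      intro r hr q hq
      have hr' := hsub' hr
      have hq' := hball q hq
      have hSne : S r ≠ 0 := (hS_pos r (hsub hr')).ne'
      have hYq := hYpos' q hq' r hr'
      have hne : n * S r * qP r + q * (n * S r * ψ r) ≠ 0 := by
        rw [← hlin]; exact hYq.ne'
      have h1 := L2' (n * S r * qP r) (n * S r * ψ r) (-(f r * n * ψ r)) q hne
      have h2 : (fun x => -(f r * n * ψ r) / (Y r x) ^ 2)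
          = fun x => -(f r * n * ψ r) / (n * S r * qP r + x * (n * S r * ψ r)) ^ 2 :=
        funext fun x => by rw [hlin r x]
      rw [h2]
      refine h1.congr_deriv ?_
      simp only [hlin]
      field_simp
  -- assembly
  have hVarfun : (fun q => Var t q)
      = fun q => S t ^ 2 * ∫ r in (0:ℝ)..t, f r / (Y r q * S r) :=
    funext fun q => hVar t q
  have hDiff : DifferentiableAt ℝ (fun q => Var t q) p := by
    rw [hVarfun]
    exact ((key1 p hp).const_mul (S t ^ 2)).differentiableAt
  refine ⟨hDiff, ?_, ?_⟩
  · have hev : deriv (fun q => Var t q)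
        =ᶠ[nhds p] fun q => S t ^ 2 * ∫ r in (0:ℝ)..t, -(f r * n * ψ r) / (Y r q) ^ 2 := by
      filter_upwards [isOpen_Ioo.mem_nhds hp] with q hq
      rw [hVarfun]
      exact ((key1 q hq).const_mul (S t ^ 2)).deriv
    have hD := (key2.const_mul (S t ^ 2)).congr_of_eventuallyEq hev
    refine hD.congr_deriv ?_
    rw [intervalIntegral.integral_const_mul]
    ring
  · apply mul_nonneg (by positivity)
    apply intervalIntegral.integral_nonneg ht0.le
    intro u hu
    have hY3 := hY_pos p (Set.Ioo_subset_Icc_self hp) u (hsub hu)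
    have h1 := hf_pos u (hsub hu)
    have h2 := hS_pos u (hsub hu)
    positivity
end

section
/- Fix t ∈ (0, τ]. The function π ↦ Var(t, π) is convex on the interval [0, 1]. -/
lemma inv_convex_combo {x y a b : ℝ} (hx : 0 < x) (hy : 0 < y) (ha : 0 ≤ a) (hb : 0 ≤ b)
    (hab : a + b = 1) : (a * x + b * y)⁻¹ ≤ a * x⁻¹ + b * y⁻¹ := by
  have hxy : 0 < a * x + b * y := by
    rcases ha.lt_or_eq with ha' | ha'
    · have := mul_pos ha' hx
      nlinarith [mul_nonneg hb hy.le]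
    · have hb1 : b = 1 := by linarith
      simp [← ha', hb1, hy]
  rw [inv_le_iff_one_le_mul₀ hxy]
  have hx' := hx.ne'
  have hy' := hy.ne'
  field_simp
  have expand : (a * y + b * x) * (a * x + b * y) = x * y + a * b * (x - y) ^ 2 := by
    linear_combination (x * y * (a + b + 1)) * hab
  nlinarith [mul_nonneg (mul_nonneg ha hb) (sq_nonneg (x - y))]

/-- Fix t ∈ (0, τ]. The function π ↦ Var(t, π) is convex on [0, 1]. -/
theorem km_variance_convexOn
    (τ θ n c : ℝ) (hτ : 0 < τ) (hθ : 0 < θ) (hn : 0 < n) (hc : 0 < c)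
    (f S qP qI : ℝ → ℝ)
    (hf_cont : ContinuousOn f (Set.Icc 0 τ)) (hS_cont : ContinuousOn S (Set.Icc 0 τ))
    (hqP_cont : ContinuousOn qP (Set.Icc 0 τ)) (hqI_cont : ContinuousOn qI (Set.Icc 0 τ))
    (hf_pos : ∀ r ∈ Set.Icc (0:ℝ) τ, 0 < f r) (hS_pos : ∀ r ∈ Set.Icc (0:ℝ) τ, 0 < S r)
    (hqP_pos : ∀ r ∈ Set.Icc (0:ℝ) τ, 0 < qP r) (hqI_pos : ∀ r ∈ Set.Icc (0:ℝ) τ, 0 < qI r)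
    (ψ : ℝ → ℝ) (hψ : ∀ r, ψ r = qI r - qP r)
    (Y : ℝ → ℝ → ℝ) (hY : ∀ r p, Y r p = n * S r * ((1 - p) * qP r + p * qI r))
    (hY_pos : ∀ p ∈ Set.Icc (0:ℝ) 1, ∀ r ∈ Set.Icc (0:ℝ) τ, 0 < Y r p)
    (Var : ℝ → ℝ → ℝ)
    (hVar : ∀ t p, Var t p = S t ^ 2 * ∫ r in (0:ℝ)..t, f r / (Y r p * S r))
    (t : ℝ) (ht : t ∈ Set.Ioc 0 τ) :
    ConvexOn ℝ (Set.Icc (0:ℝ) 1) (fun p => Var t p) := by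
  obtain ⟨ht0, htτ⟩ := ht
  have hsub : Set.Icc (0:ℝ) t ⊆ Set.Icc 0 τ := Set.Icc_subset_Icc le_rfl htτ
  -- continuity / integrability of the integrand for each p ∈ [0,1]
  have hint : ∀ p ∈ Set.Icc (0:ℝ) 1,
      IntervalIntegrable (fun r => f r / (Y r p * S r)) MeasureTheory.volume 0 t := by
    intro p hp
    apply ContinuousOn.intervalIntegrable
    rw [Set.uIcc_of_le ht0.le]
    apply ContinuousOn.div (hf_cont.mono hsub)
    · apply ContinuousOn.mul _ (hS_cont.mono hsub)
      have : ContinuousOn (fun r => n * S r * ((1 - p) * qP r + p * qI r)) (Set.Icc 0 t) := by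
        apply ContinuousOn.mul (continuousOn_const.mul (hS_cont.mono hsub))
        exact (continuousOn_const.mul (hqP_cont.mono hsub)).add
          (continuousOn_const.mul (hqI_cont.mono hsub))
      exact this.congr fun r _ => hY r p
    · intro r hr
      exact (mul_pos (hY_pos p hp r (hsub hr)) (hS_pos r (hsub hr))).ne'
  constructor
  · exact convex_Icc 0 1
  intro p hp q hq a b ha hb hab
  have hmem : a • p + b • q ∈ Set.Icc (0:ℝ) 1 := (convex_Icc 0 1) hp hq ha hb hab
  simp only [smul_eq_mul] at hmem ⊢
  rw [hVar, hVar, hVar]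
  -- pointwise inequality on [0, t]
  have hpt : ∀ r ∈ Set.Icc 0 t, f r / (Y r (a * p + b * q) * S r) ≤
      a * (f r / (Y r p * S r)) + b * (f r / (Y r q * S r)) := by
    intro r hr
    have hrτ := hsub hr
    have hYp := hY_pos p hp r hrτ
    have hYq := hY_pos q hq r hrτ
    have hSr := hS_pos r hrτ
    have hfr := hf_pos r hrτ
    have hYc : Y r (a * p + b * q) = a * Y r p + b * Y r q := by
      rw [hY, hY, hY]
      have hb' : b = 1 - a := by linarith
      subst hb'; ring
    have key : (a * (Y r p * S r) + b * (Y r q * S r))⁻¹ ≤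
        a * (Y r p * S r)⁻¹ + b * (Y r q * S r)⁻¹ :=
      inv_convex_combo (mul_pos hYp hSr) (mul_pos hYq hSr) ha hb hab
    have := mul_le_mul_of_nonneg_left key hfr.le
    calc f r / (Y r (a * p + b * q) * S r)
        = f r * (a * (Y r p * S r) + b * (Y r q * S r))⁻¹ := by
          rw [hYc, div_eq_mul_inv]; ring_nf
      _ ≤ f r * (a * (Y r p * S r)⁻¹ + b * (Y r q * S r)⁻¹) := this
      _ = a * (f r / (Y r p * S r)) + b * (f r / (Y r q * S r)) := by
          rw [div_eq_mul_inv, div_eq_mul_inv]; ring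
  have hintc := hint _ hmem
  have hintp := hint p hp
  have hintq := hint q hq
  have hIle : (∫ r in (0:ℝ)..t, f r / (Y r (a * p + b * q) * S r)) ≤
      a * (∫ r in (0:ℝ)..t, f r / (Y r p * S r)) +
      b * (∫ r in (0:ℝ)..t, f r / (Y r q * S r)) := by
    rw [← intervalIntegral.integral_const_mul, ← intervalIntegral.integral_const_mul,
      ← intervalIntegral.integral_add (hintp.const_mul a) (hintq.const_mul b)]
    exact intervalIntegral.integral_mono_on ht0.le hintc
      ((hintp.const_mul a).add (hintq.const_mul b)) hpt
  have hS2 : (0:ℝ) ≤ S t ^ 2 := sq_nonneg _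
  calc S t ^ 2 * ∫ r in (0:ℝ)..t, f r / (Y r (a * p + b * q) * S r)
      ≤ S t ^ 2 * (a * (∫ r in (0:ℝ)..t, f r / (Y r p * S r)) +
        b * (∫ r in (0:ℝ)..t, f r / (Y r q * S r))) := by
        exact mul_le_mul_of_nonneg_left hIle hS2
    _ = a * (S t ^ 2 * ∫ r in (0:ℝ)..t, f r / (Y r p * S r)) +
        b * (S t ^ 2 * ∫ r in (0:ℝ)..t, f r / (Y r q * S r)) := by ring
end

section
/- Fix t ∈ (0, τ]. If there exists r₀ ∈ (0, t) with ψ(r₀) ≠ 0, then the function π ↦ Var(t, π) is strictly convex on the interval [0, 1]. -/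
open MeasureTheory intervalIntegral Set

private lemma inv_aff_le (a b u v : ℝ) (ha : 0 < a) (hb : 0 < b) (hab : a + b = 1)
    (hu : 0 < u) (hv : 0 < v) : 1 / (a*u+b*v) ≤ a * (1/u) + b * (1/v) := by
  rw [mul_one_div, mul_one_div, div_add_div _ _ hu.ne' hv.ne',
    div_le_div_iff₀ (by positivity) (by positivity)]
  have hb' : b = 1 - a := by linarith
  subst hb'
  nlinarith [mul_pos ha hb, sq_nonneg (u - v), mul_pos hu hv]

private lemma inv_aff_lt (a b u v : ℝ) (ha : 0 < a) (hb : 0 < b) (hab : a + b = 1)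
    (hu : 0 < u) (hv : 0 < v) (huv : u ≠ v) :
    1 / (a*u+b*v) < a * (1/u) + b * (1/v) := by
  rw [mul_one_div, mul_one_div, div_add_div _ _ hu.ne' hv.ne',
    div_lt_div_iff₀ (by positivity) (by positivity)]
  have hsq : 0 < (u - v)^2 :=
    lt_of_le_of_ne (sq_nonneg _) (Ne.symm (pow_ne_zero 2 (sub_ne_zero.mpr huv)))
  have hb' : b = 1 - a := by linarith
  subst hb'
  nlinarith [mul_pos ha hb, hsq, mul_pos hu hv]

private lemma div_aff_le (F K a b u v : ℝ) (hF : 0 < F) (hK : 0 < K)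
    (ha : 0 < a) (hb : 0 < b) (hab : a + b = 1) (hu : 0 < u) (hv : 0 < v) :
    F / (K * (a*u+b*v)) ≤ a * (F/(K*u)) + b * (F/(K*v)) := by
  have h := inv_aff_le a b u v ha hb hab hu hv
  have hFK : (0:ℝ) < F / K := by positivity
  calc F / (K * (a*u+b*v)) = (F/K) * (1/(a*u+b*v)) := by
        rw [← div_div, div_eq_mul_inv (F/K), one_div]
    _ ≤ (F/K) * (a * (1/u) + b * (1/v)) := mul_le_mul_of_nonneg_left h hFK.le
    _ = a * (F/(K*u)) + b * (F/(K*v)) := by field_simp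

private lemma div_aff_lt (F K a b u v : ℝ) (hF : 0 < F) (hK : 0 < K)
    (ha : 0 < a) (hb : 0 < b) (hab : a + b = 1) (hu : 0 < u) (hv : 0 < v) (huv : u ≠ v) :
    F / (K * (a*u+b*v)) < a * (F/(K*u)) + b * (F/(K*v)) := by
  have h := inv_aff_lt a b u v ha hb hab hu hv huv
  have hFK : (0:ℝ) < F / K := by positivity
  calc F / (K * (a*u+b*v)) = (F/K) * (1/(a*u+b*v)) := by
        rw [← div_div, div_eq_mul_inv (F/K), one_div]
    _ < (F/K) * (a * (1/u) + b * (1/v)) := mul_lt_mul_of_pos_left h hFK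
    _ = a * (F/(K*u)) + b * (F/(K*v)) := by field_simp

/-- Fix t ∈ (0, τ]. If there exists r₀ ∈ (0, t) with ψ(r₀) ≠ 0, then
π ↦ Var(t, π) is strictly convex on [0, 1]. -/
theorem km_variance_strictConvexOn
    (τ θ n c : ℝ) (hτ : 0 < τ) (hθ : 0 < θ) (hn : 0 < n) (hc : 0 < c)
    (f S qP qI : ℝ → ℝ)
    (hf_cont : ContinuousOn f (Set.Icc 0 τ)) (hS_cont : ContinuousOn S (Set.Icc 0 τ))
    (hqP_cont : ContinuousOn qP (Set.Icc 0 τ)) (hqI_cont : ContinuousOn qI (Set.Icc 0 τ))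
    (hf_pos : ∀ r ∈ Set.Icc (0:ℝ) τ, 0 < f r) (hS_pos : ∀ r ∈ Set.Icc (0:ℝ) τ, 0 < S r)
    (hqP_pos : ∀ r ∈ Set.Icc (0:ℝ) τ, 0 < qP r) (hqI_pos : ∀ r ∈ Set.Icc (0:ℝ) τ, 0 < qI r)
    (ψ : ℝ → ℝ) (hψ : ∀ r, ψ r = qI r - qP r)
    (Y : ℝ → ℝ → ℝ) (hY : ∀ r p, Y r p = n * S r * ((1 - p) * qP r + p * qI r))
    (hY_pos : ∀ p ∈ Set.Icc (0:ℝ) 1, ∀ r ∈ Set.Icc (0:ℝ) τ, 0 < Y r p)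
    (Var : ℝ → ℝ → ℝ)
    (hVar : ∀ t p, Var t p = S t ^ 2 * ∫ r in (0:ℝ)..t, f r / (Y r p * S r))
    (t : ℝ) (ht : t ∈ Set.Ioc 0 τ)
    (hψ_ne : ∃ r₀ ∈ Set.Ioo (0:ℝ) t, ψ r₀ ≠ 0) :
    StrictConvexOn ℝ (Set.Icc (0:ℝ) 1) (fun p => Var t p) := by
  obtain ⟨ht0, htτ⟩ := ht
  have hsub : Icc (0:ℝ) t ⊆ Icc 0 τ := Icc_subset_Icc le_rfl htτ
  set D : ℝ → ℝ → ℝ := fun p r => (1 - p) * qP r + p * qI r with hD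
  set K : ℝ → ℝ := fun r => n * S r ^ 2 with hKdef
  have hYS : ∀ p r, Y r p * S r = K r * D p r := by
    intro p r; rw [hY]; simp only [hD, hKdef]; ring
  have hKpos : ∀ r ∈ Icc (0:ℝ) τ, 0 < K r := by
    intro r hr; have := hS_pos r hr; simp only [hKdef]; positivity
  have hDpos : ∀ p ∈ Icc (0:ℝ) 1, ∀ r ∈ Icc (0:ℝ) τ, 0 < D p r := by
    intro p hp r hr
    have h1 := hY_pos p hp r hr
    rw [hY] at h1
    have h2 : 0 < n * S r := mul_pos hn (hS_pos r hr)
    simp only [hD]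
    by_contra h3
    push_neg at h3
    have := mul_nonpos_iff.mpr (Or.inr ⟨h3, h2.le⟩)
    nlinarith
  set g : ℝ → ℝ → ℝ := fun p r => f r / (Y r p * S r) with hg
  -- continuity of g p on [0, t]
  have hg_cont : ∀ p ∈ Icc (0:ℝ) 1, ContinuousOn (g p) (Icc 0 t) := by
    intro p hp
    have hc2 : ContinuousOn (fun r => n * S r * ((1 - p) * qP r + p * qI r) * S r)
        (Icc 0 t) := by
      exact (((continuousOn_const.mul (hS_cont.mono hsub)).mul
        ((continuousOn_const.mul (hqP_cont.mono hsub)).add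
          (continuousOn_const.mul (hqI_cont.mono hsub)))).mul (hS_cont.mono hsub))
    have hc1 : ContinuousOn (fun r => f r / (n * S r * ((1 - p) * qP r + p * qI r) * S r))
        (Icc 0 t) := by
      apply (hf_cont.mono hsub).div hc2
      intro r hr
      have hYp := hY_pos p hp r (hsub hr)
      rw [hY] at hYp
      exact (mul_pos hYp (hS_pos r (hsub hr))).ne'
    apply hc1.congr
    intro r _
    simp only [hg, hY]
  have hg_int : ∀ p ∈ Icc (0:ℝ) 1, IntervalIntegrable (g p) volume 0 t := by
    intro p hp
    exact (hg_cont p hp).intervalIntegrable_of_Icc ht0.le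
  -- main convexity argument
  refine ⟨convex_Icc 0 1, ?_⟩
  intro x hx y hy hxy a b ha hb hab
  simp only [smul_eq_mul]
  have hmix : a * x + b * y ∈ Icc (0:ℝ) 1 := by
    constructor
    · nlinarith [hx.1, hy.1]
    · nlinarith [hx.2, hy.2]
  -- pointwise facts
  have hDmix : ∀ r, D (a*x+b*y) r = a * D x r + b * D y r := by
    intro r
    simp only [hD]
    linear_combination (-(qP r)) * hab
  have hpt_le : ∀ r ∈ Icc (0:ℝ) t, g (a*x+b*y) r ≤ a * g x r + b * g y r := by
    intro r hr
    have hrτ := hsub hr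
    simp only [hg]
    rw [hYS, hYS, hYS, hDmix]
    exact div_aff_le (f r) (K r) a b (D x r) (D y r) (hf_pos r hrτ) (hKpos r hrτ)
      ha hb hab (hDpos x hx r hrτ) (hDpos y hy r hrτ)
  obtain ⟨r₀, hr₀, hψ0⟩ := hψ_ne
  have hr₀t : r₀ ∈ Icc (0:ℝ) t := ⟨hr₀.1.le, hr₀.2.le⟩
  have hDne : D x r₀ ≠ D y r₀ := by
    intro h
    apply hψ0
    have h2 : D x r₀ - D y r₀ = (x - y) * ψ r₀ := by
      simp only [hD, hψ]; ring
    rw [h, sub_self] at h2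
    rcases mul_eq_zero.mp h2.symm with h3 | h3
    · exact absurd (by linarith : x = y) hxy
    · exact h3
  -- the gap function
  set h : ℝ → ℝ := fun r => a * g x r + b * g y r - g (a*x+b*y) r with hh
  have hh_nonneg : ∀ r ∈ Icc (0:ℝ) t, 0 ≤ h r := by
    intro r hr
    have := hpt_le r hr
    simp only [hh]; linarith
  have hh_pos : 0 < h r₀ := by
    have hrτ := hsub hr₀t
    simp only [hh, hg]
    rw [hYS, hYS, hYS, hDmix]
    have := div_aff_lt (f r₀) (K r₀) a b (D x r₀) (D y r₀) (hf_pos r₀ hrτ) (hKpos r₀ hrτ)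
      ha hb hab (hDpos x hx r₀ hrτ) (hDpos y hy r₀ hrτ) hDne
    linarith
  have hh_cont : ContinuousOn h (Icc 0 t) :=
    ((continuousOn_const.mul (hg_cont x hx)).add
      (continuousOn_const.mul (hg_cont y hy))).sub (hg_cont _ hmix)
  have hh_int : IntervalIntegrable h volume 0 t :=
    hh_cont.intervalIntegrable_of_Icc ht0.le
  -- find a small interval around r₀ where h is positive
  have hca : ContinuousAt h r₀ :=
    hh_cont.continuousAt (Icc_mem_nhds hr₀.1 hr₀.2)
  have hev : ∀ᶠ r in nhds r₀, 0 < h r := hca.eventually (lt_mem_nhds hh_pos)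
  obtain ⟨ε, hε, hball⟩ := Metric.eventually_nhds_iff.mp hev
  set ε' : ℝ := min ε (min r₀ (t - r₀)) with hε'def
  have hε' : 0 < ε' := lt_min hε (lt_min hr₀.1 (by linarith [hr₀.2]))
  set c₁ : ℝ := r₀ - ε'/2 with hc₁def
  set c₂ : ℝ := r₀ + ε'/2 with hc₂def
  have hc₁0 : 0 ≤ c₁ := by
    have : ε' ≤ r₀ := le_trans (min_le_right _ _) (min_le_left _ _)
    simp only [hc₁def]; linarith
  have hc₂t : c₂ ≤ t := by
    have : ε' ≤ t - r₀ := le_trans (min_le_right _ _) (min_le_right _ _)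
    simp only [hc₂def]; linarith
  have hc₁₂ : c₁ < c₂ := by simp only [hc₁def, hc₂def]; linarith
  have hmid_pos : ∀ r ∈ Ioo c₁ c₂, 0 < h r := by
    intro r hr
    apply hball
    rw [Real.dist_eq, abs_sub_lt_iff]
    have hεε : ε' ≤ ε := min_le_left _ _
    constructor
    · have := hr.2; simp only [hc₂def] at this; linarith
    · have := hr.1; simp only [hc₁def] at this; linarith
  -- split the integral
  have hmem : ∀ z, 0 ≤ z → z ≤ t → z ∈ uIcc (0:ℝ) t := by
    intro z h1 h2; rw [uIcc_of_le ht0.le]; exact ⟨h1, h2⟩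
  have hi1 : IntervalIntegrable h volume 0 c₁ :=
    hh_int.mono_set (uIcc_subset_uIcc (hmem 0 le_rfl ht0.le) (hmem c₁ hc₁0 (by linarith)))
  have hi2 : IntervalIntegrable h volume c₁ c₂ :=
    hh_int.mono_set (uIcc_subset_uIcc (hmem c₁ hc₁0 (by linarith)) (hmem c₂ (by linarith) hc₂t))
  have hi3 : IntervalIntegrable h volume c₂ t :=
    hh_int.mono_set (uIcc_subset_uIcc (hmem c₂ (by linarith) hc₂t) (hmem t ht0.le le_rfl))
  have hsplit : (∫ r in (0:ℝ)..t, h r) =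
      (∫ r in (0:ℝ)..c₁, h r) + (∫ r in c₁..c₂, h r) + (∫ r in c₂..t, h r) := by
    have e1 := integral_add_adjacent_intervals hi1 hi2
    have e2 := integral_add_adjacent_intervals (hi1.trans hi2) hi3
    linarith
  have hI1 : 0 ≤ ∫ r in (0:ℝ)..c₁, h r := by
    apply integral_nonneg hc₁0
    intro r hr
    exact hh_nonneg r ⟨hr.1, le_trans hr.2 (by linarith)⟩
  have hI2 : 0 < ∫ r in c₁..c₂, h r :=
    intervalIntegral_pos_of_pos_on hi2 hmid_pos hc₁₂
  have hI3 : 0 ≤ ∫ r in c₂..t, h r := by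
    apply integral_nonneg hc₂t
    intro r hr
    exact hh_nonneg r ⟨le_trans (by linarith) hr.1, hr.2⟩
  have hIpos : 0 < ∫ r in (0:ℝ)..t, h r := by rw [hsplit]; linarith
  -- convert to an inequality on integrals of g
  have hint_eq : (∫ r in (0:ℝ)..t, h r) =
      a * (∫ r in (0:ℝ)..t, g x r) + b * (∫ r in (0:ℝ)..t, g y r)
        - ∫ r in (0:ℝ)..t, g (a*x+b*y) r := by
    have hax : IntervalIntegrable (fun r => a * g x r) volume 0 t :=
      (hg_int x hx).const_mul a
    have hby : IntervalIntegrable (fun r => b * g y r) volume 0 t :=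
      (hg_int y hy).const_mul b
    simp only [hh]
    rw [integral_sub (hax.add hby) (hg_int _ hmix), integral_add hax hby,
      intervalIntegral.integral_const_mul, intervalIntegral.integral_const_mul]
  have hglt : (∫ r in (0:ℝ)..t, g (a*x+b*y) r) <
      a * (∫ r in (0:ℝ)..t, g x r) + b * (∫ r in (0:ℝ)..t, g y r) := by
    rw [hint_eq] at hIpos; linarith
  -- conclude
  have hSt : 0 < S t ^ 2 := by
    have := hS_pos t ⟨ht0.le, htτ⟩; positivity
  rw [hVar, hVar, hVar]
  calc S t ^ 2 * ∫ r in (0:ℝ)..t, f r / (Y r (a*x+b*y) * S r)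
      = S t ^ 2 * ∫ r in (0:ℝ)..t, g (a*x+b*y) r := rfl
    _ < S t ^ 2 * (a * (∫ r in (0:ℝ)..t, g x r) + b * (∫ r in (0:ℝ)..t, g y r)) :=
        mul_lt_mul_of_pos_left hglt hSt
    _ = a * (S t ^ 2 * ∫ r in (0:ℝ)..t, g x r) + b * (S t ^ 2 * ∫ r in (0:ℝ)..t, g y r) := by
        ring
    _ = a * (S t ^ 2 * ∫ r in (0:ℝ)..t, f r / (Y r x * S r))
        + b * (S t ^ 2 * ∫ r in (0:ℝ)..t, f r / (Y r y * S r)) := rfl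
end

section
/- (Proposition 1, optimality condition.) Fix t ∈ (0, τ]. If π* ∈ (0, 1) satisfies Var(t, π*) ≤ Var(t, π) for all π ∈ [0, 1], then the functions γ(r) = f(r)/Y(r, π*)² and ψ(r) are orthogonal over [0, t], i.e. ∫₀^t f(r)·ψ(r)/Y(r, π*)² dr = 0. -/
set_option maxHeartbeats 1000000 in
/-- Proposition 1, optimality condition: Fix t ∈ (0, τ]. If π* ∈ (0, 1)
minimizes Var(t, ·) over [0, 1], then γ(r) = f(r)/Y(r, π*)² and ψ(r) are orthogonal over
[0, t], i.e. ∫₀ᵗ f(r)·ψ(r)/Y(r, π*)² dr = 0. -/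
theorem km_variance_interior_min_orthogonality
    (τ θ n c : ℝ) (hτ : 0 < τ) (hθ : 0 < θ) (hn : 0 < n) (hc : 0 < c)
    (f S qP qI : ℝ → ℝ)
    (hf_cont : ContinuousOn f (Set.Icc 0 τ)) (hS_cont : ContinuousOn S (Set.Icc 0 τ))
    (hqP_cont : ContinuousOn qP (Set.Icc 0 τ)) (hqI_cont : ContinuousOn qI (Set.Icc 0 τ))
    (hf_pos : ∀ r ∈ Set.Icc (0:ℝ) τ, 0 < f r) (hS_pos : ∀ r ∈ Set.Icc (0:ℝ) τ, 0 < S r)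
    (hqP_pos : ∀ r ∈ Set.Icc (0:ℝ) τ, 0 < qP r) (hqI_pos : ∀ r ∈ Set.Icc (0:ℝ) τ, 0 < qI r)
    (ψ : ℝ → ℝ) (hψ : ∀ r, ψ r = qI r - qP r)
    (Y : ℝ → ℝ → ℝ) (hY : ∀ r p, Y r p = n * S r * ((1 - p) * qP r + p * qI r))
    (hY_pos : ∀ p ∈ Set.Icc (0:ℝ) 1, ∀ r ∈ Set.Icc (0:ℝ) τ, 0 < Y r p)
    (Var : ℝ → ℝ → ℝ)
    (hVar : ∀ t p, Var t p = S t ^ 2 * ∫ r in (0:ℝ)..t, f r / (Y r p * S r))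
    (t : ℝ) (ht : t ∈ Set.Ioc 0 τ)
    (pstar : ℝ) (hpstar : pstar ∈ Set.Ioo (0:ℝ) 1)
    (hmin : ∀ p ∈ Set.Icc (0:ℝ) 1, Var t pstar ≤ Var t p) :
    ∫ r in (0:ℝ)..t, f r * ψ r / (Y r pstar) ^ 2 = 0 := by
  obtain ⟨ht0, htτ⟩ := ht
  obtain ⟨hp0, hp1⟩ := hpstar
  have hpmem : pstar ∈ Set.Icc (0:ℝ) 1 := ⟨hp0.le, hp1.le⟩
  have hsub : Set.Icc (0:ℝ) t ⊆ Set.Icc 0 τ := Set.Icc_subset_Icc le_rfl htτ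
  have huIcc : Set.uIcc (0:ℝ) t = Set.Icc 0 t := Set.uIcc_of_le ht0.le
  -- continuity facts
  have hψc : ContinuousOn ψ (Set.Icc 0 τ) :=
    (hqI_cont.sub hqP_cont).congr fun r _ => hψ r
  have hYc : ∀ p, ContinuousOn (fun r => Y r p) (Set.Icc 0 τ) := by
    intro p
    have : ContinuousOn (fun r => n * S r * ((1 - p) * qP r + p * qI r)) (Set.Icc 0 τ) :=
      (continuousOn_const.mul hS_cont).mul
        ((continuousOn_const.mul hqP_cont).add (continuousOn_const.mul hqI_cont))
    exact this.congr fun r _ => hY r p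
  have hYne : ∀ p ∈ Set.Icc (0:ℝ) 1, ∀ r ∈ Set.Icc (0:ℝ) t, Y r p ≠ 0 :=
    fun p hp r hr => (hY_pos p hp r (hsub hr)).ne'
  have hSne : ∀ r ∈ Set.Icc (0:ℝ) t, S r ≠ 0 := fun r hr => (hS_pos r (hsub hr)).ne'
  -- integrability of the main families
  have hIntI : ∀ p ∈ Set.Icc (0:ℝ) 1,
      IntervalIntegrable (fun r => f r / (Y r p * S r)) MeasureTheory.volume 0 t := by
    intro p hp
    apply ContinuousOn.intervalIntegrable
    rw [huIcc]
    exact (hf_cont.mono hsub).div (((hYc p).mono hsub).mul (hS_cont.mono hsub))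
      fun r hr => mul_ne_zero (hYne p hp r hr) (hSne r hr)
  have hIntG : ∀ p ∈ Set.Icc (0:ℝ) 1,
      IntervalIntegrable (fun r => f r * ψ r / (Y r p * Y r pstar))
        MeasureTheory.volume 0 t := by
    intro p hp
    apply ContinuousOn.intervalIntegrable
    rw [huIcc]
    exact ((hf_cont.mono hsub).mul (hψc.mono hsub)).div
      (((hYc p).mono hsub).mul ((hYc pstar).mono hsub))
      fun r hr => mul_ne_zero (hYne p hp r hr) (hYne pstar hpmem r hr)
  have hIntH : ∀ p ∈ Set.Icc (0:ℝ) 1,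
      IntervalIntegrable (fun r => f r * S r * ψ r ^ 2 / (Y r p * Y r pstar ^ 2))
        MeasureTheory.volume 0 t := by
    intro p hp
    apply ContinuousOn.intervalIntegrable
    rw [huIcc]
    exact (((hf_cont.mono hsub).mul (hS_cont.mono hsub)).mul ((hψc.mono hsub).pow 2)).div
      (((hYc p).mono hsub).mul (((hYc pstar).mono hsub).pow 2))
      fun r hr => mul_ne_zero (hYne p hp r hr) (pow_ne_zero 2 (hYne pstar hpmem r hr))
  -- notation
  set G : ℝ → ℝ := fun p => ∫ r in (0:ℝ)..t, f r * ψ r / (Y r p * Y r pstar) with hG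
  set H : ℝ → ℝ := fun p => ∫ r in (0:ℝ)..t, f r * S r * ψ r ^ 2 / (Y r p * Y r pstar ^ 2)
    with hH
  -- Step A: minimality gives 0 ≤ (pstar - p) * G p for p ∈ [0,1]
  have stepA : ∀ p ∈ Set.Icc (0:ℝ) 1, 0 ≤ (pstar - p) * G p := by
    intro p hp
    have hmin' := hmin p hp
    rw [hVar, hVar] at hmin'
    have hSt : (0:ℝ) < S t ^ 2 := pow_pos (hS_pos t ⟨ht0.le, htτ⟩) 2
    have hle : (∫ r in (0:ℝ)..t, f r / (Y r pstar * S r))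
        ≤ ∫ r in (0:ℝ)..t, f r / (Y r p * S r) := le_of_mul_le_mul_left hmin' hSt
    have hdiff : (∫ r in (0:ℝ)..t, f r / (Y r p * S r))
        - (∫ r in (0:ℝ)..t, f r / (Y r pstar * S r)) = n * (pstar - p) * G p := by
      rw [← intervalIntegral.integral_sub (hIntI p hp) (hIntI pstar hpmem)]
      rw [hG, ← intervalIntegral.integral_const_mul]
      apply intervalIntegral.integral_congr
      intro r hr
      rw [huIcc] at hr
      have h1 : Y r p ≠ 0 := hYne p hp r hr
      have h2 : Y r pstar ≠ 0 := hYne pstar hpmem r hr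
      have h3 : S r ≠ 0 := hSne r hr
      simp only
      rw [hψ r, hY r p, hY r pstar] at *
      have h1' : (1 - p) * qP r + p * qI r ≠ 0 := right_ne_zero_of_mul h1
      have h2' : (1 - pstar) * qP r + pstar * qI r ≠ 0 := right_ne_zero_of_mul h2
      have hn' : n ≠ 0 := hn.ne'
      have hS'' : S r ≠ 0 := right_ne_zero_of_mul (left_ne_zero_of_mul h1)
      set A := (1 - p) * qP r + p * qI r with hA0
      set B := (1 - pstar) * qP r + pstar * qI r with hB0
      field_simp
      rw [hA0, hB0]
      ring
    nlinarith [hdiff, hle]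
  -- Step B: G p = G pstar + n * (pstar - p) * H p
  have stepB : ∀ p ∈ Set.Icc (0:ℝ) 1, G p = G pstar + n * (pstar - p) * H p := by
    intro p hp
    have key : ∀ r ∈ Set.Icc (0:ℝ) t,
        f r * ψ r / (Y r p * Y r pstar)
          = f r * ψ r / (Y r pstar * Y r pstar)
            + n * (pstar - p) * (f r * S r * ψ r ^ 2 / (Y r p * Y r pstar ^ 2)) := by
      intro r hr
      have h1 : Y r p ≠ 0 := hYne p hp r hr
      have h2 : Y r pstar ≠ 0 := hYne pstar hpmem r hr
      rw [hψ r, hY r p, hY r pstar] at *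
      have h1' : (1 - p) * qP r + p * qI r ≠ 0 := right_ne_zero_of_mul h1
      have h2' : (1 - pstar) * qP r + pstar * qI r ≠ 0 := right_ne_zero_of_mul h2
      have hn' : n ≠ 0 := hn.ne'
      have hS'' : S r ≠ 0 := right_ne_zero_of_mul (left_ne_zero_of_mul h1)
      set A := (1 - p) * qP r + p * qI r with hA0
      set B := (1 - pstar) * qP r + pstar * qI r with hB0
      field_simp
      rw [hA0, hB0]
      ring
    have hInt2 : IntervalIntegrable
        (fun r => n * (pstar - p) * (f r * S r * ψ r ^ 2 / (Y r p * Y r pstar ^ 2)))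
        MeasureTheory.volume 0 t := (hIntH p hp).const_mul _
    calc G p = ∫ r in (0:ℝ)..t, (f r * ψ r / (Y r pstar * Y r pstar)
          + n * (pstar - p) * (f r * S r * ψ r ^ 2 / (Y r p * Y r pstar ^ 2))) := by
          apply intervalIntegral.integral_congr
          intro r hr; rw [huIcc] at hr; exact key r hr
      _ = G pstar + n * (pstar - p) * H p := by
          rw [intervalIntegral.integral_add (hIntG pstar hpmem) hInt2,
            intervalIntegral.integral_const_mul]
  -- Step C: uniform bound on H
  set B : ℝ → ℝ := fun r =>
    f r * S r * ψ r ^ 2 / (n * S r * min (qP r) (qI r) * Y r pstar ^ 2) with hB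
  have hminq : ∀ r ∈ Set.Icc (0:ℝ) τ, 0 < min (qP r) (qI r) :=
    fun r hr => lt_min (hqP_pos r hr) (hqI_pos r hr)
  have hBden : ∀ r ∈ Set.Icc (0:ℝ) t,
      0 < n * S r * min (qP r) (qI r) * Y r pstar ^ 2 := fun r hr =>
    mul_pos (mul_pos (mul_pos hn (hS_pos r (hsub hr))) (hminq r (hsub hr)))
      (pow_pos (hY_pos pstar hpmem r (hsub hr)) 2)
  have hIntB : IntervalIntegrable B MeasureTheory.volume 0 t := by
    apply ContinuousOn.intervalIntegrable
    rw [huIcc]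
    exact (((hf_cont.mono hsub).mul (hS_cont.mono hsub)).mul ((hψc.mono hsub).pow 2)).div
      (((continuousOn_const.mul (hS_cont.mono hsub)).mul
        ((hqP_cont.mono hsub).inf (hqI_cont.mono hsub))).mul (((hYc pstar).mono hsub).pow 2))
      fun r hr => (hBden r hr).ne'
  set M : ℝ := ∫ r in (0:ℝ)..t, B r with hM
  have hYlb : ∀ p ∈ Set.Icc (0:ℝ) 1, ∀ r ∈ Set.Icc (0:ℝ) t,
      n * S r * min (qP r) (qI r) ≤ Y r p := by
    intro p hp r hr
    rw [hY r p]
    have hS' := hS_pos r (hsub hr)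
    have h1 : min (qP r) (qI r) ≤ (1 - p) * qP r + p * qI r := by
      have e1 : min (qP r) (qI r) ≤ qP r := min_le_left _ _
      have e2 : min (qP r) (qI r) ≤ qI r := min_le_right _ _
      nlinarith [hp.1, hp.2]
    nlinarith [mul_pos hn hS']
  have stepC : ∀ p ∈ Set.Icc (0:ℝ) 1, 0 ≤ H p ∧ H p ≤ M := by
    intro p hp
    constructor
    · apply intervalIntegral.integral_nonneg ht0.le
      intro r hr
      have := hf_pos r (hsub hr); have := hS_pos r (hsub hr)
      have := hY_pos p hp r (hsub hr); have := hY_pos pstar hpmem r (hsub hr)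
      positivity
    · apply intervalIntegral.integral_mono_on ht0.le (hIntH p hp) hIntB
      intro r hr
      have hnum : 0 ≤ f r * S r * ψ r ^ 2 := by
        have := hf_pos r (hsub hr); have := hS_pos r (hsub hr); positivity
      have hlb : n * S r * min (qP r) (qI r) * Y r pstar ^ 2 ≤ Y r p * Y r pstar ^ 2 :=
        mul_le_mul_of_nonneg_right (hYlb p hp r hr)
          (pow_nonneg (hY_pos pstar hpmem r (hsub hr)).le 2)
      exact div_le_div_of_nonneg_left hnum (hBden r hr) hlb
  -- M ≥ 0
  have hM0 : 0 ≤ M := le_trans (stepC pstar hpmem).1 (stepC pstar hpmem).2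
  have hnM : (0:ℝ) < n * M + 1 := by nlinarith
  -- Step D: squeeze
  have hle0 : G pstar ≤ 0 := by
    apply le_of_forall_pos_le_add
    intro ε hε
    set δ : ℝ := min ((1 - pstar) / 2) (ε / (n * M + 1)) with hδ
    have hδpos : 0 < δ := lt_min (by linarith) (div_pos hε hnM)
    have hδ1 : δ ≤ (1 - pstar) / 2 := min_le_left _ _
    have hδ2 : δ ≤ ε / (n * M + 1) := min_le_right _ _
    have hpmem' : pstar + δ ∈ Set.Icc (0:ℝ) 1 := ⟨by linarith, by linarith⟩
    have hA := stepA _ hpmem'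
    have hB' := stepB _ hpmem'
    have hC := stepC _ hpmem'
    have hGle : G (pstar + δ) ≤ 0 := by nlinarith
    have : G pstar = G (pstar + δ) + n * δ * H (pstar + δ) := by
      rw [hB']; ring
    have h1 : n * δ * H (pstar + δ) ≤ n * δ * M :=
      mul_le_mul_of_nonneg_left hC.2 (by positivity)
    have h2 : n * δ * M ≤ ε := by
      have e1 : n * δ * M ≤ δ * (n * M + 1) := by nlinarith
      have e2 : δ * (n * M + 1) ≤ ε :=
        calc δ * (n * M + 1) ≤ (ε / (n * M + 1)) * (n * M + 1) :=
              mul_le_mul_of_nonneg_right hδ2 hnM.le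
          _ = ε := div_mul_cancel₀ ε hnM.ne'
      linarith
    linarith
  have hge0 : 0 ≤ G pstar := by
    apply le_of_forall_pos_le_add
    intro ε hε
    set δ : ℝ := min (pstar / 2) (ε / (n * M + 1)) with hδ
    have hδpos : 0 < δ := lt_min (by linarith) (div_pos hε hnM)
    have hδ1 : δ ≤ pstar / 2 := min_le_left _ _
    have hδ2 : δ ≤ ε / (n * M + 1) := min_le_right _ _
    have hpmem' : pstar - δ ∈ Set.Icc (0:ℝ) 1 := ⟨by linarith, by linarith⟩
    have hA := stepA _ hpmem'
    have hB' := stepB _ hpmem'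
    have hC := stepC _ hpmem'
    have hGge : 0 ≤ G (pstar - δ) := by nlinarith
    have heq : G pstar = G (pstar - δ) - n * δ * H (pstar - δ) := by
      rw [hB']; ring
    have h1 : n * δ * H (pstar - δ) ≤ n * δ * M :=
      mul_le_mul_of_nonneg_left hC.2 (by positivity)
    have h2 : n * δ * M ≤ ε := by
      have e1 : n * δ * M ≤ δ * (n * M + 1) := by nlinarith
      have e2 : δ * (n * M + 1) ≤ ε :=
        calc δ * (n * M + 1) ≤ (ε / (n * M + 1)) * (n * M + 1) :=
              mul_le_mul_of_nonneg_right hδ2 hnM.le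
          _ = ε := div_mul_cancel₀ ε hnM.ne'
      linarith
    linarith
  have hGz : G pstar = 0 := le_antisymm hle0 hge0
  calc ∫ r in (0:ℝ)..t, f r * ψ r / (Y r pstar) ^ 2
      = G pstar := by
        apply intervalIntegral.integral_congr
        intro r hr
        simp only [hG, sq]
    _ = 0 := hGz
end

section
/- (Proposition 1, boundary case.) Fix t ∈ (0, τ]. If for every π ∈ (0, 1) the orthogonality condition fails, i.e. ∫₀^t f(r)·ψ(r)/Y(r, π)² dr ≠ 0, then the minimum of Var(t, ·) over [0, 1] is attained at a boundary point: min(Var(t, 0), Var(t, 1)) ≤ Var(t, π) for every π ∈ [0, 1]. -/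
set_option maxHeartbeats 1000000


/-- Proposition 1, boundary case: Fix t ∈ (0, τ]. If for every π ∈ (0, 1)
the orthogonality condition fails, i.e. ∫₀ᵗ f(r)·ψ(r)/Y(r, π)² dr ≠ 0, then the minimum
of Var(t, ·) over [0, 1] is attained at a boundary point. -/
theorem km_variance_boundary_min
    (τ θ n c : ℝ) (hτ : 0 < τ) (hθ : 0 < θ) (hn : 0 < n) (hc : 0 < c)
    (f S qP qI : ℝ → ℝ)
    (hf_cont : ContinuousOn f (Set.Icc 0 τ)) (hS_cont : ContinuousOn S (Set.Icc 0 τ))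
    (hqP_cont : ContinuousOn qP (Set.Icc 0 τ)) (hqI_cont : ContinuousOn qI (Set.Icc 0 τ))
    (hf_pos : ∀ r ∈ Set.Icc (0:ℝ) τ, 0 < f r) (hS_pos : ∀ r ∈ Set.Icc (0:ℝ) τ, 0 < S r)
    (hqP_pos : ∀ r ∈ Set.Icc (0:ℝ) τ, 0 < qP r) (hqI_pos : ∀ r ∈ Set.Icc (0:ℝ) τ, 0 < qI r)
    (ψ : ℝ → ℝ) (hψ : ∀ r, ψ r = qI r - qP r)
    (Y : ℝ → ℝ → ℝ) (hY : ∀ r p, Y r p = n * S r * ((1 - p) * qP r + p * qI r))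
    (hY_pos : ∀ p ∈ Set.Icc (0:ℝ) 1, ∀ r ∈ Set.Icc (0:ℝ) τ, 0 < Y r p)
    (Var : ℝ → ℝ → ℝ)
    (hVar : ∀ t p, Var t p = S t ^ 2 * ∫ r in (0:ℝ)..t, f r / (Y r p * S r))
    (t : ℝ) (ht : t ∈ Set.Ioc 0 τ)
    (hne : ∀ p ∈ Set.Ioo (0:ℝ) 1, (∫ r in (0:ℝ)..t, f r * ψ r / (Y r p) ^ 2) ≠ 0) :
    ∀ p ∈ Set.Icc (0:ℝ) 1, min (Var t 0) (Var t 1) ≤ Var t p := by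
  obtain ⟨ht0, htτ⟩ := ht
  have hsub : Set.Icc (0:ℝ) t ⊆ Set.Icc 0 τ := Set.Icc_subset_Icc_right htτ
  have hK : IsCompact (Set.Icc (0:ℝ) t) := isCompact_Icc
  have hKne : (Set.Icc (0:ℝ) t).Nonempty := Set.nonempty_Icc.2 ht0.le
  -- continuity of ψ on [0,t]
  have hψ_eq : ψ = fun r => qI r - qP r := funext hψ
  have hψ_cont : ContinuousOn ψ (Set.Icc 0 t) := by
    rw [hψ_eq]; exact (hqI_cont.mono hsub).sub (hqP_cont.mono hsub)
  -- lower bounds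
  obtain ⟨rP, hrP, hminP⟩ := hK.exists_isMinOn hKne (hqP_cont.mono hsub)
  obtain ⟨rI, hrI, hminI⟩ := hK.exists_isMinOn hKne (hqI_cont.mono hsub)
  obtain ⟨rS, hrS, hminS⟩ := hK.exists_isMinOn hKne (hS_cont.mono hsub)
  obtain ⟨rψ, hrψ, hmaxψ⟩ := hK.exists_isMaxOn hKne hψ_cont.abs
  obtain ⟨rf, hrf, hmaxf⟩ := hK.exists_isMaxOn hKne (hf_cont.mono hsub)
  set m : ℝ := min (qP rP) (qI rI) with hm_def
  have hm : 0 < m := lt_min (hqP_pos rP (hsub hrP)) (hqI_pos rI (hsub hrI))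
  have hmP : ∀ r ∈ Set.Icc (0:ℝ) t, m ≤ qP r := fun r hr =>
    le_trans (min_le_left _ _) (hminP hr)
  have hmI : ∀ r ∈ Set.Icc (0:ℝ) t, m ≤ qI r := fun r hr =>
    le_trans (min_le_right _ _) (hminI hr)
  set mS : ℝ := S rS with hmS_def
  have hmS : 0 < mS := hS_pos rS (hsub hrS)
  have hmSle : ∀ r ∈ Set.Icc (0:ℝ) t, mS ≤ S r := fun r hr => hminS hr
  set B : ℝ := max |ψ rψ| 1 with hB_def
  have hB1 : (1:ℝ) ≤ B := le_max_right _ _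
  have hB0 : 0 < B := lt_of_lt_of_le one_pos hB1
  have hBle : ∀ r ∈ Set.Icc (0:ℝ) t, |ψ r| ≤ B := fun r hr =>
    le_trans (hmaxψ hr) (le_max_left _ _)
  set Mf : ℝ := f rf with hMf_def
  have hMf : 0 < Mf := hf_pos rf (hsub hrf)
  have hMfle : ∀ r ∈ Set.Icc (0:ℝ) t, f r ≤ Mf := fun r hr => hmaxf hr
  set δ : ℝ := m / (2 * B) with hδ_def
  have hδ : 0 < δ := by positivity
  have hδB : δ * B = m / 2 := by rw [hδ_def]; field_simp
  -- lower bound for Y on the enlarged parameter interval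
  set ε0 : ℝ := n * mS * (m / 2) with hε0_def
  have hε0 : 0 < ε0 := by positivity
  have hYlb : ∀ x ∈ Set.Icc (-δ) (1 + δ), ∀ r ∈ Set.Icc (0:ℝ) t, ε0 ≤ Y r x := by
    intro x hx r hr
    obtain ⟨hx1, hx2⟩ := hx
    have hP := hmP r hr
    have hI := hmI r hr
    have hS' := hmSle r hr
    have hψB := hBle r hr
    have hq : m / 2 ≤ (1 - x) * qP r + x * qI r := by
      rcases le_or_gt x 0 with h0 | h0
      · have heq : (1 - x) * qP r + x * qI r = qP r + x * ψ r := by rw [hψ]; ring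
        have habs : |x * ψ r| ≤ δ * B := by
          rw [abs_mul]
          exact mul_le_mul (abs_le.2 ⟨hx1, by linarith⟩) hψB (abs_nonneg _) hδ.le
        have hna := neg_abs_le (x * ψ r)
        rw [heq]; linarith
      · rcases le_or_gt x 1 with h1 | h1
        · have h1' : (1 - x) * m ≤ (1 - x) * qP r :=
            mul_le_mul_of_nonneg_left hP (by linarith)
          have h2' : x * m ≤ x * qI r := mul_le_mul_of_nonneg_left hI h0.le
          nlinarith
        · have heq : (1 - x) * qP r + x * qI r = qI r + (x - 1) * ψ r := by rw [hψ]; ring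
          have habs : |(x - 1) * ψ r| ≤ δ * B := by
            rw [abs_mul]
            exact mul_le_mul (abs_le.2 ⟨by linarith, by linarith⟩) hψB (abs_nonneg _) hδ.le
          have hna := neg_abs_le ((x - 1) * ψ r)
          rw [heq]; linarith
    rw [hY]
    have hSr : 0 < S r := hS_pos r (hsub hr)
    calc ε0 = n * mS * (m / 2) := rfl
      _ ≤ n * S r * (m / 2) :=
          mul_le_mul_of_nonneg_right (mul_le_mul_of_nonneg_left hS' hn.le) (by positivity)
      _ ≤ n * S r * ((1 - x) * qP r + x * qI r) :=
          mul_le_mul_of_nonneg_left hq (by positivity)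
  -- continuity of Y in r for each x
  have hYc : ∀ x, ContinuousOn (fun r => Y r x) (Set.Icc 0 t) := by
    intro x
    have : (fun r => Y r x) = fun r => n * S r * ((1 - x) * qP r + x * qI r) :=
      funext fun r => hY r x
    rw [this]
    exact ((continuousOn_const.mul (hS_cont.mono hsub)).mul
      ((continuousOn_const.mul (hqP_cont.mono hsub)).add
        (continuousOn_const.mul (hqI_cont.mono hsub))))
  -- derivative of Y in x for each r
  have hYd : ∀ r x, HasDerivAt (fun x => Y r x) (n * S r * ψ r) x := by
    intro r x
    have heq : (fun x => Y r x) = fun x => n * S r * qP r + x * (n * S r * ψ r) :=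
      funext fun x => by rw [hY, hψ]; ring
    rw [heq]
    simpa using ((hasDerivAt_id x).mul_const (n * S r * ψ r)).const_add (n * S r * qP r)
  set g : ℝ → ℝ := fun p => ∫ r in (0:ℝ)..t, f r / (Y r p * S r) with hg_def
  set F' : ℝ → ℝ → ℝ := fun x r => -(n * (f r * ψ r / (Y r x) ^ 2)) with hF'_def
  have huIoc : Set.uIoc (0:ℝ) t = Set.Ioc 0 t := Set.uIoc_of_le ht0.le
  have huIoc_sub : Set.Ioc (0:ℝ) t ⊆ Set.Icc 0 t := Set.Ioc_subset_Icc_self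
  -- main derivative claim
  have hg' : ∀ p ∈ Set.Ioo (-δ) (1 + δ),
      HasDerivAt g (-(n * ∫ r in (0:ℝ)..t, f r * ψ r / (Y r p) ^ 2)) p := by
    intro p hp
    set ε : ℝ := min (p + δ) (1 + δ - p) with hε_def
    have hεpos : 0 < ε := lt_min (by linarith [hp.1]) (by linarith [hp.2])
    have hball : Metric.ball p ε ⊆ Set.Icc (-δ) (1 + δ) := by
      intro x hx
      rw [Metric.mem_ball, Real.dist_eq, abs_lt] at hx
      have hl : ε ≤ p + δ := by rw [hε_def]; exact min_le_left _ _
      have hr' : ε ≤ 1 + δ - p := by rw [hε_def]; exact min_le_right _ _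
      exact ⟨by linarith [hx.1], by linarith [hx.2]⟩
    have hcF : ∀ x ∈ Set.Icc (-δ) (1 + δ),
        ContinuousOn (fun r => f r / (Y r x * S r)) (Set.Icc 0 t) := by
      intro x hx
      apply (hf_cont.mono hsub).div ((hYc x).mul (hS_cont.mono hsub))
      intro r hr
      have h1 := hYlb x hx r hr
      have h2 := hS_pos r (hsub hr)
      exact ne_of_gt (mul_pos (lt_of_lt_of_le hε0 h1) h2)
    have key := intervalIntegral.hasDerivAt_integral_of_dominated_loc_of_deriv_le
      (F := fun x r => f r / (Y r x * S r)) (F' := F')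
      (bound := fun _ => n * (Mf * B / ε0 ^ 2)) (μ := MeasureTheory.volume)
      (a := 0) (b := t) (x₀ := p) (s := Metric.ball p ε) (Metric.ball_mem_nhds p hεpos)
      ?_ ?_ ?_ ?_ ?_ ?_
    · have h2 := key.2
      have : (∫ r in (0:ℝ)..t, F' p r)
          = -(n * ∫ r in (0:ℝ)..t, f r * ψ r / (Y r p) ^ 2) := by
        rw [hF'_def]
        rw [intervalIntegral.integral_neg, intervalIntegral.integral_const_mul]
      rwa [this] at h2
    · -- eventual measurability
      filter_upwards [Filter.mem_of_superset (Metric.ball_mem_nhds p hεpos) hball] with x hx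
      exact ((hcF x hx).mono (huIoc ▸ huIoc_sub)).aestronglyMeasurable measurableSet_uIoc
    · -- integrability of F p
      exact ((hcF p (hball (Metric.mem_ball_self hεpos))).mono
        (by rw [Set.uIcc_of_le ht0.le])).intervalIntegrable
    · -- measurability of F' p
      have hpmem : p ∈ Set.Icc (-δ) (1 + δ) := hball (Metric.mem_ball_self hεpos)
      have : ContinuousOn (F' p) (Set.Icc 0 t) := by
        rw [hF'_def]
        apply ContinuousOn.neg
        apply ContinuousOn.mul continuousOn_const
        apply ((hf_cont.mono hsub).mul hψ_cont).div ((hYc p).pow 2)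
        intro r hr
        have h1 := hYlb p hpmem r hr
        exact pow_ne_zero 2 (ne_of_gt (lt_of_lt_of_le hε0 h1))
      exact (this.mono (huIoc ▸ huIoc_sub)).aestronglyMeasurable measurableSet_uIoc
    · -- bound
      apply Filter.Eventually.of_forall
      intro r hr x hx
      have hrK : r ∈ Set.Icc (0:ℝ) t := huIoc_sub (huIoc ▸ hr)
      have hxI : x ∈ Set.Icc (-δ) (1 + δ) := hball hx
      have hYx := hYlb x hxI r hrK
      have hfr := hf_pos r (hsub hrK)
      have hYxpos : 0 < Y r x := lt_of_lt_of_le hε0 hYx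
      have hnorm : ‖F' x r‖ = n * (f r * |ψ r| / (Y r x) ^ 2) := by
        rw [hF'_def]
        simp only [Real.norm_eq_abs, abs_neg, abs_mul, abs_div, abs_pow, sq_abs,
          abs_of_pos hn, abs_of_pos hfr, abs_of_pos hYxpos]
      rw [hnorm]
      have hdd : f r * |ψ r| / (Y r x) ^ 2 ≤ Mf * B / ε0 ^ 2 :=
        div_le_div₀ (by positivity)
          (mul_le_mul (hMfle r hrK) (hBle r hrK) (abs_nonneg _) hMf.le)
          (by positivity) (pow_le_pow_left₀ hε0.le hYx 2)
      exact mul_le_mul_of_nonneg_left hdd hn.le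
    · exact intervalIntegrable_const
    · -- differentiability
      apply Filter.Eventually.of_forall
      intro r hr x hx
      have hrK : r ∈ Set.Icc (0:ℝ) t := huIoc_sub (huIoc ▸ hr)
      have hxI : x ∈ Set.Icc (-δ) (1 + δ) := hball hx
      have hYx : 0 < Y r x := lt_of_lt_of_le hε0 (hYlb x hxI r hrK)
      have hSr : 0 < S r := hS_pos r (hsub hrK)
      have hd : HasDerivAt (fun x => Y r x * S r) (n * S r * ψ r * S r) x :=
        (hYd r x).mul_const (S r)
      have hne' : Y r x * S r ≠ 0 := by positivity
      have := (hasDerivAt_const x (f r)).div hd hne'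
      refine this.congr_deriv ?_
      rw [hF'_def]
      field_simp
      ring
  -- continuity of g on [0,1]
  have hIcc_sub : Set.Icc (0:ℝ) 1 ⊆ Set.Ioo (-δ) (1 + δ) := fun x hx =>
    ⟨by linarith [hx.1], by linarith [hx.2]⟩
  have hgc : ContinuousOn g (Set.Icc 0 1) := fun x hx =>
    ((hg' x (hIcc_sub hx)).continuousAt).continuousWithinAt
  -- minimum point
  obtain ⟨p₀, hp₀, hmin⟩ := (isCompact_Icc).exists_isMinOn
    (Set.nonempty_Icc.2 zero_le_one) hgc
  have hp₀_bd : p₀ = 0 ∨ p₀ = 1 := by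
    by_contra hcon
    push_neg at hcon
    have hp₀' : p₀ ∈ Set.Ioo (0:ℝ) 1 :=
      ⟨lt_of_le_of_ne hp₀.1 (Ne.symm hcon.1), lt_of_le_of_ne hp₀.2 hcon.2⟩
    have hloc : IsLocalMin g p₀ :=
      hmin.isLocalMin (Icc_mem_nhds hp₀'.1 hp₀'.2)
    have hzero := hloc.hasDerivAt_eq_zero (hg' p₀ (hIcc_sub hp₀))
    have : (∫ r in (0:ℝ)..t, f r * ψ r / (Y r p₀) ^ 2) = 0 := by
      have h' := neg_eq_zero.mp hzero
      exact (mul_eq_zero.1 h').resolve_left (ne_of_gt hn)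
    exact hne p₀ hp₀' this
  -- conclude
  intro p hp
  have hgle : min (g 0) (g 1) ≤ g p := by
    rcases hp₀_bd with h | h
    · exact le_trans (min_le_left _ _) (h ▸ hmin hp)
    · exact le_trans (min_le_right _ _) (h ▸ hmin hp)
  have hSt : 0 < S t := hS_pos t ⟨ht0.le, htτ⟩
  have hSt2 : 0 < S t ^ 2 := by positivity
  rw [hVar t p, hVar t 0, hVar t 1]
  have h0 : (∫ r in (0:ℝ)..t, f r / (Y r 0 * S r)) = g 0 := rfl
  have h1 : (∫ r in (0:ℝ)..t, f r / (Y r 1 * S r)) = g 1 := rfl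
  have hpp : (∫ r in (0:ℝ)..t, f r / (Y r p * S r)) = g p := rfl
  rw [h0, h1, hpp]
  rw [← mul_min_of_nonneg _ _ hSt2.le]
  exact mul_le_mul_of_nonneg_left hgle hSt2.le
end

section
/- (Necessary condition for an interior optimum.) Fix t ∈ (0, τ]. If π* ∈ (0, 1) satisfies Var(t, π*) ≤ Var(t, π) for all π ∈ [0, 1], then there exists r ∈ (0, t) with ψ(r) = 0 (i.e., the at-risk probabilities of incident and prevalent patients must cross somewhere in (0, t)). -/
/-- If `g` is continuous on `[0,t]` and positive on `(0,t)`, then it is nonnegative on `[0,t]`. -/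
lemma km_aux_nonneg_of_pos_Ioo {g : ℝ → ℝ} {t : ℝ} (ht : 0 < t)
    (hg : ContinuousOn g (Set.Icc 0 t)) (hpos : ∀ r ∈ Set.Ioo (0:ℝ) t, 0 < g r) :
    ∀ r ∈ Set.Icc (0:ℝ) t, 0 ≤ g r := by
  intro r hr
  have hcl : r ∈ closure (Set.Ioo (0:ℝ) t) := by
    rw [closure_Ioo ht.ne]; exact hr
  have hne : (nhdsWithin r (Set.Ioo (0:ℝ) t)).NeBot :=
    mem_closure_iff_nhdsWithin_neBot.1 hcl
  have htd : Filter.Tendsto g (nhdsWithin r (Set.Ioo (0:ℝ) t)) (nhds (g r)) :=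
    (hg r hr).mono Set.Ioo_subset_Icc_self
  exact ge_of_tendsto htd (eventually_mem_nhdsWithin.mono fun x hx => (hpos x hx).le)

/-- Key lemma: if `qI - qP` is positive at `t/2` and never zero on `(0,t)`, then moving
from an interior `pstar` to `1` strictly decreases the variance, contradicting minimality. -/
lemma km_aux_key (n t pstar : ℝ) (hn : 0 < n) (ht : 0 < t)
    (hpstar : pstar ∈ Set.Ioo (0:ℝ) 1)
    (f S qP qI : ℝ → ℝ)
    (hf_cont : ContinuousOn f (Set.Icc 0 t)) (hS_cont : ContinuousOn S (Set.Icc 0 t))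
    (hqP_cont : ContinuousOn qP (Set.Icc 0 t)) (hqI_cont : ContinuousOn qI (Set.Icc 0 t))
    (hf_pos : ∀ r ∈ Set.Icc (0:ℝ) t, 0 < f r) (hS_pos : ∀ r ∈ Set.Icc (0:ℝ) t, 0 < S r)
    (hqP_pos : ∀ r ∈ Set.Icc (0:ℝ) t, 0 < qP r) (hqI_pos : ∀ r ∈ Set.Icc (0:ℝ) t, 0 < qI r)
    (hmid : 0 < qI (t/2) - qP (t/2))
    (hno : ∀ r ∈ Set.Ioo (0:ℝ) t, qI r - qP r ≠ 0)
    (Y : ℝ → ℝ → ℝ) (hY : ∀ r p, Y r p = n * S r * ((1 - p) * qP r + p * qI r))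
    (Var : ℝ → ℝ → ℝ)
    (hVar : ∀ s p, Var s p = S s ^ 2 * ∫ r in (0:ℝ)..s, f r / (Y r p * S r))
    (hmin : Var t pstar ≤ Var t 1) : False := by
  obtain ⟨hp0, hp1⟩ := hpstar
  have hmidmem : t / 2 ∈ Set.Ioo (0:ℝ) t := ⟨by linarith, by linarith⟩
  -- sign constancy by IVT
  have hψpos : ∀ r ∈ Set.Ioo (0:ℝ) t, 0 < qI r - qP r := by
    intro r hr
    by_contra h
    push_neg at h
    have hlt : qI r - qP r < 0 := lt_of_le_of_ne h (hno r hr)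
    have hsub : Set.uIcc r (t/2) ⊆ Set.Ioo (0:ℝ) t :=
      Set.ordConnected_Ioo.uIcc_subset hr hmidmem
    have hsub' : Set.uIcc r (t/2) ⊆ Set.Icc (0:ℝ) t :=
      hsub.trans Set.Ioo_subset_Icc_self
    have hcont : ContinuousOn (fun x => qI x - qP x) (Set.uIcc r (t/2)) :=
      (hqI_cont.mono hsub').sub (hqP_cont.mono hsub')
    have h0 : (0:ℝ) ∈ Set.uIcc (qI r - qP r) (qI (t/2) - qP (t/2)) := by
      rw [Set.mem_uIcc]; left; exact ⟨hlt.le, hmid.le⟩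
    obtain ⟨x, hx, hx0⟩ := intermediate_value_uIcc hcont h0
    exact hno x (hsub hx) hx0
  have hψnn : ∀ r ∈ Set.Icc (0:ℝ) t, 0 ≤ qI r - qP r :=
    km_aux_nonneg_of_pos_Ioo ht ((hqI_cont.sub hqP_cont)) hψpos
  -- pointwise comparison of integrands
  have hle : ∀ r ∈ Set.Ioc (0:ℝ) t,
      f r / (Y r 1 * S r) ≤ f r / (Y r pstar * S r) := by
    intro r hr
    have hr' : r ∈ Set.Icc (0:ℝ) t := Set.Ioc_subset_Icc_self hr
    have hS := hS_pos r hr'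
    have hqP := hqP_pos r hr'
    have hqI := hqI_pos r hr'
    have hψ := hψnn r hr'
    have hw : 0 < (1 - pstar) * qP r + pstar * qI r :=
      add_pos (mul_pos (by linarith) hqP) (mul_pos hp0 hqI)
    have hYp : 0 < Y r pstar := by rw [hY]; exact mul_pos (mul_pos hn hS) hw
    have hYle : Y r pstar ≤ Y r 1 := by
      rw [hY, hY]
      nlinarith [mul_nonneg (mul_nonneg (mul_nonneg hn.le hS.le)
        (by linarith : (0:ℝ) ≤ 1 - pstar)) hψ]
    exact div_le_div_of_nonneg_left (hf_pos r hr').le (mul_pos hYp hS)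
      (mul_le_mul_of_nonneg_right hYle hS.le)
  have hlt : f (t/2) / (Y (t/2) 1 * S (t/2)) < f (t/2) / (Y (t/2) pstar * S (t/2)) := by
    have hr' : t/2 ∈ Set.Icc (0:ℝ) t := Set.Ioo_subset_Icc_self hmidmem
    have hS := hS_pos _ hr'
    have hqP := hqP_pos _ hr'
    have hqI := hqI_pos _ hr'
    have hw : 0 < (1 - pstar) * qP (t/2) + pstar * qI (t/2) :=
      add_pos (mul_pos (by linarith) hqP) (mul_pos hp0 hqI)
    have hYp : 0 < Y (t/2) pstar := by rw [hY]; exact mul_pos (mul_pos hn hS) hw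
    have hYlt : Y (t/2) pstar < Y (t/2) 1 := by
      rw [hY, hY]
      nlinarith [mul_pos (mul_pos (mul_pos hn hS) (by linarith : (0:ℝ) < 1 - pstar)) hmid]
    have hfp := hf_pos _ hr'
    apply div_lt_div_of_pos_left hfp (mul_pos hYp hS)
    exact mul_lt_mul_of_pos_right hYlt hS
  -- continuity of integrands
  have hcontp : ∀ p ∈ Set.Icc (0:ℝ) 1,
      ContinuousOn (fun r => f r / (Y r p * S r)) (Set.Icc 0 t) := by
    intro p hp
    have heq : (fun r => f r / (Y r p * S r)) =
        fun r => f r / ((n * S r * ((1 - p) * qP r + p * qI r)) * S r) := by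
      funext r; rw [hY]
    rw [heq]
    apply hf_cont.div
    · exact (((continuousOn_const.mul hS_cont).mul
        ((continuousOn_const.mul hqP_cont).add (continuousOn_const.mul hqI_cont))).mul hS_cont)
    · intro r hr
      have hS := hS_pos r hr
      have hqP := hqP_pos r hr
      have hqI := hqI_pos r hr
      obtain ⟨hq0, hq1⟩ := hp
      have hw : 0 < (1 - p) * qP r + p * qI r := by
        have h1 : 0 ≤ (1 - p) * (qP r - min (qP r) (qI r)) :=
          mul_nonneg (by linarith) (sub_nonneg.2 (min_le_left _ _))
        have h2 : 0 ≤ p * (qI r - min (qP r) (qI r)) :=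
          mul_nonneg hq0 (sub_nonneg.2 (min_le_right _ _))
        nlinarith [lt_min hqP hqI]
      have := mul_pos (mul_pos (mul_pos hn hS) hw) hS
      intro hz
      rw [hz] at this
      exact lt_irrefl 0 this
  -- strict integral inequality
  have hint : (∫ r in (0:ℝ)..t, f r / (Y r 1 * S r)) <
      ∫ r in (0:ℝ)..t, f r / (Y r pstar * S r) :=
    intervalIntegral.integral_lt_integral_of_continuousOn_of_le_of_exists_lt ht
      (hcontp 1 (by norm_num)) (hcontp pstar ⟨hp0.le, hp1.le⟩) hle
      ⟨t/2, Set.Ioo_subset_Icc_self hmidmem, hlt⟩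
  have hSt : 0 < S t ^ 2 := by
    have := hS_pos t ⟨ht.le, le_refl t⟩; positivity
  have : Var t 1 < Var t pstar := by
    rw [hVar, hVar]
    exact mul_lt_mul_of_pos_left hint hSt
  linarith

/-- Necessary condition for an interior optimum: Fix t ∈ (0, τ]. If
π* ∈ (0, 1) minimizes Var(t, ·) over [0, 1], then there exists r ∈ (0, t) with ψ(r) = 0. -/
theorem km_variance_interior_min_psi_crosses_zero
    (τ θ n c : ℝ) (hτ : 0 < τ) (hθ : 0 < θ) (hn : 0 < n) (hc : 0 < c)
    (f S qP qI : ℝ → ℝ)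
    (hf_cont : ContinuousOn f (Set.Icc 0 τ)) (hS_cont : ContinuousOn S (Set.Icc 0 τ))
    (hqP_cont : ContinuousOn qP (Set.Icc 0 τ)) (hqI_cont : ContinuousOn qI (Set.Icc 0 τ))
    (hf_pos : ∀ r ∈ Set.Icc (0:ℝ) τ, 0 < f r) (hS_pos : ∀ r ∈ Set.Icc (0:ℝ) τ, 0 < S r)
    (hqP_pos : ∀ r ∈ Set.Icc (0:ℝ) τ, 0 < qP r) (hqI_pos : ∀ r ∈ Set.Icc (0:ℝ) τ, 0 < qI r)
    (ψ : ℝ → ℝ) (hψ : ∀ r, ψ r = qI r - qP r)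
    (Y : ℝ → ℝ → ℝ) (hY : ∀ r p, Y r p = n * S r * ((1 - p) * qP r + p * qI r))
    (hY_pos : ∀ p ∈ Set.Icc (0:ℝ) 1, ∀ r ∈ Set.Icc (0:ℝ) τ, 0 < Y r p)
    (Var : ℝ → ℝ → ℝ)
    (hVar : ∀ t p, Var t p = S t ^ 2 * ∫ r in (0:ℝ)..t, f r / (Y r p * S r))
    (t : ℝ) (ht : t ∈ Set.Ioc 0 τ)
    (pstar : ℝ) (hpstar : pstar ∈ Set.Ioo (0:ℝ) 1)
    (hmin : ∀ p ∈ Set.Icc (0:ℝ) 1, Var t pstar ≤ Var t p) :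
    ∃ r ∈ Set.Ioo (0:ℝ) t, ψ r = 0 := by
  obtain ⟨ht0, htτ⟩ := ht
  by_contra h
  push_neg at h
  have hno : ∀ r ∈ Set.Ioo (0:ℝ) t, qI r - qP r ≠ 0 := by
    intro r hr; rw [← hψ r]; exact h r hr
  have hsub : Set.Icc (0:ℝ) t ⊆ Set.Icc (0:ℝ) τ := Set.Icc_subset_Icc le_rfl htτ
  have hmidmem : t / 2 ∈ Set.Ioo (0:ℝ) t := ⟨by linarith, by linarith⟩
  rcases lt_or_gt_of_ne (hno _ hmidmem) with hneg | hpos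
  · -- ψ(t/2) < 0 : apply key lemma with roles of qP, qI swapped
    refine km_aux_key n t (1 - pstar) hn ht0
      ⟨by linarith [hpstar.2], by linarith [hpstar.1]⟩ f S qI qP
      (hf_cont.mono hsub) (hS_cont.mono hsub) (hqI_cont.mono hsub) (hqP_cont.mono hsub)
      (fun r hr => hf_pos r (hsub hr)) (fun r hr => hS_pos r (hsub hr))
      (fun r hr => hqI_pos r (hsub hr)) (fun r hr => hqP_pos r (hsub hr))
      (by linarith)
      (fun r hr hz => hno r hr (by linarith))
      (fun r p => Y r (1 - p)) (fun r p => by show Y r (1 - p) = _; rw [hY]; ring)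
      (fun s p => Var s (1 - p)) (fun s p => hVar s (1 - p)) ?_
    have := hmin 0 (by norm_num)
    simpa using this
  · -- ψ(t/2) > 0
    refine km_aux_key n t pstar hn ht0 hpstar f S qP qI
      (hf_cont.mono hsub) (hS_cont.mono hsub) (hqP_cont.mono hsub) (hqI_cont.mono hsub)
      (fun r hr => hf_pos r (hsub hr)) (fun r hr => hS_pos r (hsub hr))
      (fun r hr => hqP_pos r (hsub hr)) (fun r hr => hqI_pos r (hsub hr))
      hpos hno Y hY Var hVar (hmin 1 (by norm_num))
end

section
/- Fix t ∈ (0, τ]. If ψ(r) > 0 for every r ∈ (0, t), then the function π ↦ Var(t, π) is strictly decreasing on [0, 1]; in particular Var(t, 1) < Var(t, π) for every π ∈ [0, 1), so the all-incident cohort π = 1 uniquely minimizes the variance. -/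
/-- Fix t ∈ (0, τ]. If ψ(r) > 0 for every r ∈ (0, t), then π ↦ Var(t, π) is
strictly decreasing on [0, 1]; in particular Var(t, 1) < Var(t, π) for every π ∈ [0, 1),
so the all-incident cohort π = 1 uniquely minimizes the variance. -/
theorem km_variance_strictAntiOn_of_psi_pos
    (τ θ n c : ℝ) (hτ : 0 < τ) (hθ : 0 < θ) (hn : 0 < n) (hc : 0 < c)
    (f S qP qI : ℝ → ℝ)
    (hf_cont : ContinuousOn f (Set.Icc 0 τ)) (hS_cont : ContinuousOn S (Set.Icc 0 τ))
    (hqP_cont : ContinuousOn qP (Set.Icc 0 τ)) (hqI_cont : ContinuousOn qI (Set.Icc 0 τ))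
    (hf_pos : ∀ r ∈ Set.Icc (0:ℝ) τ, 0 < f r) (hS_pos : ∀ r ∈ Set.Icc (0:ℝ) τ, 0 < S r)
    (hqP_pos : ∀ r ∈ Set.Icc (0:ℝ) τ, 0 < qP r) (hqI_pos : ∀ r ∈ Set.Icc (0:ℝ) τ, 0 < qI r)
    (ψ : ℝ → ℝ) (hψ : ∀ r, ψ r = qI r - qP r)
    (Y : ℝ → ℝ → ℝ) (hY : ∀ r p, Y r p = n * S r * ((1 - p) * qP r + p * qI r))
    (hY_pos : ∀ p ∈ Set.Icc (0:ℝ) 1, ∀ r ∈ Set.Icc (0:ℝ) τ, 0 < Y r p)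
    (Var : ℝ → ℝ → ℝ)
    (hVar : ∀ t p, Var t p = S t ^ 2 * ∫ r in (0:ℝ)..t, f r / (Y r p * S r))
    (t : ℝ) (ht : t ∈ Set.Ioc 0 τ)
    (hψ_pos : ∀ r ∈ Set.Ioo (0:ℝ) t, 0 < ψ r) :
    StrictAntiOn (fun p => Var t p) (Set.Icc (0:ℝ) 1) ∧
    ∀ p ∈ Set.Ico (0:ℝ) 1, Var t 1 < Var t p := by
  obtain ⟨ht0, htτ⟩ := ht
  have hsub : Set.Icc (0:ℝ) t ⊆ Set.Icc 0 τ := Set.Icc_subset_Icc le_rfl htτ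
  -- continuity of the integrand for each p ∈ [0,1]
  have hcont : ∀ p ∈ Set.Icc (0:ℝ) 1,
      ContinuousOn (fun r => f r / (Y r p * S r)) (Set.Icc 0 t) := by
    intro p hp
    have hYfun : (fun r => Y r p) = fun r => n * S r * ((1 - p) * qP r + p * qI r) :=
      funext fun r => hY r p
    apply ContinuousOn.div (hf_cont.mono hsub)
    · have heq : (fun r => Y r p * S r)
          = fun r => (n * S r * ((1 - p) * qP r + p * qI r)) * S r :=
        funext fun r => by rw [hY]
      rw [heq]
      exact (((continuousOn_const.mul (hS_cont.mono hsub)).mul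
        ((continuousOn_const.mul (hqP_cont.mono hsub)).add
          (continuousOn_const.mul (hqI_cont.mono hsub)))).mul (hS_cont.mono hsub))
    · intro r hr
      exact (mul_pos (hY_pos p hp r (hsub hr)) (hS_pos r (hsub hr))).ne'
  have hint : ∀ p ∈ Set.Icc (0:ℝ) 1,
      IntervalIntegrable (fun r => f r / (Y r p * S r)) MeasureTheory.volume 0 t := by
    intro p hp
    exact ((hcont p hp).mono (by rw [Set.uIcc_of_le ht0.le])).intervalIntegrable
  -- main monotonicity step
  have key : ∀ p₁ ∈ Set.Icc (0:ℝ) 1, ∀ p₂ ∈ Set.Icc (0:ℝ) 1, p₁ < p₂ →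
      Var t p₂ < Var t p₁ := by
    intro p₁ hp₁ p₂ hp₂ hlt
    have hpos : 0 < ∫ r in (0:ℝ)..t,
        (f r / (Y r p₁ * S r) - f r / (Y r p₂ * S r)) := by
      apply intervalIntegral.intervalIntegral_pos_of_pos_on
        ((hint p₁ hp₁).sub (hint p₂ hp₂))
      · intro r hr
        have hrτ : r ∈ Set.Icc (0:ℝ) τ := hsub ⟨hr.1.le, hr.2.le⟩
        have hS := hS_pos r hrτ
        have hY1 := hY_pos p₁ hp₁ r hrτ
        have hY2 := hY_pos p₂ hp₂ r hrτ
        have hYlt : Y r p₁ < Y r p₂ := by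
          have hψr := hψ_pos r hr
          rw [hψ] at hψr
          rw [hY, hY]
          have := mul_pos (mul_pos hn hS) (mul_pos (sub_pos.mpr hlt) hψr)
          nlinarith
        have : f r / (Y r p₂ * S r) < f r / (Y r p₁ * S r) := by
          apply div_lt_div_of_pos_left (hf_pos r hrτ) (mul_pos hY1 hS)
          exact mul_lt_mul_of_pos_right hYlt hS
        linarith
      · exact ht0
    rw [intervalIntegral.integral_sub (hint p₁ hp₁) (hint p₂ hp₂)] at hpos
    have hSt := hS_pos t ⟨ht0.le, htτ⟩
    rw [hVar, hVar]
    have h2 : (0:ℝ) < S t ^ 2 := by positivity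
    nlinarith [hpos]
  constructor
  · intro p₁ hp₁ p₂ hp₂ hlt
    exact key p₁ hp₁ p₂ hp₂ hlt
  · intro p hp
    exact key p ⟨hp.1, hp.2.le⟩ 1 ⟨zero_le_one, le_rfl⟩ hp.2
end

section
/- For every π ∈ (0, 1), the weighted total-variance objective K(π) = ∫₀^τ W(t)·Var(t, π) dt is differentiable at π with derivative equal to −n·∫₀^τ W(t)·V(t, π) dt, where V(t, π) = S(t)²·∫₀^t f(r)·ψ(r)/Y(r, π)² dr. -/
open MeasureTheory Set intervalIntegral

/-- For every π ∈ (0, 1), the weighted total-variance objective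
K(π) = ∫₀^τ W(t)·Var(t, π) dt is differentiable at π with derivative equal to
−n·∫₀^τ W(t)·V(t, π) dt, where V(t, π) = S(t)²·∫₀ᵗ f(r)·ψ(r)/Y(r, π)² dr. -/
theorem weighted_objective_hasDerivAt
    (τ θ n c : ℝ) (hτ : 0 < τ) (hθ : 0 < θ) (hn : 0 < n) (hc : 0 < c)
    (f S qP qI : ℝ → ℝ)
    (hf_cont : ContinuousOn f (Set.Icc 0 τ)) (hS_cont : ContinuousOn S (Set.Icc 0 τ))
    (hqP_cont : ContinuousOn qP (Set.Icc 0 τ)) (hqI_cont : ContinuousOn qI (Set.Icc 0 τ))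
    (hf_pos : ∀ r ∈ Set.Icc (0:ℝ) τ, 0 < f r) (hS_pos : ∀ r ∈ Set.Icc (0:ℝ) τ, 0 < S r)
    (hqP_pos : ∀ r ∈ Set.Icc (0:ℝ) τ, 0 < qP r) (hqI_pos : ∀ r ∈ Set.Icc (0:ℝ) τ, 0 < qI r)
    (ψ : ℝ → ℝ) (hψ : ∀ r, ψ r = qI r - qP r)
    (Y : ℝ → ℝ → ℝ) (hY : ∀ r p, Y r p = n * S r * ((1 - p) * qP r + p * qI r))
    (hY_pos : ∀ p ∈ Set.Icc (0:ℝ) 1, ∀ r ∈ Set.Icc (0:ℝ) τ, 0 < Y r p)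
    (Var : ℝ → ℝ → ℝ)
    (hVar : ∀ t p, Var t p = S t ^ 2 * ∫ r in (0:ℝ)..t, f r / (Y r p * S r))
(W : ℝ → ℝ) (hW_cont : ContinuousOn W (Set.Icc 0 τ))
    (hW_pos : ∀ t ∈ Set.Icc (0:ℝ) τ, 0 < W t)
    (hW_int : (∫ t in (0:ℝ)..τ, W t) = 1)
    (V : ℝ → ℝ → ℝ)
    (hV : ∀ t p, V t p = S t ^ 2 * ∫ r in (0:ℝ)..t, f r * ψ r / (Y r p) ^ 2)
    (K : ℝ → ℝ) (hK : ∀ p, K p = ∫ t in (0:ℝ)..τ, W t * Var t p)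
    (p : ℝ) (hp : p ∈ Set.Ioo (0:ℝ) 1) :
    HasDerivAt K (-(n * ∫ t in (0:ℝ)..τ, W t * V t p)) p := by
  obtain ⟨hp0, hp1⟩ := hp
  have hpIcc : p ∈ Set.Icc (0:ℝ) 1 := ⟨hp0.le, hp1.le⟩
  have h0τ : (0:ℝ) ∈ Set.Icc (0:ℝ) τ := ⟨le_rfl, hτ.le⟩
  -- ψ continuity
  have hψ_cont : ContinuousOn ψ (Set.Icc 0 τ) := by
    have h : ψ = fun r => qI r - qP r := funext hψ
    rw [h]; exact hqI_cont.sub hqP_cont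
  -- Y continuity in r
  have hY_cont : ∀ x : ℝ, ContinuousOn (fun r => Y r x) (Set.Icc 0 τ) := by
    intro x
    have h : (fun r => Y r x) = fun r => n * S r * ((1 - x) * qP r + x * qI r) :=
      funext fun r => hY r x
    rw [h]
    exact (continuousOn_const.mul hS_cont).mul
      ((continuousOn_const.mul hqP_cont).add (continuousOn_const.mul hqI_cont))
  -- upper bounds
  obtain ⟨Mf, hMf⟩ := isCompact_Icc.exists_bound_of_continuousOn hf_cont
  obtain ⟨Mψ, hMψ⟩ := isCompact_Icc.exists_bound_of_continuousOn hψ_cont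
  obtain ⟨MS, hMS⟩ := isCompact_Icc.exists_bound_of_continuousOn hS_cont
  obtain ⟨MW, hMW⟩ := isCompact_Icc.exists_bound_of_continuousOn hW_cont
  have hMf0 : 0 ≤ Mf := le_trans (norm_nonneg _) (hMf 0 h0τ)
  have hMψ0 : 0 ≤ Mψ := le_trans (norm_nonneg _) (hMψ 0 h0τ)
  have hMS0 : 0 ≤ MS := le_trans (norm_nonneg _) (hMS 0 h0τ)
  have hMW0 : 0 ≤ MW := le_trans (norm_nonneg _) (hMW 0 h0τ)
  -- lower bounds
  obtain ⟨rS, hrS, hrSmin⟩ :=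
    isCompact_Icc.exists_isMinOn (Set.nonempty_Icc.mpr hτ.le) hS_cont
  set mS := S rS with hmSdef
  have hmS_pos : 0 < mS := hS_pos rS hrS
  have hmS_le : ∀ r ∈ Set.Icc (0:ℝ) τ, mS ≤ S r := fun r hr => isMinOn_iff.mp hrSmin r hr
  obtain ⟨rq, hrq, hrqmin⟩ :=
    isCompact_Icc.exists_isMinOn (Set.nonempty_Icc.mpr hτ.le) (hqP_cont.inf hqI_cont)
  set mq := min (qP rq) (qI rq) with hmqdef
  have hmq_pos : 0 < mq := lt_min (hqP_pos rq hrq) (hqI_pos rq hrq)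
  have hmq_le : ∀ r ∈ Set.Icc (0:ℝ) τ, mq ≤ min (qP r) (qI r) :=
    fun r hr => isMinOn_iff.mp hrqmin r hr
  set m := n * mS * mq with hmdef
  have hm_pos : 0 < m := mul_pos (mul_pos hn hmS_pos) hmq_pos
  have hY_lb : ∀ x ∈ Set.Icc (0:ℝ) 1, ∀ r ∈ Set.Icc (0:ℝ) τ, m ≤ Y r x := by
    intro x hx r hr
    have h1 : mS ≤ S r := hmS_le r hr
    have h2 : mq ≤ min (qP r) (qI r) := hmq_le r hr
    have h3 : min (qP r) (qI r) ≤ qP r := min_le_left _ _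
    have h4 : min (qP r) (qI r) ≤ qI r := min_le_right _ _
    have hA : mq ≤ (1 - x) * qP r + x * qI r := by
      nlinarith [mul_nonneg (sub_nonneg.mpr hx.2) (sub_nonneg.mpr (h2.trans h3)),
        mul_nonneg hx.1 (sub_nonneg.mpr (h2.trans h4))]
    have hmul : mS * mq ≤ S r * ((1 - x) * qP r + x * qI r) :=
      mul_le_mul h1 hA hmq_pos.le (hS_pos r hr).le
    rw [hY]
    nlinarith [mul_le_mul_of_nonneg_left hmul hn.le]
  -- continuity of integrands
  have hcontg : ∀ x ∈ Set.Icc (0:ℝ) 1,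
      ContinuousOn (fun r => f r / (Y r x * S r)) (Set.Icc 0 τ) := fun x hx =>
    hf_cont.div ((hY_cont x).mul hS_cont)
      (fun r hr => (mul_pos (hY_pos x hx r hr) (hS_pos r hr)).ne')
  have hcontg' : ∀ x ∈ Set.Icc (0:ℝ) 1,
      ContinuousOn (fun r => f r * ψ r / (Y r x) ^ 2) (Set.Icc 0 τ) := fun x hx =>
    (hf_cont.mul hψ_cont).div ((hY_cont x).pow 2)
      (fun r hr => (pow_pos (hY_pos x hx r hr) 2).ne')
  -- continuity of Var and V in t
  have hVar_cont : ∀ x ∈ Set.Icc (0:ℝ) 1, ContinuousOn (fun t => Var t x) (Set.Icc 0 τ) := by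
    intro x hx
    have heq : (fun t => Var t x)
        = fun t => S t ^ 2 * ∫ r in (0:ℝ)..t, f r / (Y r x * S r) := funext fun t => hVar t x
    rw [heq]
    apply (hS_cont.pow 2).mul
    have hint : IntegrableOn (fun r => f r / (Y r x * S r)) (Set.uIcc 0 τ) volume := by
      rw [Set.uIcc_of_le hτ.le]
      exact (hcontg x hx).integrableOn_compact isCompact_Icc
    exact (intervalIntegral.continuousOn_primitive_interval hint).mono
      (by rw [Set.uIcc_of_le hτ.le])
  have hVp_cont : ContinuousOn (fun t => V t p) (Set.Icc 0 τ) := by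
    have heq : (fun t => V t p)
        = fun t => S t ^ 2 * ∫ r in (0:ℝ)..t, f r * ψ r / (Y r p) ^ 2 := funext fun t => hV t p
    rw [heq]
    apply (hS_cont.pow 2).mul
    have hint : IntegrableOn (fun r => f r * ψ r / (Y r p) ^ 2) (Set.uIcc 0 τ) volume := by
      rw [Set.uIcc_of_le hτ.le]
      exact (hcontg' p hpIcc).integrableOn_compact isCompact_Icc
    exact (intervalIntegral.continuousOn_primitive_interval hint).mono
      (by rw [Set.uIcc_of_le hτ.le])
  -- pointwise bound for V
  have hVb : ∀ x ∈ Set.Icc (0:ℝ) 1, ∀ t ∈ Set.Icc (0:ℝ) τ,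
      |V t x| ≤ MS ^ 2 * (Mf * Mψ / m ^ 2 * τ) := by
    intro x hx t ht
    rw [hV, abs_mul]
    have hI : ‖∫ r in (0:ℝ)..t, f r * ψ r / (Y r x) ^ 2‖ ≤ Mf * Mψ / m ^ 2 * |t - 0| := by
      apply intervalIntegral.norm_integral_le_of_norm_le_const
      intro r hr
      have hr' : r ∈ Set.Icc (0:ℝ) τ := by
        rw [Set.uIoc_of_le ht.1] at hr; exact ⟨hr.1.le, hr.2.trans ht.2⟩
      have hfr := hMf r hr'
      have hψr := hMψ r hr'
      rw [Real.norm_eq_abs] at hfr hψr ⊢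
      rw [abs_div, abs_mul]
      have hY2 : m ^ 2 ≤ |(Y r x) ^ 2| := by
        rw [abs_of_nonneg (sq_nonneg _)]
        exact pow_le_pow_left₀ hm_pos.le (hY_lb x hx r hr') 2
      exact div_le_div₀ (mul_nonneg hMf0 hMψ0)
        (mul_le_mul hfr hψr (abs_nonneg _) hMf0) (pow_pos hm_pos 2) hY2
    rw [Real.norm_eq_abs] at hI
    have ht' : |t - 0| ≤ τ := by rw [sub_zero, abs_of_nonneg ht.1]; exact ht.2
    have hS2 : |S t ^ 2| ≤ MS ^ 2 := by
      rw [abs_pow]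
      have := hMS t ht
      rw [Real.norm_eq_abs] at this
      exact pow_le_pow_left₀ (abs_nonneg _) this 2
    have hC : 0 ≤ Mf * Mψ / m ^ 2 := by
      apply div_nonneg (mul_nonneg hMf0 hMψ0) (pow_pos hm_pos 2).le
    exact mul_le_mul hS2 (hI.trans (mul_le_mul_of_nonneg_left ht' hC)) (abs_nonneg _)
      (sq_nonneg MS)
  -- key: derivative of Var in the parameter
  have key : ∀ q ∈ Set.Ioo (0:ℝ) 1, ∀ t ∈ Set.Icc (0:ℝ) τ,
      HasDerivAt (fun x => Var t x) (-(n * V t q)) q := by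
    intro q hq t ht
    have hε_pos : 0 < min q (1 - q) := lt_min hq.1 (by linarith [hq.2])
    have hball : Metric.ball q (min q (1 - q)) ⊆ Set.Icc (0:ℝ) 1 := by
      intro x hx
      rw [Metric.mem_ball, Real.dist_eq] at hx
      obtain ⟨h1, h2⟩ := abs_lt.mp hx
      have hm1 := min_le_left q (1 - q)
      have hm2 := min_le_right q (1 - q)
      constructor <;> linarith
    have hsub : Set.uIoc (0:ℝ) t ⊆ Set.Icc (0:ℝ) τ := by
      rw [Set.uIoc_of_le ht.1]
      exact fun r hr => ⟨hr.1.le, hr.2.trans ht.2⟩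
    have hsub' : Set.uIcc (0:ℝ) t ⊆ Set.Icc (0:ℝ) τ := by
      rw [Set.uIcc_of_le ht.1]
      exact Set.Icc_subset_Icc le_rfl ht.2
    have hqIcc : q ∈ Set.Icc (0:ℝ) 1 := ⟨hq.1.le, hq.2.le⟩
    have main := intervalIntegral.hasDerivAt_integral_of_dominated_loc_of_deriv_le
      (F := fun x r => f r / (Y r x * S r))
      (F' := fun x r => -n * (f r * ψ r / (Y r x) ^ 2))
      (bound := fun _ => n * (Mf * Mψ / m ^ 2))
      (μ := volume) (a := 0) (b := t) (x₀ := q) (Metric.ball_mem_nhds q hε_pos)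
      (Filter.eventually_of_mem (Metric.ball_mem_nhds q hε_pos) (fun x hx =>
        ((hcontg x (hball hx)).mono hsub).aestronglyMeasurable measurableSet_uIoc))
      (((hcontg q hqIcc).mono hsub').intervalIntegrable)
      ((((continuousOn_const.mul (hcontg' q hqIcc)).mono hsub)).aestronglyMeasurable
        measurableSet_uIoc)
      (Filter.Eventually.of_forall (fun r hr x hx => by
        have hr' : r ∈ Set.Icc (0:ℝ) τ := hsub hr
        have hx' : x ∈ Set.Icc (0:ℝ) 1 := hball hx
        have hfr := hMf r hr'
        have hψr := hMψ r hr'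
        rw [Real.norm_eq_abs] at hfr hψr ⊢
        rw [abs_mul, abs_neg, abs_of_pos hn, abs_div, abs_mul]
        have hY2 : m ^ 2 ≤ |(Y r x) ^ 2| := by
          rw [abs_of_nonneg (sq_nonneg _)]
          exact pow_le_pow_left₀ hm_pos.le (hY_lb x hx' r hr') 2
        exact mul_le_mul_of_nonneg_left
          (div_le_div₀ (mul_nonneg hMf0 hMψ0)
            (mul_le_mul hfr hψr (abs_nonneg _) hMf0) (pow_pos hm_pos 2) hY2) hn.le))
      intervalIntegrable_const
      (Filter.Eventually.of_forall (fun r hr x hx => by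
        have hr' : r ∈ Set.Icc (0:ℝ) τ := hsub hr
        have hx' : x ∈ Set.Icc (0:ℝ) 1 := hball hx
        have hSne : S r ≠ 0 := (hS_pos r hr').ne'
        have hYne : Y r x ≠ 0 := (hY_pos x hx' r hr').ne'
        have h1 : HasDerivAt (fun x : ℝ => (1 - x) * qP r + x * qI r) (ψ r) x := by
          have ha : HasDerivAt (fun x : ℝ => (1 - x) * qP r) (-qP r) x := by
            simpa using ((hasDerivAt_const x (1:ℝ)).sub (hasDerivAt_id x)).mul_const (qP r)
          have hb : HasDerivAt (fun x : ℝ => x * qI r) (qI r) x := by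
            simpa using (hasDerivAt_id x).mul_const (qI r)
          have := ha.add hb
          rw [hψ]
          refine this.congr_deriv ?_
          ring
        have hYd : HasDerivAt (fun x => Y r x) (n * S r * ψ r) x := by
          have heq : (fun x => Y r x) = fun x => n * S r * ((1 - x) * qP r + x * qI r) :=
            funext fun x => hY r x
          rw [heq]
          exact h1.const_mul (n * S r)
        have hD : HasDerivAt (fun x => Y r x * S r) (n * S r * ψ r * S r) x :=
          hYd.mul_const (S r)
        have hne : Y r x * S r ≠ 0 := mul_ne_zero hYne hSne
        have hdiv := (hasDerivAt_const x (f r)).div hD hne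
        refine hdiv.congr_deriv ?_
        field_simp
        ring))
    -- assemble
    have heqVar : (fun x => Var t x)
        = fun x => S t ^ 2 * ∫ r in (0:ℝ)..t, f r / (Y r x * S r) := funext fun x => hVar t x
    have hval : S t ^ 2 * (∫ r in (0:ℝ)..t, -n * (f r * ψ r / (Y r q) ^ 2)) = -(n * V t q) := by
      rw [intervalIntegral.integral_const_mul, hV]
      ring
    rw [heqVar, ← hval]
    exact main.2.const_mul (S t ^ 2)
  -- outer integral
  have hε2 : 0 < min p (1 - p) := lt_min hp0 (by linarith)
  have hball2 : Metric.ball p (min p (1 - p)) ⊆ Set.Ioo (0:ℝ) 1 := by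
    intro x hx
    rw [Metric.mem_ball, Real.dist_eq] at hx
    obtain ⟨h1, h2⟩ := abs_lt.mp hx
    have hm1 := min_le_left p (1 - p)
    have hm2 := min_le_right p (1 - p)
    constructor <;> linarith
  have hsubτ : Set.uIoc (0:ℝ) τ ⊆ Set.Icc (0:ℝ) τ := by
    rw [Set.uIoc_of_le hτ.le]
    exact fun r hr => ⟨hr.1.le, hr.2⟩
  have hsubτ' : Set.uIcc (0:ℝ) τ ⊆ Set.Icc (0:ℝ) τ := by
    rw [Set.uIcc_of_le hτ.le]
  have main := intervalIntegral.hasDerivAt_integral_of_dominated_loc_of_deriv_le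
    (F := fun x t => W t * Var t x)
    (F' := fun x t => W t * (-(n * V t x)))
    (bound := fun _ => MW * (n * (MS ^ 2 * (Mf * Mψ / m ^ 2 * τ))))
    (μ := volume) (a := 0) (b := τ) (x₀ := p) (Metric.ball_mem_nhds p hε2)
    (Filter.eventually_of_mem (Metric.ball_mem_nhds p hε2) (fun x hx =>
      ((hW_cont.mul (hVar_cont x (Set.Ioo_subset_Icc_self (hball2 hx)))).mono
        hsubτ).aestronglyMeasurable measurableSet_uIoc))
    (((hW_cont.mul (hVar_cont p hpIcc)).mono hsubτ').intervalIntegrable)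
    (((hW_cont.mul ((continuousOn_const.mul hVp_cont).neg)).mono hsubτ).aestronglyMeasurable
      measurableSet_uIoc)
    (Filter.Eventually.of_forall (fun t ht x hx => by
      have ht' : t ∈ Set.Icc (0:ℝ) τ := hsubτ ht
      have hx' : x ∈ Set.Icc (0:ℝ) 1 := Set.Ioo_subset_Icc_self (hball2 hx)
      have hWt := hMW t ht'
      rw [Real.norm_eq_abs] at hWt ⊢
      rw [abs_mul, abs_neg, abs_mul, abs_of_pos hn]
      exact mul_le_mul hWt (mul_le_mul_of_nonneg_left (hVb x hx' t ht') hn.le)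
        (mul_nonneg hn.le (abs_nonneg _)) hMW0))
    intervalIntegrable_const
    (Filter.Eventually.of_forall (fun t ht x hx =>
      (key x (hball2 hx) t (hsubτ ht)).const_mul (W t)))
  have hKeq : K = fun x => ∫ t in (0:ℝ)..τ, W t * Var t x := funext hK
  have hval2 : (∫ t in (0:ℝ)..τ, W t * (-(n * V t p)))
      = -(n * ∫ t in (0:ℝ)..τ, W t * V t p) := by
    have hcongr : (∫ t in (0:ℝ)..τ, W t * (-(n * V t p)))
        = (∫ t in (0:ℝ)..τ, -n * (W t * V t p)) := by
      apply intervalIntegral.integral_congr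
      intro t _
      ring
    rw [hcongr, intervalIntegral.integral_const_mul]
    ring
  rw [hKeq, ← hval2]
  exact main.2
end

section
/- (Proposition 2, optimality condition.) If π* ∈ (0, 1) satisfies K(π*) ≤ K(π) for all π ∈ [0, 1], where K(π) = ∫₀^τ W(t)·Var(t, π) dt, then W and V(·, π*) are orthogonal over [0, τ], i.e. ∫₀^τ W(t)·V(t, π*) dt = 0, where V(t, π) = S(t)²·∫₀^t f(r)·ψ(r)/Y(r, π)² dr. -/
/-- Proposition 2, optimality condition: If π* ∈ (0, 1) minimizes
K(π) = ∫₀^τ W(t)·Var(t, π) dt over [0, 1], then W and V(·, π*) are orthogonal over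
[0, τ], i.e. ∫₀^τ W(t)·V(t, π*) dt = 0. -/
theorem weighted_objective_interior_min_orthogonality
    (τ θ n c : ℝ) (hτ : 0 < τ) (hθ : 0 < θ) (hn : 0 < n) (hc : 0 < c)
    (f S qP qI : ℝ → ℝ)
    (hf_cont : ContinuousOn f (Set.Icc 0 τ)) (hS_cont : ContinuousOn S (Set.Icc 0 τ))
    (hqP_cont : ContinuousOn qP (Set.Icc 0 τ)) (hqI_cont : ContinuousOn qI (Set.Icc 0 τ))
    (hf_pos : ∀ r ∈ Set.Icc (0:ℝ) τ, 0 < f r) (hS_pos : ∀ r ∈ Set.Icc (0:ℝ) τ, 0 < S r)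
    (hqP_pos : ∀ r ∈ Set.Icc (0:ℝ) τ, 0 < qP r) (hqI_pos : ∀ r ∈ Set.Icc (0:ℝ) τ, 0 < qI r)
    (ψ : ℝ → ℝ) (hψ : ∀ r, ψ r = qI r - qP r)
    (Y : ℝ → ℝ → ℝ) (hY : ∀ r p, Y r p = n * S r * ((1 - p) * qP r + p * qI r))
    (hY_pos : ∀ p ∈ Set.Icc (0:ℝ) 1, ∀ r ∈ Set.Icc (0:ℝ) τ, 0 < Y r p)
    (Var : ℝ → ℝ → ℝ)
    (hVar : ∀ t p, Var t p = S t ^ 2 * ∫ r in (0:ℝ)..t, f r / (Y r p * S r))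
(W : ℝ → ℝ) (hW_cont : ContinuousOn W (Set.Icc 0 τ))
    (hW_pos : ∀ t ∈ Set.Icc (0:ℝ) τ, 0 < W t)
    (hW_int : (∫ t in (0:ℝ)..τ, W t) = 1)
    (V : ℝ → ℝ → ℝ)
    (hV : ∀ t p, V t p = S t ^ 2 * ∫ r in (0:ℝ)..t, f r * ψ r / (Y r p) ^ 2)
    (K : ℝ → ℝ) (hK : ∀ p, K p = ∫ t in (0:ℝ)..τ, W t * Var t p)
    (pstar : ℝ) (hpstar : pstar ∈ Set.Ioo (0:ℝ) 1)
    (hmin : ∀ p ∈ Set.Icc (0:ℝ) 1, K pstar ≤ K p) :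
    ∫ t in (0:ℝ)..τ, W t * V t pstar = 0 := by
  obtain ⟨hp0, hp1⟩ := hpstar
  have h0mem : (0:ℝ) ∈ Set.Icc (0:ℝ) τ := ⟨le_refl 0, hτ.le⟩
  -- radius
  set ε : ℝ := min pstar (1 - pstar) with hεdef
  have hεpos : 0 < ε := lt_min hp0 (by linarith)
  have hball : Metric.ball pstar ε ⊆ Set.Icc (0:ℝ) 1 := by
    intro q hq
    rw [Metric.mem_ball, Real.dist_eq, abs_lt] at hq
    have h1 := min_le_left pstar (1 - pstar)
    have h2 := min_le_right pstar (1 - pstar)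
    exact ⟨by linarith [hq.1], by linarith [hq.2]⟩
  -- compactness bounds
  have hcompact : IsCompact (Set.Icc (0:ℝ) τ) := isCompact_Icc
  have hψ_cont : ContinuousOn ψ (Set.Icc 0 τ) := by
    have h : ψ = fun r => qI r - qP r := funext hψ
    rw [h]; exact hqI_cont.sub hqP_cont
  obtain ⟨Cf, hCf⟩ := hcompact.exists_bound_of_continuousOn hf_cont
  obtain ⟨Cψ, hCψ⟩ := hcompact.exists_bound_of_continuousOn hψ_cont
  obtain ⟨CS, hCS⟩ := hcompact.exists_bound_of_continuousOn hS_cont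
  obtain ⟨CW, hCW⟩ := hcompact.exists_bound_of_continuousOn hW_cont
  have hCf0 : 0 ≤ Cf := le_trans (norm_nonneg _) (hCf 0 h0mem)
  have hCψ0 : 0 ≤ Cψ := le_trans (norm_nonneg _) (hCψ 0 h0mem)
  have hCS0 : 0 ≤ CS := le_trans (norm_nonneg _) (hCS 0 h0mem)
  have hCW0 : 0 ≤ CW := le_trans (norm_nonneg _) (hCW 0 h0mem)
  -- min bounds
  obtain ⟨rP, hrPmem, hrP⟩ := hcompact.exists_isMinOn ⟨0, h0mem⟩ hqP_cont
  obtain ⟨rI, hrImem, hrI⟩ := hcompact.exists_isMinOn ⟨0, h0mem⟩ hqI_cont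
  obtain ⟨rS, hrSmem, hrS⟩ := hcompact.exists_isMinOn ⟨0, h0mem⟩ hS_cont
  set mq : ℝ := min (qP rP) (qI rI) with hmqdef
  have hmq : 0 < mq := lt_min (hqP_pos rP hrPmem) (hqI_pos rI hrImem)
  set mS : ℝ := S rS with hmSdef
  have hmS : 0 < mS := hS_pos rS hrSmem
  set m : ℝ := n * (mS * mq) with hmdef
  have hmpos : 0 < m := mul_pos hn (mul_pos hmS hmq)
  have hX_lb : ∀ q ∈ Set.Icc (0:ℝ) 1, ∀ r ∈ Set.Icc (0:ℝ) τ,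
      mq ≤ (1 - q) * qP r + q * qI r := by
    intro q hq r hr
    have h1 : mq ≤ qP r := le_trans (min_le_left _ _) (isMinOn_iff.mp hrP r hr)
    have h2 : mq ≤ qI r := le_trans (min_le_right _ _) (isMinOn_iff.mp hrI r hr)
    nlinarith [mul_nonneg (by linarith [hq.2] : (0:ℝ) ≤ 1 - q) (by linarith : 0 ≤ qP r - mq),
      mul_nonneg hq.1 (by linarith : 0 ≤ qI r - mq)]
  have hY_lb : ∀ q ∈ Set.Icc (0:ℝ) 1, ∀ r ∈ Set.Icc (0:ℝ) τ, m ≤ Y r q := by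
    intro q hq r hr
    rw [hY]
    have h1 : mS ≤ S r := isMinOn_iff.mp hrS r hr
    have h2 := hX_lb q hq r hr
    have h3 : mS * mq ≤ S r * ((1 - q) * qP r + q * qI r) :=
      mul_le_mul h1 h2 hmq.le (le_trans hmS.le h1)
    have h4 := mul_le_mul_of_nonneg_left h3 hn.le
    linarith [h4]
  -- bound for inner derivative integrand
  set B' : ℝ := Cf * Cψ / m ^ 2 with hB'def
  have hB'0 : 0 ≤ B' := div_nonneg (mul_nonneg hCf0 hCψ0) (sq_nonneg m)
  have hbound' : ∀ q ∈ Set.Icc (0:ℝ) 1, ∀ r ∈ Set.Icc (0:ℝ) τ,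
      ‖f r * ψ r / (Y r q) ^ 2‖ ≤ B' := by
    intro q hq r hr
    have hY1 := hY_lb q hq r hr
    have hYpos := hY_pos q hq r hr
    rw [Real.norm_eq_abs, abs_div, abs_mul, abs_pow, sq_abs]
    have hnum : |f r| * |ψ r| ≤ Cf * Cψ := by
      have h1 : |f r| ≤ Cf := by simpa [Real.norm_eq_abs] using hCf r hr
      have h2 : |ψ r| ≤ Cψ := by simpa [Real.norm_eq_abs] using hCψ r hr
      exact mul_le_mul h1 h2 (abs_nonneg _) hCf0
    have hden : m ^ 2 ≤ Y r q ^ 2 := by nlinarith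
    calc |f r| * |ψ r| / Y r q ^ 2 ≤ (Cf * Cψ) / m ^ 2 := by
          apply div_le_div₀ (mul_nonneg hCf0 hCψ0) hnum (by positivity) hden
      _ = B' := rfl
  have hbound : ∀ q ∈ Set.Icc (0:ℝ) 1, ∀ r ∈ Set.Icc (0:ℝ) τ,
      ‖-(n * (f r * ψ r / (Y r q) ^ 2))‖ ≤ n * B' := by
    intro q hq r hr
    rw [norm_neg, norm_mul, Real.norm_eq_abs n, abs_of_pos hn]
    exact mul_le_mul_of_nonneg_left (hbound' q hq r hr) hn.le
  -- continuity of parametrized integrands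
  have hcontY : ∀ q, ContinuousOn (fun r => Y r q) (Set.Icc 0 τ) := by
    intro q
    simp only [hY]
    exact (continuousOn_const.mul hS_cont).mul
      ((continuousOn_const.mul hqP_cont).add (continuousOn_const.mul hqI_cont))
  have hcont1 : ∀ q ∈ Set.Icc (0:ℝ) 1,
      ContinuousOn (fun r => f r / (Y r q * S r)) (Set.Icc 0 τ) := fun q hq =>
    hf_cont.div ((hcontY q).mul hS_cont)
      (fun r hr => (mul_pos (hY_pos q hq r hr) (hS_pos r hr)).ne')
  have hcont2 : ∀ q ∈ Set.Icc (0:ℝ) 1,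
      ContinuousOn (fun r => f r * ψ r / (Y r q) ^ 2) (Set.Icc 0 τ) := fun q hq =>
    (hf_cont.mul hψ_cont).div ((hcontY q).pow 2)
      (fun r hr => (pow_pos (hY_pos q hq r hr) 2).ne')
  -- inner derivative
  have inner : ∀ t ∈ Set.Icc (0:ℝ) τ, ∀ p ∈ Metric.ball pstar ε,
      HasDerivAt (fun q => Var t q) (-(n * V t p)) p := by
    intro t ht p hp
    have ht0 : (0:ℝ) ≤ t := ht.1
    have huI : Set.uIoc (0:ℝ) t = Set.Ioc 0 t := Set.uIoc_of_le ht0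
    have hIsub : Set.Ioc (0:ℝ) t ⊆ Set.Icc 0 τ := fun r hr => ⟨hr.1.le, hr.2.trans ht.2⟩
    have hIccsub : Set.Icc (0:ℝ) t ⊆ Set.Icc 0 τ := Set.Icc_subset_Icc le_rfl ht.2
    set ε' : ℝ := ε - dist p pstar with hε'def
    have hε'pos : 0 < ε' := by
      have := Metric.mem_ball.mp hp
      simp only [hε'def]; linarith
    have hball' : Metric.ball p ε' ⊆ Metric.ball pstar ε := by
      intro q hq
      rw [Metric.mem_ball] at hq ⊢
      calc dist q pstar ≤ dist q p + dist p pstar := dist_triangle _ _ _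
        _ < ε' + dist p pstar := by linarith
        _ = ε := by simp [hε'def]
    have meas1 : ∀ᶠ q in nhds p, MeasureTheory.AEStronglyMeasurable
        (fun r => f r / (Y r q * S r)) (MeasureTheory.volume.restrict (Set.uIoc 0 t)) := by
      refine Filter.eventually_of_mem (Metric.ball_mem_nhds p hε'pos) (fun q hq => ?_)
      rw [huI]
      exact ((hcont1 q (hball (hball' hq))).mono hIsub).aestronglyMeasurable measurableSet_Ioc
    have int1 : IntervalIntegrable (fun r => f r / (Y r p * S r))
        MeasureTheory.volume 0 t := by
      apply ContinuousOn.intervalIntegrable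
      rw [Set.uIcc_of_le ht0]
      exact (hcont1 p (hball hp)).mono hIccsub
    have meas1' : MeasureTheory.AEStronglyMeasurable
        (fun r => -(n * (f r * ψ r / (Y r p) ^ 2)))
        (MeasureTheory.volume.restrict (Set.uIoc 0 t)) := by
      rw [huI]
      exact (((continuousOn_const.mul (hcont2 p (hball hp))).neg).mono hIsub).aestronglyMeasurable
        measurableSet_Ioc
    have bnd1 : ∀ᵐ r ∂(MeasureTheory.volume : MeasureTheory.Measure ℝ), r ∈ Set.uIoc (0:ℝ) t →
        ∀ x ∈ Metric.ball p ε', ‖-(n * (f r * ψ r / (Y r x) ^ 2))‖ ≤ n * B' := by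
      refine Filter.Eventually.of_forall (fun r hr x hx => ?_)
      rw [huI] at hr
      exact hbound x (hball (hball' hx)) r (hIsub hr)
    have bint1 : IntervalIntegrable (fun _ : ℝ => n * B') MeasureTheory.volume 0 t :=
      intervalIntegrable_const
    have diff1 : ∀ᵐ r ∂(MeasureTheory.volume : MeasureTheory.Measure ℝ), r ∈ Set.uIoc (0:ℝ) t →
        ∀ x ∈ Metric.ball p ε',
          HasDerivAt (fun q => f r / (Y r q * S r)) (-(n * (f r * ψ r / (Y r x) ^ 2))) x := by
      refine Filter.Eventually.of_forall (fun r hr x hx => ?_)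
      rw [huI] at hr
      have hrτ : r ∈ Set.Icc (0:ℝ) τ := hIsub hr
      have hx1 : x ∈ Set.Icc (0:ℝ) 1 := hball (hball' hx)
      have hSr := hS_pos r hrτ
      have hYx := hY_pos x hx1 r hrτ
      have hXd : HasDerivAt (fun q : ℝ => (1 - q) * qP r + q * qI r) (ψ r) x := by
        have h1 : HasDerivAt (fun q : ℝ => (1 - q) * qP r) (-1 * qP r) x :=
          ((hasDerivAt_id' x).const_sub 1).mul_const (qP r)
        have h2 : HasDerivAt (fun q : ℝ => q * qI r) (1 * qI r) x :=
          (hasDerivAt_id' x).mul_const (qI r)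
        have h3 := h1.add h2
        exact h3.congr_deriv (by rw [hψ]; ring)
      have hYd : HasDerivAt (fun q : ℝ => Y r q * S r) (n * S r * ψ r * S r) x := by
        simp only [hY]
        exact (hXd.const_mul (n * S r)).mul_const (S r)
      have hne : Y r x * S r ≠ 0 := (mul_pos hYx hSr).ne'
      have hd := (hasDerivAt_const x (f r)).div hYd hne
      refine hd.congr_deriv ?_
      have hYne : Y r x ≠ 0 := hYx.ne'
      have hSne : S r ≠ 0 := hSr.ne'
      field_simp
      ring
    obtain ⟨-, key⟩ := intervalIntegral.hasDerivAt_integral_of_dominated_loc_of_deriv_le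
      (F := fun q r => f r / (Y r q * S r))
      (F' := fun q r => -(n * (f r * ψ r / (Y r q) ^ 2)))
      (Metric.ball_mem_nhds p hε'pos) meas1 int1 meas1' bnd1 bint1 diff1
    have hmain := key.const_mul (S t ^ 2)
    have e1 : (fun q => S t ^ 2 * ∫ r in (0:ℝ)..t, f r / (Y r q * S r)) = fun q => Var t q := by
      funext q; rw [hVar]
    have e2 : S t ^ 2 * ∫ r in (0:ℝ)..t, -(n * (f r * ψ r / (Y r p) ^ 2)) = -(n * V t p) := by
      rw [intervalIntegral.integral_neg, intervalIntegral.integral_const_mul, hV]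
      ring
    rw [e1, e2] at hmain
    exact hmain
  -- continuity in t of Var and V
  have hpIcc : pstar ∈ Set.Icc (0:ℝ) 1 := hball (Metric.mem_ball_self hεpos)
  have hVar_cont : ∀ q ∈ Set.Icc (0:ℝ) 1, ContinuousOn (fun t => Var t q) (Set.Icc 0 τ) := by
    intro q hq
    have hprim : ContinuousOn (fun t => ∫ r in (0:ℝ)..t, f r / (Y r q * S r)) (Set.Icc 0 τ) := by
      have h := intervalIntegral.continuousOn_primitive_interval
        (f := fun r => f r / (Y r q * S r)) (a := 0) (b := τ) (μ := MeasureTheory.volume) ?_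
      · rwa [Set.uIcc_of_le hτ.le] at h
      · rw [Set.uIcc_of_le hτ.le]
        exact (hcont1 q hq).integrableOn_Icc
    simp only [hVar]
    exact (hS_cont.pow 2).mul hprim
  have hV_cont : ∀ q ∈ Set.Icc (0:ℝ) 1, ContinuousOn (fun t => V t q) (Set.Icc 0 τ) := by
    intro q hq
    have hprim : ContinuousOn (fun t => ∫ r in (0:ℝ)..t, f r * ψ r / (Y r q) ^ 2) (Set.Icc 0 τ) := by
      have h := intervalIntegral.continuousOn_primitive_interval
        (f := fun r => f r * ψ r / (Y r q) ^ 2) (a := 0) (b := τ) (μ := MeasureTheory.volume) ?_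
      · rwa [Set.uIcc_of_le hτ.le] at h
      · rw [Set.uIcc_of_le hτ.le]
        exact (hcont2 q hq).integrableOn_Icc
    simp only [hV]
    exact (hS_cont.pow 2).mul hprim
  -- bound on V
  have hVbound : ∀ q ∈ Set.Icc (0:ℝ) 1, ∀ t ∈ Set.Icc (0:ℝ) τ,
      ‖V t q‖ ≤ CS ^ 2 * (B' * τ) := by
    intro q hq t ht
    have h1 : ‖∫ r in (0:ℝ)..t, f r * ψ r / (Y r q) ^ 2‖ ≤ B' * |t - 0| := by
      apply intervalIntegral.norm_integral_le_of_norm_le_const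
      intro r hr
      rw [Set.uIoc_of_le ht.1] at hr
      exact hbound' q hq r ⟨hr.1.le, hr.2.trans ht.2⟩
    rw [sub_zero, abs_of_nonneg ht.1] at h1
    have h2 : ‖∫ r in (0:ℝ)..t, f r * ψ r / (Y r q) ^ 2‖ ≤ B' * τ :=
      h1.trans (mul_le_mul_of_nonneg_left ht.2 hB'0)
    rw [hV, norm_mul]
    have h3 : ‖S t ^ 2‖ ≤ CS ^ 2 := by
      rw [Real.norm_eq_abs, abs_pow]
      have : |S t| ≤ CS := by simpa [Real.norm_eq_abs] using hCS t ht
      exact pow_le_pow_left₀ (abs_nonneg _) this 2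
    exact mul_le_mul h3 h2 (norm_nonneg _) (by positivity)
  -- outer derivative
  have hτsub : Set.Ioc (0:ℝ) τ ⊆ Set.Icc 0 τ := fun r hr => ⟨hr.1.le, hr.2⟩
  have hτuI : Set.uIoc (0:ℝ) τ = Set.Ioc 0 τ := Set.uIoc_of_le hτ.le
  have meas2 : ∀ᶠ q in nhds pstar, MeasureTheory.AEStronglyMeasurable
      (fun t => W t * Var t q) (MeasureTheory.volume.restrict (Set.uIoc 0 τ)) := by
    refine Filter.eventually_of_mem (Metric.ball_mem_nhds pstar hεpos) (fun q hq => ?_)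
    rw [hτuI]
    exact ((hW_cont.mul (hVar_cont q (hball hq))).mono hτsub).aestronglyMeasurable
      measurableSet_Ioc
  have int2 : IntervalIntegrable (fun t => W t * Var t pstar) MeasureTheory.volume 0 τ := by
    apply ContinuousOn.intervalIntegrable
    rw [Set.uIcc_of_le hτ.le]
    exact hW_cont.mul (hVar_cont pstar hpIcc)
  have meas2' : MeasureTheory.AEStronglyMeasurable (fun t => W t * -(n * V t pstar))
      (MeasureTheory.volume.restrict (Set.uIoc 0 τ)) := by
    rw [hτuI]
    exact ((hW_cont.mul ((continuousOn_const.mul (hV_cont pstar hpIcc)).neg)).mono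
      hτsub).aestronglyMeasurable measurableSet_Ioc
  have bnd2 : ∀ᵐ t ∂(MeasureTheory.volume : MeasureTheory.Measure ℝ), t ∈ Set.uIoc (0:ℝ) τ →
      ∀ x ∈ Metric.ball pstar ε, ‖W t * -(n * V t x)‖ ≤ CW * (n * (CS ^ 2 * (B' * τ))) := by
    refine Filter.Eventually.of_forall (fun t ht x hx => ?_)
    rw [hτuI] at ht
    have htτ : t ∈ Set.Icc (0:ℝ) τ := hτsub ht
    rw [norm_mul, norm_neg, norm_mul, Real.norm_eq_abs n, abs_of_pos hn]
    have h1 : n * ‖V t x‖ ≤ n * (CS ^ 2 * (B' * τ)) :=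
      mul_le_mul_of_nonneg_left (hVbound x (hball hx) t htτ) hn.le
    exact mul_le_mul (by simpa [Real.norm_eq_abs] using hCW t htτ) h1
      (mul_nonneg hn.le (norm_nonneg _)) hCW0
  have bint2 : IntervalIntegrable (fun _ : ℝ => CW * (n * (CS ^ 2 * (B' * τ))))
      MeasureTheory.volume 0 τ := intervalIntegrable_const
  have diff2 : ∀ᵐ t ∂(MeasureTheory.volume : MeasureTheory.Measure ℝ), t ∈ Set.uIoc (0:ℝ) τ →
      ∀ x ∈ Metric.ball pstar ε,
        HasDerivAt (fun q => W t * Var t q) (W t * -(n * V t x)) x := by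
    refine Filter.Eventually.of_forall (fun t ht x hx => ?_)
    rw [hτuI] at ht
    exact (inner t (hτsub ht) x hx).const_mul (W t)
  obtain ⟨-, keyK⟩ := intervalIntegral.hasDerivAt_integral_of_dominated_loc_of_deriv_le
    (F := fun q t => W t * Var t q)
    (F' := fun q t => W t * -(n * V t q))
    (Metric.ball_mem_nhds pstar hεpos) meas2 int2 meas2' bnd2 bint2 diff2
  have eK : (fun q => ∫ t in (0:ℝ)..τ, W t * Var t q) = K := funext fun q => (hK q).symm
  rw [eK] at keyK
  have hloc : IsLocalMin K pstar :=
    Filter.eventually_of_mem (isOpen_Ioo.mem_nhds ⟨hp0, hp1⟩)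
      (fun q hq => hmin q ⟨hq.1.le, hq.2.le⟩)
  have hzero : (∫ t in (0:ℝ)..τ, W t * -(n * V t pstar)) = 0 := hloc.hasDerivAt_eq_zero keyK
  have hrw : (∫ t in (0:ℝ)..τ, W t * -(n * V t pstar))
      = -(n * ∫ t in (0:ℝ)..τ, W t * V t pstar) := by
    rw [← intervalIntegral.integral_const_mul, ← intervalIntegral.integral_neg]
    congr 1
    funext t
    ring
  rw [hrw] at hzero
  have h5 : n * ∫ t in (0:ℝ)..τ, W t * V t pstar = 0 := by linarith
  exact (mul_eq_zero.mp h5).resolve_left hn.ne'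
end

section
/- (Proposition 2, boundary case.) If for every π ∈ (0, 1) the orthogonality condition fails, i.e. ∫₀^τ W(t)·V(t, π) dt ≠ 0 where V(t, π) = S(t)²·∫₀^t f(r)·ψ(r)/Y(r, π)² dr, then the minimum of K(π) = ∫₀^τ W(t)·Var(t, π) dt over [0, 1] is attained at a boundary point: min(K(0), K(1)) ≤ K(π) for every π ∈ [0, 1]. -/
set_option maxHeartbeats 1000000


/-- Proposition 2, boundary case: If for every π ∈ (0, 1) the
orthogonality condition fails, i.e. ∫₀^τ W(t)·V(t, π) dt ≠ 0, then the minimum of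
K over [0, 1] is attained at a boundary point. -/
theorem weighted_objective_boundary_min
    (τ θ n c : ℝ) (hτ : 0 < τ) (hθ : 0 < θ) (hn : 0 < n) (hc : 0 < c)
    (f S qP qI : ℝ → ℝ)
    (hf_cont : ContinuousOn f (Set.Icc 0 τ)) (hS_cont : ContinuousOn S (Set.Icc 0 τ))
    (hqP_cont : ContinuousOn qP (Set.Icc 0 τ)) (hqI_cont : ContinuousOn qI (Set.Icc 0 τ))
    (hf_pos : ∀ r ∈ Set.Icc (0:ℝ) τ, 0 < f r) (hS_pos : ∀ r ∈ Set.Icc (0:ℝ) τ, 0 < S r)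
    (hqP_pos : ∀ r ∈ Set.Icc (0:ℝ) τ, 0 < qP r) (hqI_pos : ∀ r ∈ Set.Icc (0:ℝ) τ, 0 < qI r)
    (ψ : ℝ → ℝ) (hψ : ∀ r, ψ r = qI r - qP r)
    (Y : ℝ → ℝ → ℝ) (hY : ∀ r p, Y r p = n * S r * ((1 - p) * qP r + p * qI r))
    (hY_pos : ∀ p ∈ Set.Icc (0:ℝ) 1, ∀ r ∈ Set.Icc (0:ℝ) τ, 0 < Y r p)
    (Var : ℝ → ℝ → ℝ)
    (hVar : ∀ t p, Var t p = S t ^ 2 * ∫ r in (0:ℝ)..t, f r / (Y r p * S r))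
(W : ℝ → ℝ) (hW_cont : ContinuousOn W (Set.Icc 0 τ))
    (hW_pos : ∀ t ∈ Set.Icc (0:ℝ) τ, 0 < W t)
    (hW_int : (∫ t in (0:ℝ)..τ, W t) = 1)
    (V : ℝ → ℝ → ℝ)
    (hV : ∀ t p, V t p = S t ^ 2 * ∫ r in (0:ℝ)..t, f r * ψ r / (Y r p) ^ 2)
    (K : ℝ → ℝ) (hK : ∀ p, K p = ∫ t in (0:ℝ)..τ, W t * Var t p)
    (hne : ∀ p ∈ Set.Ioo (0:ℝ) 1, (∫ t in (0:ℝ)..τ, W t * V t p) ≠ 0) :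
    ∀ p ∈ Set.Icc (0:ℝ) 1, min (K 0) (K 1) ≤ K p := by
  have h0mem : (0:ℝ) ∈ Set.Icc (0:ℝ) τ := ⟨le_refl 0, hτ.le⟩
  have hψ_cont : ContinuousOn ψ (Set.Icc 0 τ) :=
    (hqI_cont.sub hqP_cont).congr fun r _ => hψ r
  obtain ⟨Mf, hMf⟩ := isCompact_Icc.exists_bound_of_continuousOn hf_cont
  obtain ⟨MS, hMS⟩ := isCompact_Icc.exists_bound_of_continuousOn hS_cont
  obtain ⟨Mψ, hMψ⟩ := isCompact_Icc.exists_bound_of_continuousOn hψ_cont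
  obtain ⟨MW, hMW⟩ := isCompact_Icc.exists_bound_of_continuousOn hW_cont
  have hMf0 : 0 ≤ Mf := le_trans (norm_nonneg _) (hMf 0 h0mem)
  have hMS0 : 0 ≤ MS := le_trans (norm_nonneg _) (hMS 0 h0mem)
  have hMψ0 : 0 ≤ Mψ := le_trans (norm_nonneg _) (hMψ 0 h0mem)
  have hMW0 : 0 ≤ MW := le_trans (norm_nonneg _) (hMW 0 h0mem)
  -- lower bound on S
  obtain ⟨mS, hmS, hSlb⟩ : ∃ m : ℝ, 0 < m ∧ ∀ r ∈ Set.Icc (0:ℝ) τ, m ≤ S r := by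
    obtain ⟨rS, hrSmem, hrSmin⟩ := isCompact_Icc.exists_isMinOn ⟨0, h0mem⟩ hS_cont
    exact ⟨S rS, hS_pos rS hrSmem, fun r hr => isMinOn_iff.mp hrSmin r hr⟩
  -- the affine factor A r q = qP r + q * ψ r
  obtain ⟨A, hAdef⟩ : ∃ A : ℝ → ℝ → ℝ, ∀ r q, A r q = qP r + q * ψ r :=
    ⟨fun r q => qP r + q * ψ r, fun _ _ => rfl⟩
  have hYA : ∀ r q, Y r q = n * S r * A r q := by
    intro r q; rw [hY, hAdef]; simp only [hψ]; ring
  have hA_contOn : ContinuousOn (fun z : ℝ × ℝ => A z.2 z.1)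
      (Set.Icc (0:ℝ) 1 ×ˢ Set.Icc (0:ℝ) τ) := by
    have : ContinuousOn (fun z : ℝ × ℝ => qP z.2 + z.1 * ψ z.2)
        (Set.Icc (0:ℝ) 1 ×ˢ Set.Icc (0:ℝ) τ) := by
      apply ContinuousOn.add
      · exact ContinuousOn.comp hqP_cont continuous_snd.continuousOn (fun z hz => hz.2)
      · exact continuous_fst.continuousOn.mul
          (ContinuousOn.comp hψ_cont continuous_snd.continuousOn (fun z hz => hz.2))
    exact this.congr fun z _ => hAdef z.2 z.1
  obtain ⟨mA, hmA, hAlb1⟩ : ∃ m : ℝ, 0 < m ∧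
      ∀ q ∈ Set.Icc (0:ℝ) 1, ∀ r ∈ Set.Icc (0:ℝ) τ, m ≤ A r q := by
    obtain ⟨z0, hz0mem, hz0min⟩ := (isCompact_Icc.prod isCompact_Icc).exists_isMinOn
      ⟨((0:ℝ), (0:ℝ)), ⟨⟨le_refl 0, zero_le_one⟩, h0mem⟩⟩ hA_contOn
    refine ⟨A z0.2 z0.1, ?_, fun q hq r hr => isMinOn_iff.mp hz0min (q, r) (Set.mk_mem_prod hq hr)⟩
    have h1 := hqP_pos z0.2 hz0mem.2
    have h2 := hqI_pos z0.2 hz0mem.2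
    have h3 := hz0mem.1.1
    have h4 := hz0mem.1.2
    rw [hAdef, hψ]
    have e1 : (1 - z0.1) * min (qP z0.2) (qI z0.2) ≤ (1 - z0.1) * qP z0.2 :=
      mul_le_mul_of_nonneg_left (min_le_left _ _) (by linarith)
    have e2 : z0.1 * min (qP z0.2) (qI z0.2) ≤ z0.1 * qI z0.2 :=
      mul_le_mul_of_nonneg_left (min_le_right _ _) h3
    have e3 : 0 < min (qP z0.2) (qI z0.2) := lt_min h1 h2
    nlinarith
  obtain ⟨ε, hε, hεMψ⟩ : ∃ e : ℝ, 0 < e ∧ e * Mψ ≤ mA / 2 := by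
    refine ⟨mA / (2 * (Mψ + 1)), div_pos hmA (by linarith), ?_⟩
    rw [div_mul_eq_mul_div, div_le_div_iff₀ (by linarith) (by norm_num)]
    nlinarith
  have hAlb : ∀ q ∈ Set.Icc (-ε) (1+ε), ∀ r ∈ Set.Icc (0:ℝ) τ, mA/2 ≤ A r q := by
    intro q hq r hr
    set q' := max 0 (min 1 q) with hq'def
    have hq'mem : q' ∈ Set.Icc (0:ℝ) 1 :=
      ⟨le_max_left _ _, max_le zero_le_one (min_le_left _ _)⟩
    have h1 : mA ≤ A r q' := hAlb1 q' hq'mem r hr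
    have h2 : |q - q'| ≤ ε := by
      rcases le_total q 0 with h | h
      · have hq'0 : q' = 0 := by
          rw [hq'def, min_eq_right (h.trans zero_le_one), max_eq_left h]
        rw [hq'0, abs_le]; constructor <;> [linarith [hq.1]; linarith]
      · rcases le_total q 1 with h' | h'
        · have hq'q : q' = q := by rw [hq'def, min_eq_right h', max_eq_right h]
          rw [hq'q]; simpa using hε.le
        · have hq'1 : q' = 1 := by rw [hq'def, min_eq_left h', max_eq_right zero_le_one]
          rw [hq'1, abs_le]; constructor <;> [linarith; linarith [hq.2]]
    have hψr := hMψ r hr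
    rw [Real.norm_eq_abs] at hψr
    have h3 : |(q - q') * ψ r| ≤ ε * Mψ := by
      rw [abs_mul]
      exact mul_le_mul h2 hψr (abs_nonneg _) hε.le
    have h4 : A r q = A r q' + (q - q') * ψ r := by rw [hAdef, hAdef]; ring
    have h5 := neg_abs_le ((q - q') * ψ r)
    linarith
  -- lower bound on Y
  obtain ⟨mY, hmY, hYlb⟩ : ∃ m : ℝ, 0 < m ∧
      ∀ q ∈ Set.Icc (-ε) (1+ε), ∀ r ∈ Set.Icc (0:ℝ) τ, m ≤ Y r q := by
    refine ⟨n * mS * (mA/2), mul_pos (mul_pos hn hmS) (by linarith), ?_⟩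
    intro q hq r hr
    rw [hYA]
    have h1 := hSlb r hr
    have h2 := hAlb q hq r hr
    calc n * mS * (mA/2) = n * (mS * (mA/2)) := by ring
      _ ≤ n * (S r * A r q) := by
          apply mul_le_mul_of_nonneg_left _ hn.le
          exact mul_le_mul h1 h2 (by linarith) (hS_pos r hr).le
      _ = n * S r * A r q := by ring
  have hYpos' : ∀ q ∈ Set.Icc (-ε) (1+ε), ∀ r ∈ Set.Icc (0:ℝ) τ, 0 < Y r q :=
    fun q hq r hr => lt_of_lt_of_le hmY (hYlb q hq r hr)
  -- continuity of Y in r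
  have hYcont : ∀ q : ℝ, ContinuousOn (fun r => Y r q) (Set.Icc 0 τ) := by
    intro q
    have h : ContinuousOn (fun r => n * S r * ((1 - q) * qP r + q * qI r)) (Set.Icc 0 τ) :=
      (continuousOn_const.mul hS_cont).mul
        ((continuousOn_const.mul hqP_cont).add (continuousOn_const.mul hqI_cont))
    exact h.congr fun r _ => hY r q
  have hGcont : ∀ q ∈ Set.Icc (-ε) (1+ε),
      ContinuousOn (fun r => f r / (Y r q * S r)) (Set.Icc 0 τ) := by
    intro q hq
    exact hf_cont.div ((hYcont q).mul hS_cont)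
      (fun r hr => ne_of_gt (mul_pos (hYpos' q hq r hr) (hS_pos r hr)))
  have hG'cont : ∀ q ∈ Set.Icc (-ε) (1+ε),
      ContinuousOn (fun r => f r * ψ r / (Y r q) ^ 2) (Set.Icc 0 τ) := by
    intro q hq
    exact (hf_cont.mul hψ_cont).div ((hYcont q).pow 2)
      (fun r hr => pow_ne_zero 2 (ne_of_gt (hYpos' q hq r hr)))
  have hε2 : 0 < ε/2 := by linarith
  have hε4 : 0 < ε/4 := by linarith
  have hball1 : ∀ p₀ ∈ Set.Icc (-(ε/2)) (1+ε/2),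
      Metric.ball p₀ (ε/2) ⊆ Set.Icc (-ε) (1+ε) := by
    intro p₀ hp₀ x hx
    rw [Metric.mem_ball, Real.dist_eq] at hx
    have h := abs_lt.mp hx
    exact ⟨by linarith [hp₀.1, h.1, h.2], by linarith [hp₀.2, h.1, h.2]⟩
  have hball2 : ∀ p₀ ∈ Set.Icc (-(ε/4)) (1+ε/4),
      Metric.ball p₀ (ε/4) ⊆ Set.Icc (-(ε/2)) (1+ε/2) := by
    intro p₀ hp₀ x hx
    rw [Metric.mem_ball, Real.dist_eq] at hx
    have h := abs_lt.mp hx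
    exact ⟨by linarith [hp₀.1, h.1, h.2], by linarith [hp₀.2, h.1, h.2]⟩
  -- inner derivative: p ↦ Var t p
  have hVarDeriv : ∀ p₀ ∈ Set.Icc (-(ε/2)) (1+ε/2), ∀ t ∈ Set.Icc (0:ℝ) τ,
      HasDerivAt (fun q => Var t q) (-n * V t p₀) p₀ := by
    intro p₀ hp₀ t ht
    have hp₀' : p₀ ∈ Set.Icc (-ε) (1+ε) := ⟨by linarith [hp₀.1], by linarith [hp₀.2]⟩
    have hsubIcc : Set.uIcc (0:ℝ) t ⊆ Set.Icc 0 τ := by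
      rw [Set.uIcc_of_le ht.1]
      exact Set.Icc_subset_Icc_right ht.2
    have hsubIoc : Set.uIoc (0:ℝ) t ⊆ Set.Icc 0 τ := by
      rw [Set.uIoc_of_le ht.1]
      exact Set.Ioc_subset_Icc_self.trans (Set.Icc_subset_Icc_right ht.2)
    have main := intervalIntegral.hasDerivAt_integral_of_dominated_loc_of_deriv_le
      (F := fun q r => f r / (Y r q * S r))
      (F' := fun q r => -n * (f r * ψ r / (Y r q) ^ 2))
      (bound := fun _ => n * (Mf * Mψ) / (mY ^ 2))
      (a := 0) (b := t) (μ := MeasureTheory.volume) (x₀ := p₀) (Metric.ball_mem_nhds p₀ hε2)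
      ?_ ?_ ?_ ?_ ?_ ?_
    · have h2 : HasDerivAt (fun q => S t ^ 2 * ∫ r in (0:ℝ)..t, f r / (Y r q * S r))
          (S t ^ 2 * ∫ r in (0:ℝ)..t, -n * (f r * ψ r / (Y r p₀) ^ 2)) p₀ :=
        main.2.const_mul _
      have hfun : (fun q => Var t q) =
          fun q => S t ^ 2 * ∫ r in (0:ℝ)..t, f r / (Y r q * S r) :=
        funext fun q => hVar t q
      rw [hfun]
      convert h2 using 1
      rw [hV, intervalIntegral.integral_const_mul]
      ring
    · filter_upwards [Metric.ball_mem_nhds p₀ hε2] with x hx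
      exact ((hGcont x (hball1 p₀ hp₀ hx)).mono hsubIoc).aestronglyMeasurable
        measurableSet_uIoc
    · exact ((hGcont p₀ hp₀').mono hsubIcc).intervalIntegrable
    · exact ((continuousOn_const.mul (hG'cont p₀ hp₀')).mono hsubIoc).aestronglyMeasurable
        measurableSet_uIoc
    · refine Filter.Eventually.of_forall (fun r hr x hx => ?_)
      have hrmem := hsubIoc hr
      have hxmem := hball1 p₀ hp₀ hx
      have hYx := hYlb x hxmem r hrmem
      have hY2 : mY ^ 2 ≤ (Y r x) ^ 2 := by nlinarith
      have hfr := hMf r hrmem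
      have hψr := hMψ r hrmem
      rw [Real.norm_eq_abs] at hfr hψr
      have h1 : |f r| * |ψ r| ≤ Mf * Mψ := mul_le_mul hfr hψr (abs_nonneg _) hMf0
      calc |(-n) * (f r * ψ r / (Y r x) ^ 2)|
          = n * (|f r| * |ψ r|) / (Y r x) ^ 2 := by
            rw [abs_mul, abs_neg, abs_of_pos hn, abs_div, abs_mul,
              abs_of_nonneg (sq_nonneg (Y r x))]
            ring
        _ ≤ n * (Mf * Mψ) / mY ^ 2 := by
            apply div_le_div₀ (mul_nonneg hn.le (mul_nonneg hMf0 hMψ0))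
              (by nlinarith) (pow_pos hmY 2) hY2
    · exact intervalIntegrable_const
    · refine Filter.Eventually.of_forall (fun r hr x hx => ?_)
      have hrmem := hsubIoc hr
      have hxmem := hball1 p₀ hp₀ hx
      have hSr := hS_pos r hrmem
      have hYrx := hYpos' x hxmem r hrmem
      have hu : HasDerivAt (fun q : ℝ => Y r q * S r) (n * S r * S r * ψ r) x := by
        have h0 : HasDerivAt
            (fun q : ℝ => n * S r * S r * qP r + q * (n * S r * S r * ψ r))
            (n * S r * S r * ψ r) x :=
          (hasDerivAt_mul_const _).const_add _
        have hfun : (fun q : ℝ => Y r q * S r) =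
            fun q => n * S r * S r * qP r + q * (n * S r * S r * ψ r) := by
          funext q; rw [hY, hψ]; ring
        rw [hfun]; exact h0
      have hune : Y r x * S r ≠ 0 := ne_of_gt (mul_pos hYrx hSr)
      have hd := (hasDerivAt_const x (f r)).div hu hune
      refine hd.congr_deriv ?_
      have hYne : Y r x ≠ 0 := ne_of_gt hYrx
      have hSne : S r ≠ 0 := ne_of_gt hSr
      field_simp
      ring
  -- continuity in t of Var and V
  have hIccEq : Set.uIcc (0:ℝ) τ = Set.Icc 0 τ := Set.uIcc_of_le hτ.le
  have hsubIocτ : Set.uIoc (0:ℝ) τ ⊆ Set.Icc 0 τ := by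
    rw [Set.uIoc_of_le hτ.le]
    exact Set.Ioc_subset_Icc_self
  have hVarcont : ∀ q ∈ Set.Icc (-ε) (1+ε),
      ContinuousOn (fun t => Var t q) (Set.Icc 0 τ) := by
    intro q hq
    have hprim : ContinuousOn (fun t => ∫ r in (0:ℝ)..t, f r / (Y r q * S r))
        (Set.Icc 0 τ) := by
      have h := intervalIntegral.continuousOn_primitive_interval
        (a := 0) (b := τ) (μ := MeasureTheory.volume)
        (f := fun r => f r / (Y r q * S r))
        (by rw [hIccEq]; exact (hGcont q hq).integrableOn_Icc)
      rwa [hIccEq] at h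
    exact ((hS_cont.pow 2).mul hprim).congr fun t _ => hVar t q
  have hVcont : ∀ q ∈ Set.Icc (-ε) (1+ε),
      ContinuousOn (fun t => V t q) (Set.Icc 0 τ) := by
    intro q hq
    have hprim : ContinuousOn (fun t => ∫ r in (0:ℝ)..t, f r * ψ r / (Y r q) ^ 2)
        (Set.Icc 0 τ) := by
      have h := intervalIntegral.continuousOn_primitive_interval
        (a := 0) (b := τ) (μ := MeasureTheory.volume)
        (f := fun r => f r * ψ r / (Y r q) ^ 2)
        (by rw [hIccEq]; exact (hG'cont q hq).integrableOn_Icc)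
      rwa [hIccEq] at h
    exact ((hS_cont.pow 2).mul hprim).congr fun t _ => hV t q
  -- bound on V
  have hVbound : ∀ q ∈ Set.Icc (-ε) (1+ε), ∀ t ∈ Set.Icc (0:ℝ) τ,
      |V t q| ≤ MS ^ 2 * (Mf * Mψ / mY ^ 2 * τ) := by
    intro q hq t ht
    rw [hV]
    have hbd : ∀ r ∈ Set.uIoc (0:ℝ) t, ‖f r * ψ r / (Y r q) ^ 2‖ ≤ Mf * Mψ / mY ^ 2 := by
      intro r hr
      have hrmem : r ∈ Set.Icc (0:ℝ) τ := by
        rw [Set.uIoc_of_le ht.1] at hr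
        exact ⟨hr.1.le, hr.2.trans ht.2⟩
      have hYx := hYlb q hq r hrmem
      have hY2 : mY ^ 2 ≤ (Y r q) ^ 2 := by nlinarith
      have hfr := hMf r hrmem
      have hψr := hMψ r hrmem
      rw [Real.norm_eq_abs] at hfr hψr
      rw [Real.norm_eq_abs, abs_div, abs_mul, abs_of_nonneg (sq_nonneg (Y r q))]
      exact div_le_div₀ (mul_nonneg hMf0 hMψ0)
        (mul_le_mul hfr hψr (abs_nonneg _) hMf0) (pow_pos hmY 2) hY2
    have h1 := intervalIntegral.norm_integral_le_of_norm_le_const hbd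
    rw [Real.norm_eq_abs] at h1
    have ht' : |t - 0| ≤ τ := by
      rw [sub_zero, abs_of_nonneg ht.1]; exact ht.2
    have hSt := hMS t ht
    rw [Real.norm_eq_abs] at hSt
    have hS2 : S t ^ 2 ≤ MS ^ 2 := by nlinarith [abs_nonneg (S t), sq_abs (S t), neg_abs_le (S t)]
    have hIb : |∫ r in (0:ℝ)..t, f r * ψ r / (Y r q) ^ 2| ≤ Mf * Mψ / mY ^ 2 * τ := by
      calc |∫ r in (0:ℝ)..t, f r * ψ r / (Y r q) ^ 2| ≤ Mf * Mψ / mY ^ 2 * |t - 0| := h1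
        _ ≤ Mf * Mψ / mY ^ 2 * τ := by
            apply mul_le_mul_of_nonneg_left ht'
            positivity
    rw [abs_mul, abs_of_nonneg (sq_nonneg (S t))]
    apply mul_le_mul hS2 hIb (abs_nonneg _) (by positivity)
  -- outer derivative: p ↦ K p
  have hKderiv : ∀ p₀ ∈ Set.Icc (-(ε/4)) (1+ε/4),
      HasDerivAt K (∫ t in (0:ℝ)..τ, W t * (-n * V t p₀)) p₀ := by
    intro p₀ hp₀
    have hp₀half : p₀ ∈ Set.Icc (-(ε/2)) (1+ε/2) := ⟨by linarith [hp₀.1], by linarith [hp₀.2]⟩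
    have hp₀' : p₀ ∈ Set.Icc (-ε) (1+ε) := ⟨by linarith [hp₀.1], by linarith [hp₀.2]⟩
    have main := intervalIntegral.hasDerivAt_integral_of_dominated_loc_of_deriv_le
      (F := fun q t => W t * Var t q)
      (F' := fun q t => W t * (-n * V t q))
      (bound := fun _ => MW * (n * (MS ^ 2 * (Mf * Mψ / mY ^ 2 * τ))))
      (a := 0) (b := τ) (μ := MeasureTheory.volume) (x₀ := p₀) (Metric.ball_mem_nhds p₀ hε4)
      ?_ ?_ ?_ ?_ ?_ ?_
    · have h2 := main.2
      have hfun : (fun q => ∫ t in (0:ℝ)..τ, W t * Var t q) = K :=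
        funext fun q => (hK q).symm
      rwa [hfun] at h2
    · filter_upwards [Metric.ball_mem_nhds p₀ hε4] with x hx
      have hxmem : x ∈ Set.Icc (-ε) (1+ε) := by
        have h := hball2 p₀ hp₀ hx
        exact ⟨by linarith [h.1], by linarith [h.2]⟩
      exact ((hW_cont.mul (hVarcont x hxmem)).mono hsubIocτ).aestronglyMeasurable
        measurableSet_uIoc
    · apply ContinuousOn.intervalIntegrable
      rw [hIccEq]
      exact hW_cont.mul (hVarcont p₀ hp₀')
    · exact ((hW_cont.mul (continuousOn_const.mul (hVcont p₀ hp₀'))).mono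
        hsubIocτ).aestronglyMeasurable measurableSet_uIoc
    · refine Filter.Eventually.of_forall (fun t ht x hx => ?_)
      have htm := hsubIocτ ht
      have hxmem : x ∈ Set.Icc (-ε) (1+ε) := by
        have h := hball2 p₀ hp₀ hx
        exact ⟨by linarith [h.1], by linarith [h.2]⟩
      have hWt := hMW t htm
      rw [Real.norm_eq_abs] at hWt
      have hVb := hVbound x hxmem t htm
      rw [Real.norm_eq_abs, abs_mul, abs_mul, abs_neg, abs_of_pos hn]
      exact mul_le_mul hWt (mul_le_mul_of_nonneg_left hVb hn.le)
        (mul_nonneg hn.le (abs_nonneg _)) hMW0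
    · exact intervalIntegrable_const
    · refine Filter.Eventually.of_forall (fun t ht x hx => ?_)
      have htm := hsubIocτ ht
      have hxmem := hball2 p₀ hp₀ hx
      exact (hVarDeriv x hxmem t htm).const_mul (W t)
  -- derivative never vanishes on (0,1)
  have hsub01 : Set.Icc (0:ℝ) 1 ⊆ Set.Icc (-(ε/4)) (1+ε/4) := by
    intro x hx
    exact ⟨by linarith [hx.1], by linarith [hx.2]⟩
  have hkne : ∀ q ∈ Set.Ioo (0:ℝ) 1,
      (fun q => ∫ t in (0:ℝ)..τ, W t * (-n * V t q)) q ≠ 0 := by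
    intro q hq
    have heq : (∫ t in (0:ℝ)..τ, W t * (-n * V t q))
        = -n * ∫ t in (0:ℝ)..τ, W t * V t q := by
      rw [← intervalIntegral.integral_const_mul]
      congr 1; funext t; ring
    simp only [heq]
    exact mul_ne_zero (neg_ne_zero.mpr hn.ne') (hne q hq)
  have hDarboux := hasDerivWithinAt_forall_lt_or_forall_gt_of_forall_ne
    (convex_Ioo (0:ℝ) 1)
    (f := K) (f' := fun q => ∫ t in (0:ℝ)..τ, W t * (-n * V t q))
    (fun x hx =>
      (hKderiv x (hsub01 (Set.Ioo_subset_Icc_self hx))).hasDerivWithinAt)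
    (m := 0) hkne
  have hKcont : ContinuousOn K (Set.Icc 0 1) := fun x hx =>
    ((hKderiv x (hsub01 hx)).continuousAt).continuousWithinAt
  intro p hp
  rcases hDarboux with hneg | hpos
  · have hAnti : StrictAntiOn K (Set.Icc 0 1) := by
      apply strictAntiOn_of_deriv_neg (convex_Icc 0 1) hKcont
      intro x hx
      rw [interior_Icc] at hx
      rw [(hKderiv x (hsub01 (Set.Ioo_subset_Icc_self hx))).deriv]
      exact hneg x hx
    have hK1 : K 1 ≤ K p := by
      rcases eq_or_lt_of_le hp.2 with h | h
      · rw [h]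
      · exact (hAnti hp (Set.right_mem_Icc.mpr zero_le_one) h).le
    exact le_trans (min_le_right _ _) hK1
  · have hMono : StrictMonoOn K (Set.Icc 0 1) := by
      apply strictMonoOn_of_deriv_pos (convex_Icc 0 1) hKcont
      intro x hx
      rw [interior_Icc] at hx
      rw [(hKderiv x (hsub01 (Set.Ioo_subset_Icc_self hx))).deriv]
      exact hpos x hx
    have hK0 : K 0 ≤ K p := by
      rcases eq_or_lt_of_le hp.1 with h | h
      · rw [← h]
      · exact (hMono (Set.left_mem_Icc.mpr zero_le_one) hp h).le
    exact le_trans (min_le_left _ _) hK0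
end

section
/- (Necessary condition for an interior optimum of the weighted objective.) If π* ∈ (0, 1) satisfies K(π*) ≤ K(π) for all π ∈ [0, 1], where K(π) = ∫₀^τ W(t)·Var(t, π) dt, then there exists r ∈ (0, τ) with ψ(r) = 0. -/
/-- Necessary condition for an interior optimum of the weighted
objective: If π* ∈ (0, 1) minimizes K(π) = ∫₀^τ W(t)·Var(t, π) dt over [0, 1], then
there exists r ∈ (0, τ) with ψ(r) = 0. -/
theorem weighted_objective_interior_min_psi_crosses_zero
    (τ θ n c : ℝ) (hτ : 0 < τ) (hθ : 0 < θ) (hn : 0 < n) (hc : 0 < c)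
    (f S qP qI : ℝ → ℝ)
    (hf_cont : ContinuousOn f (Set.Icc 0 τ)) (hS_cont : ContinuousOn S (Set.Icc 0 τ))
    (hqP_cont : ContinuousOn qP (Set.Icc 0 τ)) (hqI_cont : ContinuousOn qI (Set.Icc 0 τ))
    (hf_pos : ∀ r ∈ Set.Icc (0:ℝ) τ, 0 < f r) (hS_pos : ∀ r ∈ Set.Icc (0:ℝ) τ, 0 < S r)
    (hqP_pos : ∀ r ∈ Set.Icc (0:ℝ) τ, 0 < qP r) (hqI_pos : ∀ r ∈ Set.Icc (0:ℝ) τ, 0 < qI r)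
    (ψ : ℝ → ℝ) (hψ : ∀ r, ψ r = qI r - qP r)
    (Y : ℝ → ℝ → ℝ) (hY : ∀ r p, Y r p = n * S r * ((1 - p) * qP r + p * qI r))
    (hY_pos : ∀ p ∈ Set.Icc (0:ℝ) 1, ∀ r ∈ Set.Icc (0:ℝ) τ, 0 < Y r p)
    (Var : ℝ → ℝ → ℝ)
    (hVar : ∀ t p, Var t p = S t ^ 2 * ∫ r in (0:ℝ)..t, f r / (Y r p * S r))
(W : ℝ → ℝ) (hW_cont : ContinuousOn W (Set.Icc 0 τ))
    (hW_pos : ∀ t ∈ Set.Icc (0:ℝ) τ, 0 < W t)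
    (hW_int : (∫ t in (0:ℝ)..τ, W t) = 1)
    (V : ℝ → ℝ → ℝ)
    (hV : ∀ t p, V t p = S t ^ 2 * ∫ r in (0:ℝ)..t, f r * ψ r / (Y r p) ^ 2)
    (K : ℝ → ℝ) (hK : ∀ p, K p = ∫ t in (0:ℝ)..τ, W t * Var t p)
    (pstar : ℝ) (hpstar : pstar ∈ Set.Ioo (0:ℝ) 1)
    (hmin : ∀ p ∈ Set.Icc (0:ℝ) 1, K pstar ≤ K p) :
    ∃ r ∈ Set.Ioo (0:ℝ) τ, ψ r = 0 := by
  by_contra hcon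
  push_neg at hcon
  -- ψ is continuous on [0,τ]
  have hψ_cont : ContinuousOn ψ (Set.Icc 0 τ) := by
    refine (hqI_cont.sub hqP_cont).congr fun r _ => hψ r
  -- the key monotonicity fact: if Y(·,p1) ≤ Y(·,p2) on [0,τ], strictly on (0,τ),
  -- then K p2 < K p1.
  have main : ∀ p1 ∈ Set.Icc (0:ℝ) 1, ∀ p2 ∈ Set.Icc (0:ℝ) 1,
      (∀ r ∈ Set.Icc (0:ℝ) τ, Y r p1 ≤ Y r p2) →
      (∀ r ∈ Set.Ioo (0:ℝ) τ, Y r p1 < Y r p2) → K p2 < K p1 := by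
    intro p1 hp1 p2 hp2 hle hlt
    -- continuity of r ↦ Y r p for p ∈ [0,1]
    have hYc : ∀ p : ℝ, ContinuousOn (fun r => Y r p) (Set.Icc 0 τ) := by
      intro p
      refine ((continuousOn_const.mul hS_cont).mul
        ((continuousOn_const.mul hqP_cont).add (continuousOn_const.mul hqI_cont))).congr
        fun r _ => hY r p
    -- integrand continuity
    have hgc : ∀ p ∈ Set.Icc (0:ℝ) 1,
        ContinuousOn (fun r => f r / (Y r p * S r)) (Set.Icc 0 τ) := by
      intro p hp
      refine hf_cont.div ((hYc p).mul hS_cont) ?_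
      intro r hr
      exact ne_of_gt (mul_pos (hY_pos p hp r hr) (hS_pos r hr))
    -- inner strict comparison for t in (0,τ]
    have hinner : ∀ t ∈ Set.Ioc (0:ℝ) τ,
        (∫ r in (0:ℝ)..t, f r / (Y r p2 * S r)) < ∫ r in (0:ℝ)..t, f r / (Y r p1 * S r) := by
      intro t ht
      have hsub : Set.Icc (0:ℝ) t ⊆ Set.Icc 0 τ := Set.Icc_subset_Icc le_rfl ht.2
      refine intervalIntegral.integral_lt_integral_of_continuousOn_of_le_of_exists_lt ht.1
        ((hgc p2 hp2).mono hsub) ((hgc p1 hp1).mono hsub) ?_ ?_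
      · intro r hr
        have hr' : r ∈ Set.Icc (0:ℝ) τ := ⟨hr.1.le, hr.2.trans ht.2⟩
        have h1 := hY_pos p1 hp1 r hr'
        have h2 := hY_pos p2 hp2 r hr'
        have hS := hS_pos r hr'
        have hfr := (hf_pos r hr').le
        exact div_le_div_of_nonneg_left hfr (mul_pos h1 hS)
          (mul_le_mul_of_nonneg_right (hle r hr') hS.le)
      · refine ⟨t / 2, ⟨by linarith [ht.1], by linarith [ht.1]⟩, ?_⟩
        have hmem : t / 2 ∈ Set.Ioo (0:ℝ) τ :=
          ⟨by linarith [ht.1], by linarith [ht.1, ht.2]⟩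
        have hmem' : t / 2 ∈ Set.Icc (0:ℝ) τ := ⟨hmem.1.le, hmem.2.le⟩
        have h1 := hY_pos p1 hp1 _ hmem'
        have h2 := hY_pos p2 hp2 _ hmem'
        have hS := hS_pos _ hmem'
        exact div_lt_div_of_pos_left (hf_pos _ hmem') (mul_pos h1 hS)
          (mul_lt_mul_of_pos_right (hlt _ hmem) hS)
    -- Var comparison
    have hVarlt : ∀ t ∈ Set.Ioc (0:ℝ) τ, Var t p2 < Var t p1 := by
      intro t ht
      rw [hVar, hVar]
      have hS := hS_pos t ⟨ht.1.le, ht.2⟩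
      exact mul_lt_mul_of_pos_left (hinner t ht) (by positivity)
    -- continuity of t ↦ W t * Var t p
    have hVarc : ∀ p ∈ Set.Icc (0:ℝ) 1, ContinuousOn (fun t => Var t p) (Set.Icc 0 τ) := by
      intro p hp
      have hint : MeasureTheory.IntegrableOn (fun r => f r / (Y r p * S r))
          (Set.uIcc (0:ℝ) τ) := by
        rw [Set.uIcc_of_le hτ.le]
        exact (hgc p hp).integrableOn_Icc
      have hprim := intervalIntegral.continuousOn_primitive_interval hint
      rw [Set.uIcc_of_le hτ.le] at hprim
      exact ((hS_cont.pow 2).mul hprim).congr fun t _ => hVar t p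
    -- outer strict comparison
    rw [hK, hK]
    refine intervalIntegral.integral_lt_integral_of_continuousOn_of_le_of_exists_lt hτ
      (hW_cont.mul (hVarc p2 hp2)) (hW_cont.mul (hVarc p1 hp1)) ?_ ?_
    · intro t ht
      have ht' : t ∈ Set.Icc (0:ℝ) τ := ⟨ht.1.le, ht.2⟩
      exact mul_le_mul_of_nonneg_left (hVarlt t ht).le (hW_pos t ht').le
    · refine ⟨τ, ⟨hτ.le, le_rfl⟩, ?_⟩
      exact mul_lt_mul_of_pos_left (hVarlt τ ⟨hτ, le_rfl⟩) (hW_pos τ ⟨hτ.le, le_rfl⟩)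
  -- ψ has constant sign on (0,τ)
  have hhalf : τ / 2 ∈ Set.Ioo (0:ℝ) τ := ⟨by linarith, by linarith⟩
  have hsign : (∀ r ∈ Set.Ioo (0:ℝ) τ, 0 < ψ r) ∨ (∀ r ∈ Set.Ioo (0:ℝ) τ, ψ r < 0) := by
    rcases lt_or_gt_of_ne (hcon _ hhalf) with hneg | hpos
    · right
      intro r hr
      rcases lt_or_gt_of_ne (hcon r hr) with h | h
      · exact h
      · exfalso
        have hsubI : Set.uIcc r (τ / 2) ⊆ Set.Ioo (0:ℝ) τ :=
          Set.ordConnected_Ioo.uIcc_subset hr hhalf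
        have hψc : ContinuousOn ψ (Set.uIcc r (τ / 2)) :=
          hψ_cont.mono (hsubI.trans Set.Ioo_subset_Icc_self)
        have h0 : (0:ℝ) ∈ Set.uIcc (ψ r) (ψ (τ / 2)) :=
          Set.mem_uIcc.2 (Or.inr ⟨hneg.le, h.le⟩)
        obtain ⟨c, hc, hc0⟩ := intermediate_value_uIcc hψc h0
        exact hcon c (hsubI hc) hc0
    · left
      intro r hr
      rcases lt_or_gt_of_ne (hcon r hr) with h | h
      · exfalso
        have hsubI : Set.uIcc r (τ / 2) ⊆ Set.Ioo (0:ℝ) τ :=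
          Set.ordConnected_Ioo.uIcc_subset hr hhalf
        have hψc : ContinuousOn ψ (Set.uIcc r (τ / 2)) :=
          hψ_cont.mono (hsubI.trans Set.Ioo_subset_Icc_self)
        have h0 : (0:ℝ) ∈ Set.uIcc (ψ r) (ψ (τ / 2)) :=
          Set.mem_uIcc.2 (Or.inl ⟨h.le, hpos.le⟩)
        obtain ⟨c, hc, hc0⟩ := intermediate_value_uIcc hψc h0
        exact hcon c (hsubI hc) hc0
      · exact h
  -- extend sign to the closed interval by continuity
  have hclosure : Set.Icc (0:ℝ) τ ⊆ closure (Set.Ioo (0:ℝ) τ) := by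
    rw [closure_Ioo hτ.ne]
  have hext : ∀ (σ : ℝ), (∀ r ∈ Set.Ioo (0:ℝ) τ, 0 < σ * ψ r) →
      ∀ r ∈ Set.Icc (0:ℝ) τ, 0 ≤ σ * ψ r := by
    intro σ hσ r hr
    have hne : (nhdsWithin r (Set.Ioo (0:ℝ) τ)).NeBot :=
      mem_closure_iff_nhdsWithin_neBot.1 (hclosure hr)
    have htend : Filter.Tendsto (fun x => σ * ψ x) (nhdsWithin r (Set.Ioo (0:ℝ) τ))
        (nhds (σ * ψ r)) := by
      have hc2 : ContinuousOn (fun x => σ * ψ x) (Set.Icc 0 τ) :=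
        continuousOn_const.mul hψ_cont
      exact (hc2 r hr).tendsto.mono_left (nhdsWithin_mono r Set.Ioo_subset_Icc_self)
    exact ge_of_tendsto htend <|
      Filter.eventually_iff_exists_mem.2 ⟨Set.Ioo 0 τ, self_mem_nhdsWithin,
        fun x hx => (hσ x hx).le⟩
  obtain ⟨h0, h1⟩ := hpstar
  have hpIcc : pstar ∈ Set.Icc (0:ℝ) 1 := ⟨h0.le, h1.le⟩
  -- express Y r p = base + p * A r
  have hY' : ∀ r p, Y r p = n * S r * qP r + p * (n * S r * (qI r - qP r)) := by
    intro r p; rw [hY]; ring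
  rcases hsign with hpos | hneg
  · -- ψ > 0 on (0,τ): K 1 < K pstar, contradiction
    have hAnn : ∀ r ∈ Set.Icc (0:ℝ) τ, 0 ≤ n * S r * (qI r - qP r) := by
      intro r hr
      have := hext 1 (by intro r hr; simpa [hψ r] using hpos r hr) r hr
      rw [one_mul, hψ] at this
      exact mul_nonneg (mul_pos hn (hS_pos r hr)).le this
    have hApos : ∀ r ∈ Set.Ioo (0:ℝ) τ, 0 < n * S r * (qI r - qP r) := by
      intro r hr
      have := hpos r hr; rw [hψ] at this
      exact mul_pos (mul_pos hn (hS_pos r ⟨hr.1.le, hr.2.le⟩)) this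
    have hKlt : K 1 < K pstar := by
      refine main pstar hpIcc 1 ⟨zero_le_one, le_rfl⟩ ?_ ?_
      · intro r hr
        rw [hY', hY']
        nlinarith [mul_nonneg (sub_nonneg.2 h1.le) (hAnn r hr)]
      · intro r hr
        rw [hY', hY']
        nlinarith [mul_pos (sub_pos.2 h1) (hApos r hr)]
    exact absurd (hmin 1 ⟨zero_le_one, le_rfl⟩) (not_le.2 hKlt)
  · -- ψ < 0 on (0,τ): K 0 < K pstar, contradiction
    have hAnn : ∀ r ∈ Set.Icc (0:ℝ) τ, n * S r * (qI r - qP r) ≤ 0 := by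
      intro r hr
      have h := hext (-1) (fun r hr => by nlinarith [hneg r hr]) r hr
      rw [hψ] at h
      have hq : qI r - qP r ≤ 0 := by linarith
      exact mul_nonpos_of_nonneg_of_nonpos (mul_pos hn (hS_pos r hr)).le hq
    have hAneg : ∀ r ∈ Set.Ioo (0:ℝ) τ, n * S r * (qI r - qP r) < 0 := by
      intro r hr
      have := hneg r hr; rw [hψ] at this
      nlinarith [mul_pos hn (hS_pos r ⟨hr.1.le, hr.2.le⟩)]
    have hKlt : K 0 < K pstar := by
      refine main pstar hpIcc 0 ⟨le_rfl, zero_le_one⟩ ?_ ?_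
      · intro r hr
        rw [hY', hY']
        nlinarith [mul_nonpos_of_nonneg_of_nonpos h0.le (hAnn r hr)]
      · intro r hr
        rw [hY', hY']
        nlinarith [mul_pos h0 (neg_pos.2 (hAneg r hr))]
    exact absurd (hmin 0 ⟨le_rfl, zero_le_one⟩) (not_le.2 hKlt)
end

section
/- (Appendix A, at-risk probability of a prevalent patient.) Let T and A be independent real-valued random variables on a probability space such that A ≥ 0 almost surely, the law of A has density h with respect to Lebesgue measure and CDF H(a) = P(A ≤ a), and T has continuous survival function S(x) = P(T > x). Fix τ > 0, θ > 0 and t with 0 < t ≤ τ, and assume P(A ≤ T and A < τ) > 0. Then the conditional probability P( T > t and t − θ < A < t | A ≤ T and A < τ ) = S(t)·(H(t) − H(t−θ)) / ∫₀^τ S(a)·h(a) da. -/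
open MeasureTheory
open scoped ProbabilityTheory

/-- Appendix A, at-risk probability of a prevalent patient: under the
same setup as Statement 14, with CDF H(a) = P(A ≤ a), for 0 < t ≤ τ and
P(A ≤ T and A < τ) > 0,
P(T > t and t − θ < A < t | A ≤ T and A < τ)
  = S(t)·(H(t) − H(t−θ)) / ∫₀^τ S(a)·h(a) da,
where conditional probability of E given F is P(E ∩ F)/P(F). -/
theorem prevalent_at_risk_probability
    {Ω : Type*} [MeasureSpace Ω] [IsProbabilityMeasure (ℙ : Measure Ω)]
    (T A : Ω → ℝ) (hT : Measurable T) (hA : Measurable A)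
    (hindep : ProbabilityTheory.IndepFun T A ℙ)
    (hA_nonneg : ∀ᵐ ω ∂ℙ, 0 ≤ A ω)
    (h : ℝ → ℝ) (hh_meas : Measurable h) (hh_nonneg : ∀ a, 0 ≤ h a)
    (hh_int : (∫ a, h a) = 1)
    (hlaw : Measure.map A ℙ = volume.withDensity (fun a => ENNReal.ofReal (h a)))
    (S : ℝ → ℝ) (hS : ∀ x, S x = (ℙ {ω | x < T ω}).toReal)
    (hS_cont : Continuous S)
    (H : ℝ → ℝ) (hH : ∀ a, H a = (ℙ {ω | A ω ≤ a}).toReal)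
    (τ θ t : ℝ) (hτ : 0 < τ) (hθ : 0 < θ) (ht : t ∈ Set.Ioc 0 τ)
    (hpos : 0 < (ℙ {ω | A ω ≤ T ω ∧ A ω < τ}).toReal) :
    (ℙ ({ω | t < T ω ∧ t - θ < A ω ∧ A ω < t} ∩ {ω | A ω ≤ T ω ∧ A ω < τ})).toReal /
        (ℙ {ω | A ω ≤ T ω ∧ A ω < τ}).toReal =
      S t * (H t - H (t - θ)) / ∫ a in (0:ℝ)..τ, S a * h a := by
  obtain ⟨ht0, htτ⟩ := ht
  set ν := Measure.map T ℙ with hν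
  set μA := Measure.map A ℙ with hμ
  haveI hνprob : IsProbabilityMeasure ν := Measure.isProbabilityMeasure_map hT.aemeasurable
  haveI hμprob : IsProbabilityMeasure μA := Measure.isProbabilityMeasure_map hA.aemeasurable
  -- survival function via the law of T
  have hSx : ∀ x, S x = (ν (Set.Ioi x)).toReal := by
    intro x
    rw [hS x, hν, Measure.map_apply hT measurableSet_Ioi]
    rfl
  have hνIoi : ∀ x, ν (Set.Ioi x) = ENNReal.ofReal (S x) := fun x => by
    rw [hSx x, ENNReal.ofReal_toReal (measure_ne_top _ _)]
  -- law of T has no atoms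
  have hν_atom : ∀ a : ℝ, ν {a} = 0 := by
    intro a
    have key : ∀ u ∈ Set.Iio a, (ν {a}).toReal ≤ S u - S a := by
      intro u hu
      have hadd : ν (Set.Ioc u a) + ν (Set.Ioi a) = ν (Set.Ioi u) := by
        rw [← measure_union (Set.Ioc_disjoint_Ioi le_rfl) measurableSet_Ioi,
          Set.Ioc_union_Ioi_eq_Ioi (le_of_lt hu)]
      have h1 : (ν (Set.Ioc u a)).toReal = S u - S a := by
        have h2 := congrArg ENNReal.toReal hadd
        rw [ENNReal.toReal_add (measure_ne_top _ _) (measure_ne_top _ _)] at h2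
        rw [hSx u, hSx a]
        linarith
      have h3 : (ν {a}).toReal ≤ (ν (Set.Ioc u a)).toReal :=
        ENNReal.toReal_mono (measure_ne_top _ _)
          (measure_mono (Set.singleton_subset_iff.mpr ⟨hu, le_rfl⟩))
      linarith
    have htend : Filter.Tendsto (fun u => S u - S a) (nhdsWithin a (Set.Iio a))
        (nhds (S a - S a)) :=
      (((hS_cont.tendsto a).mono_left nhdsWithin_le_nhds).sub tendsto_const_nhds)
    have h0 : (ν {a}).toReal ≤ 0 := by
      have := ge_of_tendsto htend (Filter.eventually_of_mem self_mem_nhdsWithin key)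
      simpa using this
    have hz : (ν {a}).toReal = 0 := le_antisymm h0 ENNReal.toReal_nonneg
    exact ((ENNReal.toReal_eq_zero_iff _).mp hz).resolve_right (measure_ne_top _ _)
  have hνIci : ∀ a : ℝ, ν (Set.Ici a) = ENNReal.ofReal (S a) := by
    intro a
    have hle : ν (Set.Ici a) ≤ ν (Set.Ioi a) := by
      have : Set.Ici a = {a} ∪ Set.Ioi a := by
        ext x; simp [le_iff_lt_or_eq, or_comm, eq_comm]
      calc ν (Set.Ici a) = ν ({a} ∪ Set.Ioi a) := by rw [← this]
        _ ≤ ν {a} + ν (Set.Ioi a) := measure_union_le _ _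
        _ = ν (Set.Ioi a) := by rw [hν_atom a, zero_add]
    rw [← hνIoi a]
    exact le_antisymm hle (measure_mono Set.Ioi_subset_Ici_self)
  -- law of A has no atoms
  have hμ_atom : ∀ a : ℝ, μA {a} = 0 := by
    intro a
    rw [hlaw, withDensity_apply _ (measurableSet_singleton a)]
    simp [Measure.restrict_singleton]
  haveI : NullSingletonClass μA := ⟨hμ_atom⟩
  -- H via the law of A
  have hHx : ∀ a, H a = (μA (Set.Iic a)).toReal := by
    intro a
    rw [hH a, hμ, Measure.map_apply hA measurableSet_Iic]
    rfl
  -- numerator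
  have hset : {ω | t < T ω ∧ t - θ < A ω ∧ A ω < t} ∩ {ω | A ω ≤ T ω ∧ A ω < τ}
      = {ω | t < T ω ∧ t - θ < A ω ∧ A ω < t} := by
    apply Set.inter_eq_left.mpr
    rintro ω ⟨h1, h2, h3⟩
    exact ⟨le_of_lt (h3.trans h1), h3.trans_le htτ⟩
  have hsplitpre : {ω | t < T ω ∧ t - θ < A ω ∧ A ω < t}
      = T ⁻¹' Set.Ioi t ∩ A ⁻¹' Set.Ioo (t - θ) t := by
    ext ω; simp [Set.mem_Ioo, and_assoc]
  have hnum : ℙ {ω | t < T ω ∧ t - θ < A ω ∧ A ω < t}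
      = ν (Set.Ioi t) * μA (Set.Ioo (t - θ) t) := by
    rw [hsplitpre,
      hindep.measure_inter_preimage_eq_mul _ _ measurableSet_Ioi measurableSet_Ioo, hν, hμ,
      Measure.map_apply hT measurableSet_Ioi, Measure.map_apply hA measurableSet_Ioo]
  have hIoo : (μA (Set.Ioo (t - θ) t)).toReal = H t - H (t - θ) := by
    have h1 : μA (Set.Ioo (t - θ) t) = μA (Set.Ioc (t - θ) t) :=
      measure_congr Ioo_ae_eq_Ioc
    have h2 : μA (Set.Iic (t - θ)) + μA (Set.Ioc (t - θ) t) = μA (Set.Iic t) := by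
      rw [← measure_union (Set.Iic_disjoint_Ioc le_rfl) measurableSet_Ioc,
        Set.Iic_union_Ioc_eq_Iic (by linarith)]
    have h3 := congrArg ENNReal.toReal h2
    rw [ENNReal.toReal_add (measure_ne_top _ _) (measure_ne_top _ _)] at h3
    rw [h1, hHx t, hHx (t - θ)]
    linarith
  -- denominator
  have hmapprod : Measure.map (fun ω => (A ω, T ω)) ℙ = μA.prod ν := by
    rw [hμ, hν]
    exact (ProbabilityTheory.indepFun_iff_map_prod_eq_prod_map_map hA.aemeasurable
      hT.aemeasurable).mp hindep.symm
  have hsetden : MeasurableSet {p : ℝ × ℝ | p.1 ≤ p.2 ∧ p.1 < τ} :=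
    (measurableSet_le measurable_fst measurable_snd).inter
      (measurableSet_lt measurable_fst measurable_const)
  have hden1 : ℙ {ω | A ω ≤ T ω ∧ A ω < τ}
      = (μA.prod ν) {p : ℝ × ℝ | p.1 ≤ p.2 ∧ p.1 < τ} := by
    rw [← hmapprod, Measure.map_apply (hA.prodMk hT) hsetden]
    rfl
  have hden2 : (μA.prod ν) {p : ℝ × ℝ | p.1 ≤ p.2 ∧ p.1 < τ}
      = ∫⁻ a in Set.Iio τ, ENNReal.ofReal (S a) ∂μA := by
    rw [Measure.prod_apply hsetden, ← lintegral_indicator measurableSet_Iio (fun a => ENNReal.ofReal (S a))]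
    apply lintegral_congr
    intro a
    by_cases ha : a < τ
    · have hpre : Prod.mk a ⁻¹' {p : ℝ × ℝ | p.1 ≤ p.2 ∧ p.1 < τ} = Set.Ici a := by
        ext x; simp [ha]
      rw [hpre, Set.indicator_of_mem (Set.mem_Iio.mpr ha), hνIci a]
    · have hpre : Prod.mk a ⁻¹' {p : ℝ × ℝ | p.1 ≤ p.2 ∧ p.1 < τ} = ∅ := by
        ext x; simp [ha]
      rw [hpre, Set.indicator_of_notMem (by simpa using ha)]
      simp
  have hden3 : ∫⁻ a in Set.Iio τ, ENNReal.ofReal (S a) ∂μA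
      = ∫⁻ a in Set.Iio τ, ENNReal.ofReal (h a) * ENNReal.ofReal (S a) := by
    rw [hlaw, restrict_withDensity measurableSet_Iio,
      lintegral_withDensity_eq_lintegral_mul _ (hh_meas.ennreal_ofReal)
        (hS_cont.measurable.ennreal_ofReal)]
    rfl
  have hμneg : μA (Set.Iio 0) = 0 := by
    rw [hμ, Measure.map_apply hA measurableSet_Iio]
    have hae : ℙ {ω | ¬ 0 ≤ A ω} = 0 := ae_iff.mp hA_nonneg
    have : A ⁻¹' Set.Iio 0 = {ω | ¬ 0 ≤ A ω} := by ext ω; simp [not_le]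
    rw [this, hae]
  have hhneg : ∫⁻ a in Set.Iio 0, ENNReal.ofReal (h a) = 0 := by
    rw [hlaw, withDensity_apply _ measurableSet_Iio] at hμneg
    exact hμneg
  have hS_le_one : ∀ a, ENNReal.ofReal (S a) ≤ 1 := by
    intro a
    rw [hS a, ENNReal.ofReal_toReal (measure_ne_top _ _)]
    exact prob_le_one
  have hzero : ∫⁻ a in Set.Iio 0, ENNReal.ofReal (h a) * ENNReal.ofReal (S a) = 0 := by
    refine le_antisymm ?_ zero_le
    calc ∫⁻ a in Set.Iio 0, ENNReal.ofReal (h a) * ENNReal.ofReal (S a)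
        ≤ ∫⁻ a in Set.Iio 0, ENNReal.ofReal (h a) := by
          apply lintegral_mono
          intro a
          calc ENNReal.ofReal (h a) * ENNReal.ofReal (S a)
              ≤ ENNReal.ofReal (h a) * 1 := mul_le_mul_right (hS_le_one a) _
            _ = ENNReal.ofReal (h a) := mul_one _
      _ = 0 := hhneg
  have hden4 : ∫⁻ a in Set.Iio τ, ENNReal.ofReal (h a) * ENNReal.ofReal (S a)
      = ∫⁻ a in Set.Ico 0 τ, ENNReal.ofReal (h a) * ENNReal.ofReal (S a) := by
    rw [← Set.Iio_union_Ico_eq_Iio hτ.le,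
      lintegral_union measurableSet_Ico (by simp [Set.disjoint_left]; intro a ha ha'; linarith : Disjoint (Set.Iio (0:ℝ)) (Set.Ico 0 τ)), hzero, zero_add]
  have hden : ℙ {ω | A ω ≤ T ω ∧ A ω < τ}
      = ∫⁻ a in Set.Ico 0 τ, ENNReal.ofReal (h a) * ENNReal.ofReal (S a) := by
    rw [hden1, hden2, hden3, hden4]
  -- the interval integral
  have hInt : ∫ a in (0:ℝ)..τ, S a * h a
      = (∫⁻ a in Set.Ico 0 τ, ENNReal.ofReal (h a) * ENNReal.ofReal (S a)).toReal := by
    rw [intervalIntegral.integral_of_le hτ.le,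
      integral_eq_lintegral_of_nonneg_ae]
    · congr 1
      rw [Measure.restrict_congr_set Ioc_ae_eq_Icc,
        ← Measure.restrict_congr_set Ico_ae_eq_Icc]
      apply lintegral_congr
      intro a
      rw [ENNReal.ofReal_mul (by rw [hS a]; exact ENNReal.toReal_nonneg), mul_comm]
    · exact Filter.Eventually.of_forall fun a => by
        have : 0 ≤ S a := by rw [hS a]; exact ENNReal.toReal_nonneg
        exact mul_nonneg this (hh_nonneg a)
    · exact ((hS_cont.measurable.mul hh_meas).aestronglyMeasurable)
  -- put everything together
  rw [hset, hnum, hInt, hden, ENNReal.toReal_mul, hIoo, ← hSx t]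
end
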